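/- arXiv:0709.4332 — 6 statements merged into one kernel-verified Lean document; each statement's English description precedes it below -/
import Mathlib

section
/- For 0 < ε < 1, the function φ(t) = ε·(log(1/t) − 1) on I = (0,1] satisfies φ ∈ BMO_ε(I), ∫₀¹ φ(t) dt = 0, ∫₀¹ φ(t)² dt = ε², and ∫₀¹ e^{φ(t)} dt = e^{−ε}/(1−ε); in particular the constant e^{−ε}/(1−ε) in the integral-form John–Nirenberg inequality is attained. -/
open MeasureTheory Real

/-- The average of `φ` over the interval with endpoints `a`, `b`. -/
noncomputable def avg (φ : ℝ → ℝ) (a b : ℝ) : ℝ := (∫ t in a..b, φ t) / (b - a)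

/-- `φ ∈ BMO_ε([a,b])`: `φ` and `φ²` are integrable on `[a,b]` and the mean
oscillation `⟨φ²⟩_J − ⟨φ⟩_J²` is at most `ε²` on every nondegenerate
subinterval `J = [c,d] ⊆ [a,b]`. -/
def BMOe (ε a b : ℝ) (φ : ℝ → ℝ) : Prop :=
  IntervalIntegrable φ volume a b ∧
  IntervalIntegrable (fun t => (φ t) ^ 2) volume a b ∧
  ∀ c d : ℝ, a ≤ c → c < d → d ≤ b →
    avg (fun t => (φ t) ^ 2) c d - (avg φ c d) ^ 2 ≤ ε ^ 2

section Aux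

open Set Filter Topology intervalIntegral

private lemma log_bound' {t : ℝ} (ht0 : 0 < t) : -Real.log t ≤ 4 * t ^ (-(1/4) : ℝ) := by
  have h1 : Real.log (t ^ (-(1/4) : ℝ)) ≤ t ^ (-(1/4) : ℝ) - 1 :=
    Real.log_le_sub_one_of_pos (Real.rpow_pos_of_pos ht0 _)
  rw [Real.log_rpow ht0] at h1
  have h2 : (0:ℝ) < t ^ (-(1/4) : ℝ) := Real.rpow_pos_of_pos ht0 _
  linarith

private lemma log_intInt : IntervalIntegrable Real.log volume 0 1 := by
  rw [intervalIntegrable_iff_integrableOn_Ioc_of_le zero_le_one]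
  have hg : IntegrableOn (fun t : ℝ => 4 * t ^ (-(1/4) : ℝ)) (Set.Ioc 0 1) volume := by
    have := (intervalIntegrable_rpow' (a := 0) (b := 1) (r := -(1/4)) (by norm_num)).const_mul 4
    rwa [intervalIntegrable_iff_integrableOn_Ioc_of_le zero_le_one] at this
  refine hg.mono' Real.measurable_log.aestronglyMeasurable ?_
  rw [ae_restrict_iff' measurableSet_Ioc]
  filter_upwards with t ht
  have hlog0 : Real.log t ≤ 0 := Real.log_nonpos ht.1.le ht.2
  rw [Real.norm_eq_abs, abs_of_nonpos hlog0]
  exact log_bound' ht.1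

private lemma logsq_intInt : IntervalIntegrable (fun t => (Real.log t) ^ 2) volume 0 1 := by
  rw [intervalIntegrable_iff_integrableOn_Ioc_of_le zero_le_one]
  have hg : IntegrableOn (fun t : ℝ => 16 * t ^ (-(1/2) : ℝ)) (Set.Ioc 0 1) volume := by
    have := (intervalIntegrable_rpow' (a := 0) (b := 1) (r := -(1/2)) (by norm_num)).const_mul 16
    rwa [intervalIntegrable_iff_integrableOn_Ioc_of_le zero_le_one] at this
  refine hg.mono' ((Real.measurable_log.pow_const 2).aestronglyMeasurable) ?_
  rw [ae_restrict_iff' measurableSet_Ioc]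
  filter_upwards with t ht
  have hlog0 : Real.log t ≤ 0 := Real.log_nonpos ht.1.le ht.2
  have hb := log_bound' ht.1
  have hsq : (t ^ (-(1/4) : ℝ)) ^ 2 = t ^ (-(1/2) : ℝ) := by
    rw [← Real.rpow_natCast (t ^ (-(1/4):ℝ)) 2, ← Real.rpow_mul ht.1.le]; norm_num
  have h2 : (0:ℝ) ≤ t ^ (-(1/4) : ℝ) := (Real.rpow_pos_of_pos ht.1 _).le
  rw [Real.norm_eq_abs, abs_of_nonneg (sq_nonneg _)]
  nlinarith

private lemma sub_uIcc {c d : ℝ} (h0 : 0 ≤ c) (hcd : c < d) (hd1 : d ≤ 1) :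
    Set.uIcc c d ⊆ Set.uIcc (0:ℝ) 1 := by
  rw [Set.uIcc_of_le zero_le_one, Set.uIcc_of_le hcd.le]
  exact Set.Icc_subset_Icc h0 hd1

private lemma int_log' {c d : ℝ} (h0 : 0 ≤ c) (hcd : c < d) (hd1 : d ≤ 1) :
    ∫ t in c..d, Real.log t = (d * Real.log d - d) - (c * Real.log c - c) := by
  apply integral_eq_sub_of_hasDerivAt_of_tendsto hcd
  · intro x hx
    have hx0 : 0 < x := lt_of_le_of_lt h0 hx.1
    have h := ((hasDerivAt_id x).mul (Real.hasDerivAt_log hx0.ne')).sub (hasDerivAt_id x)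
    convert h using 1
    field_simp
    simp only [id_eq]
    ring
  · exact log_intInt.mono_set (sub_uIcc h0 hcd hd1)
  · rcases eq_or_lt_of_le h0 with h | h
    · subst h
      have h1 : Tendsto (fun x : ℝ => Real.log x * x ^ (1:ℝ)) (𝓝[>] 0) (𝓝 0) :=
        tendsto_log_mul_rpow_nhdsGT_zero one_pos
      have h2 : Tendsto (fun x : ℝ => x) (𝓝[>] (0:ℝ)) (𝓝 0) :=
        (continuous_id.tendsto 0).mono_left nhdsWithin_le_nhds
      have h3 := h1.sub h2
      simp only [sub_zero] at h3
      have : (0:ℝ) * Real.log 0 - 0 = 0 := by simp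
      rw [this]
      refine h3.congr fun t => ?_
      simp only [id_eq, Real.rpow_one, Pi.mul_apply, Pi.sub_apply]
      ring
    · have hc : ContinuousAt (fun t : ℝ => t * Real.log t - t) c :=
        (continuousAt_id.mul (Real.continuousAt_log h.ne')).sub continuousAt_id
      exact hc.continuousWithinAt.tendsto
  · have hd0 : 0 < d := lt_of_le_of_lt h0 hcd
    have hc : ContinuousAt (fun t : ℝ => t * Real.log t - t) d :=
      (continuousAt_id.mul (Real.continuousAt_log hd0.ne')).sub continuousAt_id
    exact hc.continuousWithinAt.tendsto

private noncomputable def Gfn (t : ℝ) : ℝ :=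
  t * (Real.log t) ^ 2 - 2 * (t * Real.log t) + 2 * t

private lemma int_logsq {c d : ℝ} (h0 : 0 ≤ c) (hcd : c < d) (hd1 : d ≤ 1) :
    ∫ t in c..d, (Real.log t) ^ 2 = Gfn d - Gfn c := by
  have hderiv : ∀ x : ℝ, 0 < x → HasDerivAt Gfn ((Real.log x) ^ 2) x := by
    intro x hx0
    have h1 : HasDerivAt (fun t : ℝ => t * (Real.log t) ^ 2)
        (1 * (Real.log x) ^ 2 + x * (2 * (Real.log x) ^ 1 * x⁻¹)) x :=
      (hasDerivAt_id x).mul ((Real.hasDerivAt_log hx0.ne').pow 2)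
    have h2 : HasDerivAt (fun t : ℝ => t * Real.log t) (1 * Real.log x + x * x⁻¹) x :=
      (hasDerivAt_id x).mul (Real.hasDerivAt_log hx0.ne')
    have h := (h1.sub (h2.const_mul 2)).add ((hasDerivAt_id x).const_mul 2)
    have e : Gfn = ((fun t => t * log t ^ 2) - fun y => 2 * (y * log y)) + fun y => 2 * id y := by
      funext t; simp only [Gfn, Pi.add_apply, Pi.sub_apply, id_eq]
    rw [e]
    refine h.congr_deriv ?_
    field_simp
    ring
  have hcont : ∀ x : ℝ, 0 < x → ContinuousAt Gfn x := fun x hx => (hderiv x hx).continuousAt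
  apply integral_eq_sub_of_hasDerivAt_of_tendsto hcd
  · exact fun x hx => hderiv x (lt_of_le_of_lt h0 hx.1)
  · exact logsq_intInt.mono_set (sub_uIcc h0 hcd hd1)
  · rcases eq_or_lt_of_le h0 with h | h
    · subst h
      have hh : Tendsto (fun x : ℝ => Real.log x * x ^ ((1:ℝ)/2)) (𝓝[>] 0) (𝓝 0) :=
        tendsto_log_mul_rpow_nhdsGT_zero (by norm_num)
      have h1 : Tendsto (fun x : ℝ => (Real.log x * x ^ ((1:ℝ)/2)) * (Real.log x * x ^ ((1:ℝ)/2)))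
          (𝓝[>] 0) (𝓝 0) := by simpa using hh.mul hh
      have hlog : Tendsto (fun x : ℝ => Real.log x * x ^ (1:ℝ)) (𝓝[>] 0) (𝓝 0) :=
        tendsto_log_mul_rpow_nhdsGT_zero one_pos
      have h2 : Tendsto (fun x : ℝ => x) (𝓝[>] (0:ℝ)) (𝓝 0) :=
        (continuous_id.tendsto 0).mono_left nhdsWithin_le_nhds
      have h3 := (h1.sub (hlog.const_mul 2)).add (h2.const_mul 2)
      simp only [mul_zero, sub_zero, add_zero, zero_sub, zero_add] at h3
      have hG0 : Gfn 0 = 0 := by simp [Gfn]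
      rw [hG0]
      refine h3.congr' ?_
      filter_upwards [self_mem_nhdsWithin] with t (ht : 0 < t)
      have : t ^ ((1:ℝ)/2) * t ^ ((1:ℝ)/2) = t := by
        rw [← Real.rpow_add ht]; norm_num
      simp only [Gfn, Real.rpow_one]
      nlinarith [this]
    · exact ((hcont c h).continuousWithinAt).tendsto
  · exact ((hcont d (lt_of_le_of_lt h0 hcd)).continuousWithinAt).tendsto

private lemma phi_ints (ε : ℝ) (φ : ℝ → ℝ)
    (hφ : ∀ t ∈ Set.Ioc (0:ℝ) 1, φ t = ε * (Real.log (1/t) - 1))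
    {c d : ℝ} (h0 : 0 ≤ c) (hcd : c < d) (hd1 : d ≤ 1) :
    (∫ t in c..d, φ t) = ε * (c * Real.log c - d * Real.log d) ∧
    (∫ t in c..d, (φ t) ^ 2) =
      ε ^ 2 * ((d * (Real.log d) ^ 2 - c * (Real.log c) ^ 2) + (d - c)) := by
  have hsub : Set.Ioc c d ⊆ Set.Ioc 0 1 := Set.Ioc_subset_Ioc h0 hd1
  have hli : IntervalIntegrable Real.log volume c d := log_intInt.mono_set (sub_uIcc h0 hcd hd1)
  have hlsi : IntervalIntegrable (fun t => (Real.log t) ^ 2) volume c d :=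
    logsq_intInt.mono_set (sub_uIcc h0 hcd hd1)
  have hnl : IntervalIntegrable (fun x : ℝ => -Real.log x) volume c d := hli.neg
  have h1c : IntervalIntegrable (fun _ : ℝ => (1:ℝ)) volume c d := intervalIntegrable_const
  have h2l : IntervalIntegrable (fun x : ℝ => 2 * Real.log x) volume c d := hli.const_mul 2
  constructor
  · have hcongr : ∫ t in c..d, φ t = ∫ t in c..d, ε * (-Real.log t - 1) := by
      apply intervalIntegral.integral_congr_ae
      filter_upwards with x hx
      rw [Set.uIoc_of_le hcd.le] at hx
      rw [hφ x (hsub hx), one_div, Real.log_inv]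
    rw [hcongr, intervalIntegral.integral_const_mul,
      intervalIntegral.integral_sub hnl h1c,
      intervalIntegral.integral_neg, int_log' h0 hcd hd1, intervalIntegral.integral_const]
    simp only [smul_eq_mul]
    ring
  · have hcongr : ∫ t in c..d, (φ t) ^ 2
        = ∫ t in c..d, ε ^ 2 * ((Real.log t) ^ 2 + 2 * Real.log t + 1) := by
      apply intervalIntegral.integral_congr_ae
      filter_upwards with x hx
      rw [Set.uIoc_of_le hcd.le] at hx
      rw [hφ x (hsub hx), one_div, Real.log_inv]
      ring
    rw [hcongr, intervalIntegral.integral_const_mul,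
      intervalIntegral.integral_add (hlsi.add h2l) h1c,
      intervalIntegral.integral_add hlsi h2l,
      intervalIntegral.integral_const_mul, int_log' h0 hcd hd1, int_logsq h0 hcd hd1,
      intervalIntegral.integral_const]
    simp only [Gfn, smul_eq_mul]
    ring

end Aux

/-- The extremal function `φ(t) = ε (log(1/t) − 1)` attains the sharp constant
`e^{−ε}/(1−ε)` in the integral-form John–Nirenberg inequality. -/
theorem stmt1 (ε : ℝ) (hε0 : 0 < ε) (hε1 : ε < 1)
    (φ : ℝ → ℝ)
    (hφ : ∀ t ∈ Set.Ioc (0 : ℝ) 1, φ t = ε * (Real.log (1 / t) - 1)) :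
    BMOe ε 0 1 φ ∧
    (∫ t in (0:ℝ)..1, φ t) = 0 ∧
    (∫ t in (0:ℝ)..1, (φ t) ^ 2) = ε ^ 2 ∧
    IntervalIntegrable (fun t => Real.exp (φ t)) volume 0 1 ∧
    (∫ t in (0:ℝ)..1, Real.exp (φ t)) = Real.exp (-ε) / (1 - ε) := by
  have hint1 : IntervalIntegrable φ volume 0 1 := by
    rw [intervalIntegrable_iff_integrableOn_Ioc_of_le zero_le_one]
    have hm : IntegrableOn (fun t : ℝ => ε * (-Real.log t - 1)) (Set.Ioc 0 1) volume := by
      have h : IntervalIntegrable (fun t : ℝ => ε * (-Real.log t - 1)) volume 0 1 :=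
        (log_intInt.neg.sub intervalIntegrable_const).const_mul ε
      rwa [intervalIntegrable_iff_integrableOn_Ioc_of_le zero_le_one] at h
    refine hm.congr_fun (fun t ht => ?_) measurableSet_Ioc
    rw [hφ t ht, one_div, Real.log_inv]
  have hint2 : IntervalIntegrable (fun t => (φ t) ^ 2) volume 0 1 := by
    rw [intervalIntegrable_iff_integrableOn_Ioc_of_le zero_le_one]
    have hm : IntegrableOn (fun t : ℝ => ε ^ 2 * ((Real.log t) ^ 2 + 2 * Real.log t + 1))
        (Set.Ioc 0 1) volume := by
      have h : IntervalIntegrable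
          (fun t : ℝ => ε ^ 2 * ((Real.log t) ^ 2 + 2 * Real.log t + 1)) volume 0 1 :=
        ((logsq_intInt.add (log_intInt.const_mul 2)).add intervalIntegrable_const).const_mul _
      rwa [intervalIntegrable_iff_integrableOn_Ioc_of_le zero_le_one] at h
    refine hm.congr_fun (fun t ht => ?_) measurableSet_Ioc
    rw [hφ t ht, one_div, Real.log_inv]
    ring
  have hosc : ∀ c d : ℝ, 0 ≤ c → c < d → d ≤ 1 →
      avg (fun t => (φ t) ^ 2) c d - (avg φ c d) ^ 2 ≤ ε ^ 2 := by
    intro c d h0 hcd hd1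
    obtain ⟨e1, e2⟩ := phi_ints ε φ hφ h0 hcd hd1
    have hd0 : 0 < d := lt_of_le_of_lt h0 hcd
    have hk : 0 < d - c := sub_pos.mpr hcd
    simp only [avg]
    rw [e1, e2]
    set Lc := Real.log c
    set Ld := Real.log d
    have hX : (d * Ld ^ 2 - c * Lc ^ 2) * (d - c) ≤ (d * Ld - c * Lc) ^ 2 := by
      nlinarith [mul_nonneg (mul_nonneg h0 hd0.le) (sq_nonneg (Ld - Lc))]
    have e3 : ε ^ 2 * ((d * Ld ^ 2 - c * Lc ^ 2) + (d - c)) / (d - c)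
        - (ε * (c * Lc - d * Ld) / (d - c)) ^ 2
        = ε ^ 2 + ε ^ 2 * ((d * Ld ^ 2 - c * Lc ^ 2) * (d - c)
            - (d * Ld - c * Lc) ^ 2) / (d - c) ^ 2 := by
      field_simp
      ring
    rw [e3]
    have h4 : ε ^ 2 * ((d * Ld ^ 2 - c * Lc ^ 2) * (d - c)
        - (d * Ld - c * Lc) ^ 2) / (d - c) ^ 2 ≤ 0 :=
      div_nonpos_of_nonpos_of_nonneg
        (mul_nonpos_of_nonneg_of_nonpos (sq_nonneg ε) (by linarith)) (sq_nonneg _)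
    linarith
  obtain ⟨v1, v2⟩ := phi_ints ε φ hφ (le_refl (0:ℝ)) one_pos le_rfl
  have hval1 : (∫ t in (0:ℝ)..1, φ t) = 0 := by
    rw [v1]; simp
  have hval2 : (∫ t in (0:ℝ)..1, (φ t) ^ 2) = ε ^ 2 := by
    rw [v2]; simp
  have hεlt : (-1 : ℝ) < -ε := by linarith
  have hexp_eq : ∀ t ∈ Set.Ioc (0:ℝ) 1,
      Real.exp (φ t) = Real.exp (-ε) * t ^ (-ε : ℝ) := by
    intro t ht
    rw [hφ t ht, Real.rpow_def_of_pos ht.1, ← Real.exp_add, one_div, Real.log_inv]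
    congr 1
    ring
  have hgint : IntervalIntegrable (fun t : ℝ => Real.exp (-ε) * t ^ (-ε : ℝ)) volume 0 1 :=
    (intervalIntegral.intervalIntegrable_rpow' hεlt).const_mul _
  have hexpint : IntervalIntegrable (fun t => Real.exp (φ t)) volume 0 1 := by
    rw [intervalIntegrable_iff_integrableOn_Ioc_of_le zero_le_one]
    have hm : IntegrableOn (fun t : ℝ => Real.exp (-ε) * t ^ (-ε : ℝ)) (Set.Ioc 0 1) volume := by
      rwa [intervalIntegrable_iff_integrableOn_Ioc_of_le zero_le_one] at hgint
    exact hm.congr_fun (fun t ht => (hexp_eq t ht).symm) measurableSet_Ioc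
  have hexpval : (∫ t in (0:ℝ)..1, Real.exp (φ t)) = Real.exp (-ε) / (1 - ε) := by
    have hcongr : (∫ t in (0:ℝ)..1, Real.exp (φ t))
        = ∫ t in (0:ℝ)..1, Real.exp (-ε) * t ^ (-ε : ℝ) := by
      apply intervalIntegral.integral_congr_ae
      filter_upwards with x hx
      rw [Set.uIoc_of_le zero_le_one] at hx
      exact hexp_eq x hx
    rw [hcongr, intervalIntegral.integral_const_mul, integral_rpow (Or.inl hεlt)]
    rw [Real.one_rpow, Real.zero_rpow (by linarith : -ε + 1 ≠ 0)]
    have : -ε + 1 = 1 - ε := by ring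
    rw [this, sub_zero, mul_one_div]
  exact ⟨⟨hint1, hint2, hosc⟩, hval1, hval2, hexpint, hexpval⟩
end

section
/- Let ε ≥ 1 and let (x₁, x₂) ∈ ℝ² satisfy x₁² < x₂ ≤ x₁² + ε². Then there exists φ ∈ BMO_ε((0,1]) with ∫₀¹ φ = x₁ and ∫₀¹ φ² = x₂ such that e^φ is not integrable on (0,1]. In particular, for ε ≥ 1 the integral-form John–Nirenberg inequality fails for every finite constant. -/
open MeasureTheory Real

namespace JNCounter

open intervalIntegral Set

lemma my_log_bound {x : ℝ} (hx : 0 < x) : -Real.log x ≤ 4 * x ^ (-(1/4) : ℝ) := by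
  have h1 : Real.log (x ^ (-(1/4):ℝ)) = (-(1/4)) * Real.log x := Real.log_rpow hx _
  have h2 : Real.log (x ^ (-(1/4):ℝ)) ≤ x ^ (-(1/4):ℝ) - 1 :=
    Real.log_le_sub_one_of_pos (Real.rpow_pos_of_pos hx _)
  nlinarith [Real.rpow_pos_of_pos hx (-(1/4):ℝ)]

lemma my_rpow_int : IntervalIntegrable (fun x : ℝ => x ^ (-(1/2) : ℝ)) volume 0 1 :=
  intervalIntegrable_rpow' (by norm_num)

lemma ilog : IntervalIntegrable Real.log volume 0 1 := by
  apply IntervalIntegrable.mono_fun' (g := fun x : ℝ => 16 * x ^ (-(1/2) : ℝ))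
    (my_rpow_int.const_mul 16) Real.measurable_log.aestronglyMeasurable
  rw [Filter.EventuallyLE, ae_restrict_iff' measurableSet_uIoc]
  refine Filter.Eventually.of_forall (fun x hx => ?_)
  rw [Set.uIoc_of_le (by norm_num : (0:ℝ) ≤ 1)] at hx
  obtain ⟨hx0, hx1⟩ := hx
  have hlb := my_log_bound hx0
  have hle : Real.log x ≤ 0 := Real.log_nonpos hx0.le hx1
  have h4 : x ^ (-(1/4):ℝ) ≤ x ^ (-(1/2):ℝ) := by
    apply Real.rpow_le_rpow_of_exponent_ge hx0 hx1 (by norm_num)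
  have hp : (0:ℝ) < x ^ (-(1/2):ℝ) := Real.rpow_pos_of_pos hx0 _
  simp only [Real.norm_eq_abs, abs_of_nonpos hle]
  nlinarith

lemma ilogsq : IntervalIntegrable (fun t : ℝ => Real.log t ^ 2) volume 0 1 := by
  apply IntervalIntegrable.mono_fun' (g := fun x : ℝ => 16 * x ^ (-(1/2) : ℝ))
    (my_rpow_int.const_mul 16) ((Real.measurable_log.pow_const 2).aestronglyMeasurable)
  rw [Filter.EventuallyLE, ae_restrict_iff' measurableSet_uIoc]
  refine Filter.Eventually.of_forall (fun x hx => ?_)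
  rw [Set.uIoc_of_le (by norm_num : (0:ℝ) ≤ 1)] at hx
  obtain ⟨hx0, hx1⟩ := hx
  have hlb := my_log_bound hx0
  have hle : Real.log x ≤ 0 := Real.log_nonpos hx0.le hx1
  have h4 : (x ^ (-(1/4):ℝ))^2 = x ^ (-(1/2):ℝ) := by
    rw [← Real.rpow_natCast (x ^ (-(1/4):ℝ)) 2, ← Real.rpow_mul hx0.le]; norm_num
  have hp : (0:ℝ) < x ^ (-(1/4):ℝ) := Real.rpow_pos_of_pos hx0 _
  simp only [Real.norm_eq_abs]
  rw [abs_of_nonneg (sq_nonneg (Real.log x))]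
  nlinarith

lemma sub01 {c d : ℝ} (hc : 0 ≤ c) (hd : d ≤ 1) (hcd : c ≤ d) :
    Set.uIcc c d ⊆ Set.uIcc (0:ℝ) 1 := by
  rw [Set.uIcc_of_le hcd, Set.uIcc_of_le (by norm_num : (0:ℝ) ≤ 1)]
  exact Set.Icc_subset_Icc hc hd

lemma ilog' {c d : ℝ} (hc : 0 ≤ c) (hd : d ≤ 1) (hcd : c ≤ d) :
    IntervalIntegrable Real.log volume c d :=
  ilog.mono_set (sub01 hc hd hcd)

lemma ilogsq' {c d : ℝ} (hc : 0 ≤ c) (hd : d ≤ 1) (hcd : c ≤ d) :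
    IntervalIntegrable (fun t : ℝ => Real.log t ^ 2) volume c d :=
  ilogsq.mono_set (sub01 hc hd hcd)

lemma L1 {c d : ℝ} (hc : 0 ≤ c) (hcd : c < d) (hd : d ≤ 1) :
    ∫ t in c..d, Real.log t = d * Real.log d - c * Real.log c - d + c := by
  rcases hc.eq_or_lt with rfl | hc0
  · have := integral_eq_sub_of_hasDerivAt_of_tendsto (f := fun t => t * Real.log t - t)
      (f' := Real.log) hcd (fa := 0) (fb := d * Real.log d - d)
      (fun x hx => by
        have h := ((Real.hasDerivAt_mul_log hx.1.ne').sub (hasDerivAt_id x)); simp at h; exact h)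
      (ilog' le_rfl hd hcd.le)
      (by
        have h1 : Filter.Tendsto (fun t : ℝ => t * Real.log t - t) (nhds 0) (nhds 0) := by
          have := (Real.continuous_mul_log.sub continuous_id).tendsto 0
          simp at this; exact this
        exact h1.mono_left nhdsWithin_le_nhds)
      (((Real.continuous_mul_log.sub continuous_id).tendsto d).mono_left nhdsWithin_le_nhds)
    rw [this]; simp
  · rw [integral_log]

lemma L2 {c d : ℝ} (hc : 0 ≤ c) (hcd : c < d) (hd : d ≤ 1) :
    ∫ t in c..d, Real.log t ^ 2 =
      d * Real.log d ^ 2 - c * Real.log c ^ 2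
        - 2 * (d * Real.log d - c * Real.log c) + 2 * (d - c) := by
  have hderiv : ∀ x : ℝ, 0 < x → HasDerivAt
      (fun t => t * Real.log t ^ 2 - 2 * (t * Real.log t) + 2 * t) (Real.log x ^ 2) x := by
    intro x hx
    have h1 : HasDerivAt (fun t : ℝ => t * Real.log t ^ 2)
        (1 * Real.log x ^ 2 + x * (2 * Real.log x ^ 1 * x⁻¹)) x :=
      (hasDerivAt_id x).mul ((Real.hasDerivAt_log hx.ne').pow 2)
    have h2 : HasDerivAt (fun t : ℝ => t * Real.log t) (Real.log x + 1) x :=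
      Real.hasDerivAt_mul_log hx.ne'
    have := (h1.sub ((h2.const_mul 2))).add ((hasDerivAt_id x).const_mul 2)
    refine this.congr_deriv ?_
    rw [show x * (2 * Real.log x ^ 1 * x⁻¹) = 2 * Real.log x by field_simp]
    ring
  rcases hc.eq_or_lt with rfl | hc0
  · have := integral_eq_sub_of_hasDerivAt_of_tendsto
      (f := fun t => t * Real.log t ^ 2 - 2 * (t * Real.log t) + 2 * t)
      (f' := fun t => Real.log t ^ 2) hcd (fa := 0)
      (fb := d * Real.log d ^ 2 - 2 * (d * Real.log d) + 2 * d)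
      (fun x hx => hderiv x hx.1) (ilogsq' le_rfl hd hcd.le)
      ?_ ?_
    · rw [this]; ring_nf
    · -- tendsto at 0+
      have hsq : Filter.Tendsto (fun t : ℝ => t * Real.log t ^ 2) (nhdsWithin 0 (Set.Ioi 0))
          (nhds 0) := by
        have h0 := tendsto_log_mul_rpow_nhdsGT_zero (r := 1/2) (by norm_num)
        have h1 : Filter.Tendsto (fun x : ℝ => (Real.log x * x ^ (1/2:ℝ))^2)
            (nhdsWithin 0 (Set.Ioi 0)) (nhds 0) := by
          simpa using (h0.pow 2)
        refine h1.congr' ?_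
        filter_upwards [self_mem_nhdsWithin] with x hx
        have hx0 : (0:ℝ) < x := hx
        have : (x ^ (1/2:ℝ))^2 = x := by
          rw [← Real.rpow_natCast (x ^ (1/2:ℝ)) 2, ← Real.rpow_mul hx0.le]; norm_num
        nlinarith [this]
      have hml : Filter.Tendsto (fun t : ℝ => t * Real.log t) (nhdsWithin 0 (Set.Ioi 0))
          (nhds 0) := by
        have := (Real.continuous_mul_log.tendsto 0).mono_left
          (nhdsWithin_le_nhds (s := Set.Ioi (0:ℝ)))
        simpa using this
      have := (hsq.sub (hml.const_mul 2)).add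
        ((continuous_id.tendsto (0:ℝ)).mono_left
          (nhdsWithin_le_nhds (s := Set.Ioi (0:ℝ))) |>.const_mul 2)
      simpa using this
    · -- tendsto at d-
      have hco : ContinuousAt
          (fun t : ℝ => t * Real.log t ^ 2 - 2 * (t * Real.log t) + 2 * t) d := by
        have hl : ContinuousAt Real.log d := Real.continuousAt_log (by positivity)
        fun_prop (disch := positivity)
      exact (hco.tendsto).mono_left nhdsWithin_le_nhds
  · have : ∀ x ∈ Set.uIcc c d, HasDerivAt
        (fun t => t * Real.log t ^ 2 - 2 * (t * Real.log t) + 2 * t) (Real.log x ^ 2) x := by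
      intro x hx
      rw [Set.uIcc_of_le hcd.le] at hx
      exact hderiv x (lt_of_lt_of_le hc0 hx.1)
    rw [integral_eq_sub_of_hasDerivAt this (ilogsq' hc hd hcd.le)]
    ring

/-- The building block: a truncated logarithmic spike. -/
noncomputable def ψ (δ t : ℝ) : ℝ := max (Real.log δ - Real.log t) 0

lemma ψ_meas (δ : ℝ) : Measurable (ψ δ) :=
  (measurable_const.sub Real.measurable_log).max measurable_const

lemma iψ {δ c d : ℝ} (hc : 0 ≤ c) (hd : d ≤ 1) (hcd : c ≤ d) :
    IntervalIntegrable (ψ δ) volume c d := by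
  apply IntervalIntegrable.mono_fun' (g := fun t => |Real.log δ| + |Real.log t|)
    ((_root_.intervalIntegrable_const).add (ilog' hc hd hcd).abs)
    (ψ_meas δ).aestronglyMeasurable
  refine Filter.Eventually.of_forall (fun x => ?_)
  simp only [ψ, Real.norm_eq_abs]
  rw [abs_of_nonneg (le_max_right _ _)]
  rcases le_or_gt (Real.log δ - Real.log x) 0 with h | h
  · rw [max_eq_right h]; positivity
  · rw [max_eq_left h.le]
    calc Real.log δ - Real.log x ≤ |Real.log δ - Real.log x| := le_abs_self _
    _ ≤ |Real.log δ| + |Real.log x| := abs_sub _ _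

lemma iψsq {δ c d : ℝ} (hc : 0 ≤ c) (hd : d ≤ 1) (hcd : c ≤ d) :
    IntervalIntegrable (fun t => ψ δ t ^ 2) volume c d := by
  have hg : IntervalIntegrable
      (fun t => Real.log δ ^ 2 - (2 * Real.log δ) * Real.log t + Real.log t ^ 2) volume c d :=
    (_root_.intervalIntegrable_const.sub ((ilog' hc hd hcd).const_mul _)).add (ilogsq' hc hd hcd)
  apply IntervalIntegrable.mono_fun' (g := _) hg
    (((ψ_meas δ).pow_const 2).aestronglyMeasurable)
  refine Filter.Eventually.of_forall (fun x => ?_)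
  simp only [ψ, Real.norm_eq_abs]
  rw [abs_of_nonneg (sq_nonneg _)]
  have h1 : |max (Real.log δ - Real.log x) 0| ≤ |Real.log δ - Real.log x| := by
    rcases le_or_gt (Real.log δ - Real.log x) 0 with h | h
    · rw [max_eq_right h, abs_zero]; positivity
    · rw [max_eq_left h.le]
  nlinarith [sq_abs (max (Real.log δ - Real.log x) 0), sq_abs (Real.log δ - Real.log x),
    abs_nonneg (max (Real.log δ - Real.log x) 0), abs_nonneg (Real.log δ - Real.log x)]

lemma ψ_eq_left {δ t : ℝ} (ht : t ∈ Set.Ioc 0 δ) : ψ δ t = Real.log δ - Real.log t :=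
  max_eq_left (by simpa using Real.log_le_log ht.1 ht.2)

lemma ψ_eq_right {δ t : ℝ} (hδ : 0 < δ) (hδ1 : δ ≤ 1) (ht : t ∈ Set.uIcc δ 1) : ψ δ t = 0 := by
  rw [Set.uIcc_of_le hδ1] at ht
  exact max_eq_right (by simpa using Real.log_le_log hδ ht.1)

lemma intψ {δ : ℝ} (hδ0 : 0 < δ) (hδ1 : δ ≤ 1) : ∫ t in (0:ℝ)..1, ψ δ t = δ := by
  rw [← integral_add_adjacent_intervals (b := δ) (iψ le_rfl hδ1 hδ0.le) (iψ hδ0.le le_rfl hδ1)]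
  have h2 : ∫ t in δ..1, ψ δ t = 0 := by
    rw [integral_congr (g := fun _ => 0) (fun t ht => ψ_eq_right hδ0 hδ1 ht)]; simp
  have h1 : ∫ t in (0:ℝ)..δ, ψ δ t = ∫ t in (0:ℝ)..δ, (Real.log δ - Real.log t) := by
    apply intervalIntegral.integral_congr_ae
    refine Filter.Eventually.of_forall (fun t ht => ?_)
    rw [Set.uIoc_of_le hδ0.le] at ht
    exact ψ_eq_left ht
  rw [h1, h2, integral_sub _root_.intervalIntegrable_const (ilog' le_rfl hδ1 hδ0.le),
    L1 le_rfl hδ0 hδ1, intervalIntegral.integral_const]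
  simp

lemma intψsq {δ : ℝ} (hδ0 : 0 < δ) (hδ1 : δ ≤ 1) : ∫ t in (0:ℝ)..1, ψ δ t ^ 2 = 2 * δ := by
  rw [← integral_add_adjacent_intervals (b := δ) (iψsq le_rfl hδ1 hδ0.le) (iψsq hδ0.le le_rfl hδ1)]
  have h2 : ∫ t in δ..1, ψ δ t ^ 2 = 0 := by
    rw [integral_congr (g := fun _ => 0)
      (fun t ht => by rw [ψ_eq_right hδ0 hδ1 ht]; norm_num)]; simp
  have h1 : ∫ t in (0:ℝ)..δ, ψ δ t ^ 2
      = ∫ t in (0:ℝ)..δ, (Real.log δ ^ 2 - (2 * Real.log δ) * Real.log t + Real.log t ^ 2) := by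
    apply intervalIntegral.integral_congr_ae
    refine Filter.Eventually.of_forall (fun t ht => ?_)
    rw [Set.uIoc_of_le hδ0.le] at ht
    rw [ψ_eq_left ht]; ring
  rw [h1, h2,
    integral_add ((_root_.intervalIntegrable_const).sub ((ilog' le_rfl hδ1 hδ0.le).const_mul _))
      (ilogsq' le_rfl hδ1 hδ0.le),
    integral_sub _root_.intervalIntegrable_const ((ilog' le_rfl hδ1 hδ0.le).const_mul _),
    intervalIntegral.integral_const_mul, L1 le_rfl hδ0 hδ1, L2 le_rfl hδ0 hδ1,
    intervalIntegral.integral_const]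
  simp
  ring

lemma iφ {a m δ c d : ℝ} (hc : 0 ≤ c) (hd : d ≤ 1) (hcd : c ≤ d) :
    IntervalIntegrable (fun t => a * ψ δ t + m) volume c d :=
  ((iψ hc hd hcd).const_mul a).add _root_.intervalIntegrable_const

lemma iφsq {a m δ c d : ℝ} (hc : 0 ≤ c) (hd : d ≤ 1) (hcd : c ≤ d) :
    IntervalIntegrable (fun t => (a * ψ δ t + m) ^ 2) volume c d := by
  have e : (fun t => (a * ψ δ t + m) ^ 2)
      = fun t => a ^ 2 * ψ δ t ^ 2 + (2 * a * m) * ψ δ t + m ^ 2 := funext fun t => by ring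
  rw [e]
  exact (((iψsq hc hd hcd).const_mul _).add ((iψ hc hd hcd).const_mul _)).add
    _root_.intervalIntegrable_const

set_option maxHeartbeats 2000000 in
lemma variance_bound {ε a δ m c d : ℝ} (ha0 : 0 ≤ a) (haε : a ≤ ε)
    (hc : 0 ≤ c) (hcd : c < d) (hd : d ≤ 1) :
    avg (fun t => (a * ψ δ t + m) ^ 2) c d - (avg (fun t => a * ψ δ t + m) c d) ^ 2 ≤ ε ^ 2 := by
  have hd0 : 0 ≤ d := le_trans hc hcd.le
  have hL : (0:ℝ) < d - c := by linarith
  set J1 : ℝ := ∫ t in c..d, Real.log t with hJ1def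
  set J2 : ℝ := ∫ t in c..d, Real.log t ^ 2 with hJ2def
  have hkey : (d - c) * J2 - J1 ^ 2 ≤ (d - c) ^ 2 := by
    rw [hJ1def, hJ2def, L1 hc hcd hd, L2 hc hcd hd]
    nlinarith [mul_nonneg (mul_nonneg hc hd0) (sq_nonneg (Real.log d - Real.log c))]
  set μ : ℝ := -J1 / (d - c) with hμdef
  set K : ℝ := a * max (Real.log δ + μ) 0 + m with hKdef
  set X : ℝ := ∫ t in c..d, (a * ψ δ t + m) ^ 2 with hXdef
  set Y : ℝ := ∫ t in c..d, (a * ψ δ t + m) with hYdef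
  have hF : IntervalIntegrable (fun t => ((a * ψ δ t + m) - K) ^ 2) volume c d := by
    have e : (fun t => ((a * ψ δ t + m) - K) ^ 2)
        = fun t => (a * ψ δ t + m) ^ 2 - (2 * K) * (a * ψ δ t + m) + K ^ 2 :=
      funext fun t => by ring
    rw [e]
    exact ((iφsq hc hd hcd.le).sub ((iφ hc hd hcd.le).const_mul _)).add
      _root_.intervalIntegrable_const
  have hG : IntervalIntegrable (fun t => a ^ 2 * (Real.log t + μ) ^ 2) volume c d := by
    have e : (fun t => a ^ 2 * (Real.log t + μ) ^ 2)
        = fun t => a ^ 2 * Real.log t ^ 2 + (2 * a ^ 2 * μ) * Real.log t + a ^ 2 * μ ^ 2 :=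
      funext fun t => by ring
    rw [e]
    exact (((ilogsq' hc hd hcd.le).const_mul _).add ((ilog' hc hd hcd.le).const_mul _)).add
      _root_.intervalIntegrable_const
  have hpoint : ∀ t, ((a * ψ δ t + m) - K) ^ 2 ≤ a ^ 2 * (Real.log t + μ) ^ 2 := by
    intro t
    have h1 : |max (Real.log δ - Real.log t) 0 - max (Real.log δ + μ) 0|
        ≤ |(Real.log δ - Real.log t) - (Real.log δ + μ)| := abs_max_sub_max_le_abs _ _ _
    have h2 : (max (Real.log δ - Real.log t) 0 - max (Real.log δ + μ) 0) ^ 2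
        ≤ ((Real.log δ - Real.log t) - (Real.log δ + μ)) ^ 2 := by
      rw [← sq_abs (max (Real.log δ - Real.log t) 0 - max (Real.log δ + μ) 0),
        ← sq_abs ((Real.log δ - Real.log t) - (Real.log δ + μ))]
      exact pow_le_pow_left₀ (abs_nonneg _) h1 2
    have e1 : ((a * ψ δ t + m) - K) ^ 2
        = a ^ 2 * (max (Real.log δ - Real.log t) 0 - max (Real.log δ + μ) 0) ^ 2 := by
      rw [hKdef]; simp only [ψ]; ring
    have e2 : a ^ 2 * (Real.log t + μ) ^ 2
        = a ^ 2 * ((Real.log δ - Real.log t) - (Real.log δ + μ)) ^ 2 := by ring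
    rw [e1, e2]
    exact mul_le_mul_of_nonneg_left h2 (sq_nonneg a)
  have hmono : ∫ t in c..d, ((a * ψ δ t + m) - K) ^ 2
      ≤ ∫ t in c..d, a ^ 2 * (Real.log t + μ) ^ 2 :=
    intervalIntegral.integral_mono_on hcd.le hF hG (fun t _ => hpoint t)
  have hEq1 : ∫ t in c..d, ((a * ψ δ t + m) - K) ^ 2
      = X - 2 * K * Y + K ^ 2 * (d - c) := by
    have e : (fun t => ((a * ψ δ t + m) - K) ^ 2)
        = fun t => (a * ψ δ t + m) ^ 2 - (2 * K) * (a * ψ δ t + m) + K ^ 2 :=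
      funext fun t => by ring
    rw [e, integral_add ((iφsq hc hd hcd.le).sub ((iφ hc hd hcd.le).const_mul _))
        _root_.intervalIntegrable_const,
      integral_sub (iφsq hc hd hcd.le) ((iφ hc hd hcd.le).const_mul _),
      intervalIntegral.integral_const_mul, intervalIntegral.integral_const]
    rw [← hXdef, ← hYdef]
    simp
    ring
  have hEq2 : ∫ t in c..d, a ^ 2 * (Real.log t + μ) ^ 2
      = a ^ 2 * (J2 + 2 * μ * J1 + μ ^ 2 * (d - c)) := by
    have e : (fun t => a ^ 2 * (Real.log t + μ) ^ 2)
        = fun t => a ^ 2 * Real.log t ^ 2 + (2 * a ^ 2 * μ) * Real.log t + a ^ 2 * μ ^ 2 :=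
      funext fun t => by ring
    rw [e, integral_add (((ilogsq' hc hd hcd.le).const_mul _).add
        ((ilog' hc hd hcd.le).const_mul _)) _root_.intervalIntegrable_const,
      integral_add ((ilogsq' hc hd hcd.le).const_mul _) ((ilog' hc hd hcd.le).const_mul _),
      intervalIntegral.integral_const_mul, intervalIntegral.integral_const_mul,
      intervalIntegral.integral_const]
    rw [← hJ1def, ← hJ2def]
    simp
    ring
  have hval : J2 + 2 * μ * J1 + μ ^ 2 * (d - c) = ((d - c) * J2 - J1 ^ 2) / (d - c) := by
    rw [hμdef]; field_simp; ring
  have h5 : X - 2 * K * Y + K ^ 2 * (d - c) ≤ a ^ 2 * (((d - c) * J2 - J1 ^ 2) / (d - c)) := by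
    rw [← hval, ← hEq2, ← hEq1]; exact hmono
  have h6 : a ^ 2 * (((d - c) * J2 - J1 ^ 2) / (d - c)) ≤ ε ^ 2 * (d - c) := by
    have h7 : ((d - c) * J2 - J1 ^ 2) / (d - c) ≤ d - c := by
      rw [div_le_iff₀ hL]; nlinarith
    have ha2 : a ^ 2 ≤ ε ^ 2 := by nlinarith
    calc a ^ 2 * (((d - c) * J2 - J1 ^ 2) / (d - c)) ≤ a ^ 2 * (d - c) :=
          mul_le_mul_of_nonneg_left h7 (sq_nonneg a)
      _ ≤ ε ^ 2 * (d - c) := mul_le_mul_of_nonneg_right ha2 hL.le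
  have hfin : X - 2 * K * Y + K ^ 2 * (d - c) ≤ ε ^ 2 * (d - c) := le_trans h5 h6
  have hgoal : avg (fun t => (a * ψ δ t + m) ^ 2) c d = X / (d - c) ∧
      avg (fun t => a * ψ δ t + m) c d = Y / (d - c) := by
    constructor <;> simp only [avg, hXdef, hYdef]
  rw [hgoal.1, hgoal.2]
  calc X / (d - c) - (Y / (d - c)) ^ 2
      = (X - 2 * K * Y + K ^ 2 * (d - c)) / (d - c) - (Y / (d - c) - K) ^ 2 := by
        field_simp; ring
    _ ≤ (X - 2 * K * Y + K ^ 2 * (d - c)) / (d - c) := by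
        nlinarith [sq_nonneg (Y / (d - c) - K)]
    _ ≤ ε ^ 2 := by rw [div_le_iff₀ hL]; linarith

lemma moment1 {a m δ : ℝ} (hδ0 : 0 < δ) (hδ1 : δ ≤ 1) :
    ∫ t in (0:ℝ)..1, (a * ψ δ t + m) = a * δ + m := by
  rw [integral_add ((iψ le_rfl le_rfl zero_le_one).const_mul a) _root_.intervalIntegrable_const,
    intervalIntegral.integral_const_mul, intψ hδ0 hδ1, intervalIntegral.integral_const]
  simp

lemma moment2 {a m δ : ℝ} (hδ0 : 0 < δ) (hδ1 : δ ≤ 1) :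
    ∫ t in (0:ℝ)..1, (a * ψ δ t + m) ^ 2 = 2 * a ^ 2 * δ + 2 * a * m * δ + m ^ 2 := by
  have e : (fun t => (a * ψ δ t + m) ^ 2)
      = fun t => a ^ 2 * ψ δ t ^ 2 + (2 * a * m) * ψ δ t + m ^ 2 := funext fun t => by ring
  rw [e, integral_add (((iψsq le_rfl le_rfl zero_le_one).const_mul _).add
      ((iψ le_rfl le_rfl zero_le_one).const_mul _)) _root_.intervalIntegrable_const,
    integral_add ((iψsq le_rfl le_rfl zero_le_one).const_mul _)
      ((iψ le_rfl le_rfl zero_le_one).const_mul _),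
    intervalIntegral.integral_const_mul, intervalIntegral.integral_const_mul,
    intψ hδ0 hδ1, intψsq hδ0 hδ1, intervalIntegral.integral_const]
  simp
  ring

lemma nonint {a m δ : ℝ} (ha1 : 1 ≤ a) (hδ0 : 0 < δ) :
    ¬ IntervalIntegrable (fun t => Real.exp (a * ψ δ t + m)) volume 0 1 := by
  apply not_intervalIntegrable_of_sub_inv_isBigO_punctured (c := 0)
    _ one_ne_zero.symm (by simp)
  rw [Asymptotics.isBigO_iff]
  refine ⟨(Real.exp m * δ)⁻¹, ?_⟩
  have h1 : ∀ᶠ x in nhdsWithin (0:ℝ) {0}ᶜ, |x| < δ := by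
    apply Filter.Eventually.filter_mono nhdsWithin_le_nhds
    have := Metric.ball_mem_nhds (0:ℝ) hδ0
    filter_upwards [this] with x hx
    simpa [Real.dist_eq] using hx
  filter_upwards [h1, self_mem_nhdsWithin] with x hx hx0
  have hx0' : x ≠ 0 := hx0
  have habs : 0 < |x| := abs_pos.mpr hx0'
  have hlog : Real.log x = Real.log |x| := (Real.log_abs x).symm
  have hlt : Real.log |x| < Real.log δ := Real.log_lt_log habs hx
  have hψ : ψ δ x = Real.log δ - Real.log x := by
    rw [ψ, max_eq_left]; rw [hlog]; linarith
  have hexp : Real.exp (Real.log δ - Real.log x) = δ / |x| := by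
    rw [hlog, Real.exp_sub, Real.exp_log hδ0, Real.exp_log habs]
  have hup : Real.exp m * (δ / |x|) ≤ Real.exp (a * ψ δ x + m) := by
    rw [Real.exp_add, mul_comm]
    apply mul_le_mul_of_nonneg_right _ (Real.exp_pos m).le
    rw [← hexp]
    apply Real.exp_le_exp.mpr
    have hp : 0 ≤ Real.log δ - Real.log x := by rw [hlog]; linarith
    rw [hψ]; nlinarith
  rw [Real.norm_eq_abs, Real.norm_eq_abs, sub_zero, abs_inv,
    abs_of_nonneg (Real.exp_pos _).le]
  calc |x|⁻¹ = (Real.exp m * δ)⁻¹ * (Real.exp m * (δ / |x|)) := by field_simp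
    _ ≤ (Real.exp m * δ)⁻¹ * Real.exp (a * ψ δ x + m) :=
        mul_le_mul_of_nonneg_left hup (by positivity)

lemma master {ε a δ m : ℝ} (ha1 : 1 ≤ a) (haε : a ≤ ε) (hδ0 : 0 < δ) (hδ1 : δ ≤ 1) :
    BMOe ε 0 1 (fun t => a * ψ δ t + m) ∧
    (∫ t in (0:ℝ)..1, (a * ψ δ t + m)) = a * δ + m ∧
    (∫ t in (0:ℝ)..1, (a * ψ δ t + m) ^ 2) = 2 * a ^ 2 * δ + 2 * a * m * δ + m ^ 2 ∧
    ¬ IntervalIntegrable (fun t => Real.exp (a * ψ δ t + m)) volume 0 1 := by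
  refine ⟨⟨iφ le_rfl le_rfl zero_le_one, iφsq le_rfl le_rfl zero_le_one,
    fun c d hc hcd hd => variance_bound (by linarith) haε hc hcd hd⟩,
    moment1 hδ0 hδ1, moment2 hδ0 hδ1, nonint ha1 hδ0⟩

end JNCounter

/-- For `ε ≥ 1`, the integral-form John–Nirenberg inequality fails: for every
point `(x₁,x₂)` with `x₁² < x₂ ≤ x₁² + ε²` there is `φ ∈ BMO_ε((0,1])` with the
prescribed averages and `e^φ` not integrable. -/
theorem stmt2 (ε x₁ x₂ : ℝ) (hε : 1 ≤ ε) (h1 : x₁ ^ 2 < x₂) (h2 : x₂ ≤ x₁ ^ 2 + ε ^ 2) :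
    ∃ φ : ℝ → ℝ, BMOe ε 0 1 φ ∧
      (∫ t in (0:ℝ)..1, φ t) = x₁ ∧
      (∫ t in (0:ℝ)..1, (φ t) ^ 2) = x₂ ∧
      ¬ IntervalIntegrable (fun t => Real.exp (φ t)) volume 0 1 := by
  set V : ℝ := x₂ - x₁ ^ 2 with hVdef
  have hV0 : 0 < V := by simp [hVdef]; linarith
  have hVε : V ≤ ε ^ 2 := by simp [hVdef]; linarith
  rcases le_total 1 V with hV1 | hV1
  · -- V ≥ 1 : pure logarithm with slope √V
    set a : ℝ := Real.sqrt V with hadef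
    have hsq : a ^ 2 = V := Real.sq_sqrt hV0.le
    have ha0 : 0 ≤ a := Real.sqrt_nonneg V
    have ha1 : 1 ≤ a := by nlinarith
    have haε : a ≤ ε := by nlinarith
    obtain ⟨hB, hm1, hm2, hni⟩ := JNCounter.master (m := x₁ - a) (δ := 1) ha1 haε zero_lt_one le_rfl
    exact ⟨_, hB, by rw [hm1]; ring, by rw [hm2]; nlinarith, hni⟩
  · -- V ≤ 1 : truncated logarithm with slope 1
    set s : ℝ := Real.sqrt (1 - V) with hsdef
    have hsq : s ^ 2 = 1 - V := Real.sq_sqrt (by linarith)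
    have hs0 : 0 ≤ s := Real.sqrt_nonneg _
    have hs1 : s < 1 := by nlinarith
    obtain ⟨hB, hm1, hm2, hni⟩ := JNCounter.master (a := 1) (m := x₁ - (1 - s)) (δ := 1 - s)
      le_rfl hε (by linarith) (by linarith)
    exact ⟨_, hB, by rw [hm1]; ring, by rw [hm2]; nlinarith, hni⟩
end

section
/- Let 0 < a ≤ 1, b ∈ ℝ, γ ∈ ℝ, and define φ on (0,1] by φ(t) = γ·log(a/t) + b for 0 < t ≤ a and φ(t) = b for a < t ≤ 1. Then φ ∈ BMO_{|γ|}((0,1]), ∫₀¹ φ = γa + b, and ∫₀¹ φ² = 2γ²a + 2γab + b². -/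
open MeasureTheory Real

namespace Stmt5Aux

open Set intervalIntegral

/-- Antiderivative of `log`. -/
noncomputable def Fa (t : ℝ) : ℝ := t * Real.log t - t

/-- Antiderivative of `log ^ 2`. -/
noncomputable def Ga (t : ℝ) : ℝ := t * (Real.log t) ^ 2 - 2 * (t * Real.log t) + 2 * t

lemma sub01 {c d : ℝ} (hc : 0 ≤ c) (hc1 : c ≤ 1) (hd : 0 ≤ d) (hd1 : d ≤ 1) :
    Set.uIcc c d ⊆ Set.uIcc (0:ℝ) 1 :=
  Set.uIcc_subset_uIcc (by rw [Set.uIcc_of_le zero_le_one]; exact Set.mem_Icc.mpr ⟨hc, hc1⟩)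
    (by rw [Set.uIcc_of_le zero_le_one]; exact Set.mem_Icc.mpr ⟨hd, hd1⟩)

lemma hasDerivAt_Fa {x : ℝ} (hx : x ≠ 0) : HasDerivAt Fa (Real.log x) x := by
  have h : HasDerivAt Fa (Real.log x + 1 - 1) x := (Real.hasDerivAt_mul_log hx).sub (hasDerivAt_id x)
  convert h using 1
  ring

lemma hasDerivAt_Ga {x : ℝ} (hx : x ≠ 0) : HasDerivAt Ga ((Real.log x) ^ 2) x := by
  have h1 : HasDerivAt (fun t : ℝ => (Real.log t) ^ 2) (2 * Real.log x * x⁻¹) x := by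
    exact ((Real.hasDerivAt_log hx).pow 2 : HasDerivAt (fun t : ℝ => (Real.log t) ^ 2) (((2:ℕ):ℝ) * Real.log x ^ (2 - 1) * x⁻¹) x).congr_deriv (by norm_num)
  have h2 : HasDerivAt (fun t : ℝ => t * (Real.log t) ^ 2)
      (1 * (Real.log x) ^ 2 + x * (2 * Real.log x * x⁻¹)) x := (hasDerivAt_id x).mul h1
  have h3 : HasDerivAt Ga (1 * (Real.log x) ^ 2 + x * (2 * Real.log x * x⁻¹) - 2 * (Real.log x + 1) + 2 * 1) x := (h2.sub ((Real.hasDerivAt_mul_log hx).const_mul 2)).add ((hasDerivAt_id x).const_mul 2)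
  convert h3 using 1
  field_simp
  ring

lemma contFa : Continuous Fa := Real.continuous_mul_log.sub continuous_id

lemma contMulLogSq : ContinuousOn (fun t : ℝ => t * (Real.log t) ^ 2) (Set.Ici 0) := by
  have hcont : Continuous (fun t : ℝ => (2 * (Real.sqrt t * Real.log (Real.sqrt t))) ^ 2) :=
    ((continuous_const.mul (Real.continuous_mul_log.comp Real.continuous_sqrt)).pow 2)
  refine hcont.continuousOn.congr fun t ht => ?_
  have hs : Real.sqrt t ^ 2 = t := Real.sq_sqrt ht
  have hl : Real.log t = 2 * Real.log (Real.sqrt t) := by rw [Real.log_sqrt ht]; ring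
  calc t * (Real.log t) ^ 2 = (Real.sqrt t ^ 2) * (2 * Real.log (Real.sqrt t)) ^ 2 := by
        rw [hs, ← hl]
    _ = (2 * (Real.sqrt t * Real.log (Real.sqrt t))) ^ 2 := by ring

lemma contGa : ContinuousOn Ga (Set.Ici 0) :=
  (contMulLogSq.sub (continuous_const.mul Real.continuous_mul_log).continuousOn).add
    ((continuous_const.mul continuous_id).continuousOn)

lemma intLog : IntervalIntegrable Real.log volume 0 1 := by
  rw [intervalIntegrable_iff_integrableOn_Ioc_of_le zero_le_one]
  have h : IntegrableOn (fun t : ℝ => -Real.log t) (Set.Ioc (0:ℝ) 1) := by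
    apply intervalIntegral.integrableOn_deriv_of_nonneg
      (g := fun t : ℝ => t - t * Real.log t)
    · exact (continuous_id.sub Real.continuous_mul_log).continuousOn
    · intro x hx
      have h : HasDerivAt (fun t : ℝ => t - t * Real.log t) (1 - (Real.log x + 1)) x :=
        (hasDerivAt_id x).sub (Real.hasDerivAt_mul_log (ne_of_gt hx.1))
      convert h using 1
      ring
    · intro x hx
      exact neg_nonneg.mpr (Real.log_nonpos hx.1.le hx.2.le)
  have hrw : (fun t : ℝ => Real.log t) = fun t : ℝ => -(-Real.log t) := by
    funext t; ring
  rw [show Real.log = fun t : ℝ => -(-Real.log t) from by funext t; ring]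
  exact h.neg
  
lemma intLogSq : IntervalIntegrable (fun t : ℝ => (Real.log t) ^ 2) volume 0 1 := by
  rw [intervalIntegrable_iff_integrableOn_Ioc_of_le zero_le_one]
  apply intervalIntegral.integrableOn_deriv_of_nonneg (g := Ga)
  · exact contGa.mono (Set.Icc_subset_Ici_self)
  · intro x hx
    exact hasDerivAt_Ga (ne_of_gt hx.1)
  · intro x _
    positivity

lemma integral_log_eq {c d : ℝ} (hc : 0 ≤ c) (hcd : c ≤ d) (hd : d ≤ 1) :
    ∫ t in c..d, Real.log t = Fa d - Fa c := by
  apply intervalIntegral.integral_eq_sub_of_hasDerivAt_of_le hcd contFa.continuousOn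
  · intro x hx
    exact hasDerivAt_Fa (ne_of_gt (lt_of_le_of_lt hc hx.1))
  · exact intLog.mono_set (sub01 hc (hcd.trans hd) (hc.trans hcd) hd)

lemma integral_logsq_eq {c d : ℝ} (hc : 0 ≤ c) (hcd : c ≤ d) (hd : d ≤ 1) :
    ∫ t in c..d, (Real.log t) ^ 2 = Ga d - Ga c := by
  have hsub : Set.Icc c d ⊆ Set.Ici (0:ℝ) := fun x hx => le_trans hc hx.1
  apply intervalIntegral.integral_eq_sub_of_hasDerivAt_of_le hcd (contGa.mono hsub)
  · intro x hx
    exact hasDerivAt_Ga (ne_of_gt (lt_of_le_of_lt hc hx.1))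
  · exact intLogSq.mono_set (sub01 hc (hcd.trans hd) (hc.trans hcd) hd)

lemma int_lin_low {la c d : ℝ} (hc : 0 ≤ c) (hcd : c ≤ d) (hd : d ≤ 1) :
    ∫ t in c..d, (la - Real.log t) = (d - c) * la - (Fa d - Fa c) := by
  rw [intervalIntegral.integral_sub intervalIntegrable_const
      (intLog.mono_set (sub01 hc (hcd.trans hd) (hc.trans hcd) hd)),
    intervalIntegral.integral_const, integral_log_eq hc hcd hd]
  simp [smul_eq_mul]

lemma int_sq_low {la c d : ℝ} (hc : 0 ≤ c) (hcd : c ≤ d) (hd : d ≤ 1) :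
    ∫ t in c..d, (la - Real.log t) ^ 2
      = (d - c) * la ^ 2 - 2 * la * (Fa d - Fa c) + (Ga d - Ga c) := by
  have hsub := sub01 hc (hcd.trans hd) (hc.trans hcd) hd
  have hrw : (fun t : ℝ => (la - Real.log t) ^ 2)
      = fun t : ℝ => (la ^ 2 - (2 * la) * Real.log t) + (Real.log t) ^ 2 := by
    funext t; ring
  rw [hrw,
    intervalIntegral.integral_add
      (intervalIntegrable_const.sub ((intLog.mono_set hsub).const_mul _))
      (intLogSq.mono_set hsub),
    intervalIntegral.integral_sub intervalIntegrable_const ((intLog.mono_set hsub).const_mul _),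
    intervalIntegral.integral_const, intervalIntegral.integral_const_mul,
    integral_log_eq hc hcd hd, integral_logsq_eq hc hcd hd]
  simp only [smul_eq_mul]
  try ring

end Stmt5Aux

open Stmt5Aux

/-- The logarithmic step function `φ_{a,b,γ}` lies in `BMO_{|γ|}((0,1])` and has
the stated first and second averages. -/
theorem stmt5 (a b γ : ℝ) (ha0 : 0 < a) (ha1 : a ≤ 1)
    (φ : ℝ → ℝ)
    (hφ1 : ∀ t ∈ Set.Ioc (0 : ℝ) a, φ t = γ * Real.log (a / t) + b)
    (hφ2 : ∀ t ∈ Set.Ioc a 1, φ t = b) :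
    BMOe |γ| 0 1 φ ∧
    (∫ t in (0:ℝ)..1, φ t) = γ * a + b ∧
    (∫ t in (0:ℝ)..1, (φ t) ^ 2) = 2 * γ ^ 2 * a + 2 * γ * a * b + b ^ 2 := by
  have ha0' : (0:ℝ) ≤ a := ha0.le
  set L : ℝ → ℝ := fun t => if t ≤ a then Real.log a - Real.log t else 0 with hLdef
  have hLmeas : Measurable L :=
    Measurable.ite measurableSet_Iic (measurable_const.sub Real.measurable_log) measurable_const
  have hfi : IntervalIntegrable (fun t : ℝ => Real.log a - Real.log t) volume 0 1 :=
    intervalIntegrable_const.sub intLog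
  have hfi2 : IntervalIntegrable (fun t : ℝ => (Real.log a - Real.log t) ^ 2) volume 0 1 := by
    have hrw : (fun t : ℝ => (Real.log a - Real.log t) ^ 2)
        = fun t : ℝ => ((Real.log a) ^ 2 - (2 * Real.log a) * Real.log t) + (Real.log t) ^ 2 := by
      funext t; ring
    rw [hrw]
    exact (intervalIntegrable_const.sub (intLog.const_mul _)).add intLogSq
  have hLi : IntervalIntegrable L volume 0 1 := by
    rw [intervalIntegrable_iff_integrableOn_Ioc_of_le zero_le_one] at hfi ⊢
    refine MeasureTheory.Integrable.mono hfi hLmeas.aestronglyMeasurable (Filter.Eventually.of_forall fun t => ?_)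
    by_cases hta : t ≤ a
    · simp [hLdef, hta]
    · simp [hLdef, hta]
      try positivity
  have hLi2 : IntervalIntegrable (fun t => (L t) ^ 2) volume 0 1 := by
    rw [intervalIntegrable_iff_integrableOn_Ioc_of_le zero_le_one] at hfi2 ⊢
    refine MeasureTheory.Integrable.mono hfi2 (hLmeas.pow_const 2).aestronglyMeasurable
      (Filter.Eventually.of_forall fun t => ?_)
    by_cases hta : t ≤ a
    · simp [hLdef, hta]
    · simp [hLdef, hta]
      try positivity
  have hLsub : ∀ c d : ℝ, 0 ≤ c → c ≤ 1 → 0 ≤ d → d ≤ 1 → IntervalIntegrable L volume c d :=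
    fun c d h1 h2 h3 h4 => hLi.mono_set (sub01 h1 h2 h3 h4)
  have hLsub2 : ∀ c d : ℝ, 0 ≤ c → c ≤ 1 → 0 ≤ d → d ≤ 1 →
      IntervalIntegrable (fun t => (L t) ^ 2) volume c d :=
    fun c d h1 h2 h3 h4 => hLi2.mono_set (sub01 h1 h2 h3 h4)
  -- integral of L on intervals below a
  have hJ1low : ∀ c d : ℝ, 0 ≤ c → c ≤ d → d ≤ a →
      ∫ t in c..d, L t = (d - c) * Real.log a - (Fa d - Fa c) := by
    intro c d h1 h2 h3
    have he : ∫ t in c..d, L t = ∫ t in c..d, (Real.log a - Real.log t) := by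
      apply intervalIntegral.integral_congr_ae
      filter_upwards with x hx
      rw [Set.uIoc_of_le h2] at hx
      have hxa : x ≤ a := hx.2.trans h3
      simp [hLdef, hxa]
    rw [he, int_lin_low h1 h2 (h3.trans ha1)]
  have hJ2low : ∀ c d : ℝ, 0 ≤ c → c ≤ d → d ≤ a →
      ∫ t in c..d, (L t) ^ 2
        = (d - c) * (Real.log a) ^ 2 - 2 * Real.log a * (Fa d - Fa c) + (Ga d - Ga c) := by
    intro c d h1 h2 h3
    have he : ∫ t in c..d, (L t) ^ 2 = ∫ t in c..d, (Real.log a - Real.log t) ^ 2 := by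
      apply intervalIntegral.integral_congr_ae
      filter_upwards with x hx
      rw [Set.uIoc_of_le h2] at hx
      have hxa : x ≤ a := hx.2.trans h3
      simp [hLdef, hxa]
    rw [he, int_sq_low h1 h2 (h3.trans ha1)]
  have hJ1high : ∀ c d : ℝ, a ≤ c → c ≤ d → ∫ t in c..d, L t = 0 := by
    intro c d h1 h2
    have he : ∫ t in c..d, L t = ∫ t in c..d, (0:ℝ) := by
      apply intervalIntegral.integral_congr_ae
      filter_upwards with x hx
      rw [Set.uIoc_of_le h2] at hx
      have hxa : ¬ x ≤ a := not_le.mpr (lt_of_le_of_lt h1 hx.1)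
      simp [hLdef, hxa]
    rw [he]; simp
  have hJ2high : ∀ c d : ℝ, a ≤ c → c ≤ d → ∫ t in c..d, (L t) ^ 2 = 0 := by
    intro c d h1 h2
    have he : ∫ t in c..d, (L t) ^ 2 = ∫ t in c..d, (0:ℝ) := by
      apply intervalIntegral.integral_congr_ae
      filter_upwards with x hx
      rw [Set.uIoc_of_le h2] at hx
      have hxa : ¬ x ≤ a := not_le.mpr (lt_of_le_of_lt h1 hx.1)
      simp [hLdef, hxa]
    rw [he]; simp
  -- φ agrees with γ L + b on (0,1]
  have hphiL : ∀ x ∈ Set.Ioc (0:ℝ) 1, φ x = γ * L x + b := by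
    intro x hx
    by_cases hxa : x ≤ a
    · rw [hφ1 x ⟨hx.1, hxa⟩, Real.log_div (ne_of_gt ha0) (ne_of_gt hx.1)]
      simp [hLdef, hxa]
    · rw [hφ2 x ⟨not_le.mp hxa, hx.2⟩]
      simp [hLdef, hxa]
  -- integrals of φ and φ² on subintervals
  have hintφ : ∀ c d : ℝ, 0 ≤ c → c ≤ d → d ≤ 1 →
      ∫ t in c..d, φ t = γ * (∫ t in c..d, L t) + b * (d - c) := by
    intro c d h1 h2 h3
    have he : ∫ t in c..d, φ t = ∫ t in c..d, (γ * L t + b) := by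
      apply intervalIntegral.integral_congr_ae
      filter_upwards with x hx
      rw [Set.uIoc_of_le h2] at hx
      exact hphiL x ⟨lt_of_le_of_lt h1 hx.1, hx.2.trans h3⟩
    rw [he, intervalIntegral.integral_add
        ((hLsub c d h1 (h2.trans h3) (h1.trans h2) h3).const_mul γ) intervalIntegrable_const,
      intervalIntegral.integral_const_mul, intervalIntegral.integral_const]
    simp only [smul_eq_mul]
    ring
  have hintφ2 : ∀ c d : ℝ, 0 ≤ c → c ≤ d → d ≤ 1 →
      ∫ t in c..d, (φ t) ^ 2
        = γ ^ 2 * (∫ t in c..d, (L t) ^ 2) + 2 * γ * b * (∫ t in c..d, L t)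
          + b ^ 2 * (d - c) := by
    intro c d h1 h2 h3
    have he : ∫ t in c..d, (φ t) ^ 2
        = ∫ t in c..d, (γ ^ 2 * (L t) ^ 2 + (2 * γ * b) * L t + b ^ 2) := by
      apply intervalIntegral.integral_congr_ae
      filter_upwards with x hx
      rw [Set.uIoc_of_le h2] at hx
      rw [hphiL x ⟨lt_of_le_of_lt h1 hx.1, hx.2.trans h3⟩]
      ring
    rw [he, intervalIntegral.integral_add
        (((hLsub2 c d h1 (h2.trans h3) (h1.trans h2) h3).const_mul (γ ^ 2)).add
          ((hLsub c d h1 (h2.trans h3) (h1.trans h2) h3).const_mul _)) intervalIntegrable_const,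
      intervalIntegral.integral_add
        ((hLsub2 c d h1 (h2.trans h3) (h1.trans h2) h3).const_mul (γ ^ 2))
        ((hLsub c d h1 (h2.trans h3) (h1.trans h2) h3).const_mul _),
      intervalIntegral.integral_const_mul, intervalIntegral.integral_const_mul,
      intervalIntegral.integral_const]
    simp only [smul_eq_mul]
    ring
  -- values over [0,1]
  have hL01 : ∫ t in (0:ℝ)..1, L t = a := by
    rw [← intervalIntegral.integral_add_adjacent_intervals
        (hLsub 0 a le_rfl zero_le_one ha0' ha1) (hLsub a 1 ha0' ha1 zero_le_one le_rfl),
      hJ1low 0 a le_rfl ha0' le_rfl, hJ1high a 1 le_rfl ha1]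
    simp only [Fa, Real.log_zero]
    ring
  have hL01sq : ∫ t in (0:ℝ)..1, (L t) ^ 2 = 2 * a := by
    rw [← intervalIntegral.integral_add_adjacent_intervals
        (hLsub2 0 a le_rfl zero_le_one ha0' ha1) (hLsub2 a 1 ha0' ha1 zero_le_one le_rfl),
      hJ2low 0 a le_rfl ha0' le_rfl, hJ2high a 1 le_rfl ha1]
    simp only [Fa, Ga, Real.log_zero]
    ring
  -- integrability of φ and φ²
  have hφint : IntervalIntegrable φ volume 0 1 := by
    rw [intervalIntegrable_iff_integrableOn_Ioc_of_le zero_le_one]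
    have h : IntegrableOn (fun t => γ * L t + b) (Set.Ioc (0:ℝ) 1) volume := by
      rw [← intervalIntegrable_iff_integrableOn_Ioc_of_le zero_le_one]
      exact (hLi.const_mul γ).add intervalIntegrable_const
    exact h.congr_fun (fun x hx => (hphiL x hx).symm) measurableSet_Ioc
  have hφ2int : IntervalIntegrable (fun t => (φ t) ^ 2) volume 0 1 := by
    rw [intervalIntegrable_iff_integrableOn_Ioc_of_le zero_le_one]
    have h : IntegrableOn (fun t => γ ^ 2 * (L t) ^ 2 + (2 * γ * b) * L t + b ^ 2)
        (Set.Ioc (0:ℝ) 1) volume := by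
      rw [← intervalIntegrable_iff_integrableOn_Ioc_of_le zero_le_one]
      exact (((hLi2.const_mul _).add (hLi.const_mul _))).add intervalIntegrable_const
    refine h.congr_fun (fun x hx => ?_) measurableSet_Ioc
    rw [hphiL x hx]
    ring
  -- final integral values
  have hI1 : ∫ t in (0:ℝ)..1, φ t = γ * a + b := by
    rw [hintφ 0 1 le_rfl zero_le_one le_rfl, hL01]; ring
  have hI2 : ∫ t in (0:ℝ)..1, (φ t) ^ 2 = 2 * γ ^ 2 * a + 2 * γ * a * b + b ^ 2 := by
    rw [hintφ2 0 1 le_rfl zero_le_one le_rfl, hL01sq, hL01]; ring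
  refine ⟨⟨hφint, hφ2int, ?_⟩, hI1, hI2⟩
  intro c d hc hcd hd
  have hd0 : (0:ℝ) ≤ d := hc.trans hcd.le
  have hc1 : c ≤ 1 := hcd.le.trans hd
  have hh : 0 < d - c := sub_pos.mpr hcd
  have hkey : (d - c) * (∫ t in c..d, (L t) ^ 2) - (∫ t in c..d, L t) ^ 2 ≤ (d - c) ^ 2 := by
    rcases le_or_gt d a with hda | had
    · rw [hJ1low c d hc hcd.le hda, hJ2low c d hc hcd.le hda]
      simp only [Fa, Ga]
      nlinarith [mul_nonneg (mul_nonneg hc hd0) (sq_nonneg (Real.log d - Real.log c))]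
    · rcases le_or_gt a c with hac | hca
      · rw [hJ1high c d hac hcd.le, hJ2high c d hac hcd.le]
        nlinarith [sq_nonneg (d - c)]
      · have h1 : ∫ t in c..d, L t = (∫ t in c..a, L t) + ∫ t in a..d, L t :=
          (intervalIntegral.integral_add_adjacent_intervals
            (hLsub c a hc hc1 ha0' ha1) (hLsub a d ha0' ha1 hd0 hd)).symm
        have h2 : ∫ t in c..d, (L t) ^ 2
            = (∫ t in c..a, (L t) ^ 2) + ∫ t in a..d, (L t) ^ 2 :=
          (intervalIntegral.integral_add_adjacent_intervals
            (hLsub2 c a hc hc1 ha0' ha1) (hLsub2 a d ha0' ha1 hd0 hd)).symm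
        rw [h1, h2, hJ1low c a hc hca.le le_rfl, hJ1high a d le_rfl had.le,
          hJ2low c a hc hca.le le_rfl, hJ2high a d le_rfl had.le]
        simp only [Fa, Ga, add_zero]
        have hcx : 0 ≤ c * (Real.log a - Real.log c) := by
          rcases eq_or_lt_of_le hc with h0 | h0
          · rw [← h0]; simp
          · exact mul_nonneg hc (sub_nonneg.mpr (Real.log_le_log h0 hca.le))
        nlinarith [sq_nonneg (d - a), mul_nonneg hcx (sub_nonneg.mpr had.le),
          mul_nonneg (mul_nonneg hc hd0) (sq_nonneg (Real.log a - Real.log c))]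
  have hmain : avg (fun t => (φ t) ^ 2) c d - (avg φ c d) ^ 2
      = γ ^ 2 * (((d - c) * (∫ t in c..d, (L t) ^ 2) - (∫ t in c..d, L t) ^ 2) / (d - c) ^ 2) := by
    unfold avg
    rw [hintφ c d hc hcd.le hd, hintφ2 c d hc hcd.le hd]
    field_simp
    ring
  rw [hmain, sq_abs]
  calc γ ^ 2 * (((d - c) * (∫ t in c..d, (L t) ^ 2) - (∫ t in c..d, L t) ^ 2) / (d - c) ^ 2)
      ≤ γ ^ 2 * 1 := by
        apply mul_le_mul_of_nonneg_left _ (sq_nonneg γ)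
        rw [div_le_one (by positivity)]
        exact hkey
    _ = γ ^ 2 := mul_one _
end

section
/- Let ε > 0 and let x = (x₁, x₂) ∈ Ω_ε. Then there exists φ ∈ BMO_ε((0,1]) with ∫₀¹ φ = x₁, ∫₀¹ φ² = x₂, and ∫₀¹ e^φ = B⁻_ε(x). In particular the infimum of ⟨e^φ⟩_I over φ ∈ BMO_ε(I) with ⟨φ⟩_I = x₁, ⟨φ²⟩_I = x₂ is at most B⁻_ε(x). -/
open MeasureTheory Real

/-- The parabolic strip `Ω_ε = {x : x₁² ≤ x₂ ≤ x₁² + ε²}`. -/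
def Omega (ε : ℝ) : Set (ℝ × ℝ) := {x | x.1 ^ 2 ≤ x.2 ∧ x.2 ≤ x.1 ^ 2 + ε ^ 2}

/-- The upper Bellman function `B⁺_δ`. -/
noncomputable def Bp (δ : ℝ) (x : ℝ × ℝ) : ℝ :=
  (1 - Real.sqrt (δ ^ 2 + x.1 ^ 2 - x.2)) / (1 - δ) *
    Real.exp (x.1 + Real.sqrt (δ ^ 2 + x.1 ^ 2 - x.2) - δ)

/-- The lower Bellman function `B⁻_δ`. -/
noncomputable def Bm (δ : ℝ) (x : ℝ × ℝ) : ℝ :=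
  (1 + Real.sqrt (δ ^ 2 + x.1 ^ 2 - x.2)) / (1 + δ) *
    Real.exp (x.1 - Real.sqrt (δ ^ 2 + x.1 ^ 2 - x.2) + δ)

section Helpers

open Filter Set intervalIntegral

private lemma hasDerivAt_mullog {x : ℝ} (hx : x ≠ 0) :
    HasDerivAt (fun t : ℝ => t * Real.log t - t) (Real.log x) x := by
  have h := (hasDerivAt_id x).mul (Real.hasDerivAt_log hx)
  exact (h.sub (hasDerivAt_id x)).congr_deriv (by simp [hx])

private lemma hasDerivAt_mullog2 {x : ℝ} (hx : x ≠ 0) :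
    HasDerivAt (fun t : ℝ => t * (Real.log t) ^ 2 - 2 * (t * Real.log t) + 2 * t)
      ((Real.log x) ^ 2) x := by
  have h1 := (hasDerivAt_id x).mul ((Real.hasDerivAt_log hx).pow 2)
  have h2 := (hasDerivAt_id x).mul (Real.hasDerivAt_log hx)
  exact ((h1.sub (h2.const_mul 2)).add ((hasDerivAt_id x).const_mul 2)).congr_deriv (by
    simp only [id, Pi.pow_apply]
    field_simp
    ring)

private lemma abs_log_le {t : ℝ} (ht : 0 < t) (ht1 : t ≤ 1) :
    |Real.log t| ≤ 2 * t ^ (-(1/2) : ℝ) := by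
  have hu : (0:ℝ) < t ^ ((1/2):ℝ) := Real.rpow_pos_of_pos ht _
  have h1 : Real.log (t ^ ((1/2):ℝ)) = (1/2) * Real.log t := Real.log_rpow ht _
  have h2 : Real.log ((t ^ ((1/2):ℝ))⁻¹) ≤ (t ^ ((1/2):ℝ))⁻¹ - 1 :=
    Real.log_le_sub_one_of_pos (inv_pos.mpr hu)
  rw [Real.log_inv, h1] at h2
  rw [abs_of_nonpos (Real.log_nonpos ht.le ht1), Real.rpow_neg ht.le]
  linarith

private lemma sq_log_le {t : ℝ} (ht : 0 < t) (ht1 : t ≤ 1) :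
    (Real.log t) ^ 2 ≤ 9 * t ^ (-(2/3) : ℝ) := by
  have hu : (0:ℝ) < t ^ ((1/3):ℝ) := Real.rpow_pos_of_pos ht _
  have h1 : Real.log (t ^ ((1/3):ℝ)) = (1/3) * Real.log t := Real.log_rpow ht _
  have h2 : Real.log ((t ^ ((1/3):ℝ))⁻¹) ≤ (t ^ ((1/3):ℝ))⁻¹ - 1 :=
    Real.log_le_sub_one_of_pos (inv_pos.mpr hu)
  rw [Real.log_inv, h1] at h2
  have h4 : Real.log t ≤ 0 := Real.log_nonpos ht.le ht1
  have h5 : ((t ^ ((1/3):ℝ))⁻¹) ^ (2:ℕ) = t ^ (-(2/3):ℝ) := by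
    rw [← Real.rpow_neg ht.le, ← Real.rpow_natCast (t ^ (-(1/3):ℝ)) 2, ← Real.rpow_mul ht.le]
    norm_num
  rw [← h5]
  nlinarith [inv_pos.mpr hu]

private lemma intble_log {c d : ℝ} (hc : 0 ≤ c) (hcd : c ≤ d) (hd : d ≤ 1) :
    IntervalIntegrable Real.log volume c d := by
  have hg : IntervalIntegrable (fun t : ℝ => 2 * t ^ (-(1/2) : ℝ)) volume c d :=
    (intervalIntegral.intervalIntegrable_rpow' (by norm_num)).const_mul 2
  refine hg.mono_fun Real.measurable_log.aestronglyMeasurable ?_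
  filter_upwards [MeasureTheory.ae_restrict_mem measurableSet_uIoc] with t ht
  rw [Set.uIoc_of_le hcd] at ht
  have ht0 : 0 < t := lt_of_le_of_lt hc ht.1
  rw [Real.norm_eq_abs, Real.norm_eq_abs]
  exact (abs_log_le ht0 (ht.2.trans hd)).trans (le_abs_self _)

private lemma intble_logsq {c d : ℝ} (hc : 0 ≤ c) (hcd : c ≤ d) (hd : d ≤ 1) :
    IntervalIntegrable (fun t => (Real.log t) ^ 2) volume c d := by
  have hg : IntervalIntegrable (fun t : ℝ => 9 * t ^ (-(2/3) : ℝ)) volume c d :=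
    (intervalIntegral.intervalIntegrable_rpow' (by norm_num)).const_mul 9
  refine hg.mono_fun (Real.measurable_log.pow_const 2).aestronglyMeasurable ?_
  filter_upwards [MeasureTheory.ae_restrict_mem measurableSet_uIoc] with t ht
  rw [Set.uIoc_of_le hcd] at ht
  have ht0 : 0 < t := lt_of_le_of_lt hc ht.1
  rw [Real.norm_eq_abs, Real.norm_eq_abs, abs_of_nonneg (sq_nonneg _)]
  exact (sq_log_le ht0 (ht.2.trans hd)).trans (le_abs_self _)

private lemma tendsto_mul_log_zero :
    Tendsto (fun t : ℝ => t * Real.log t) (nhdsWithin 0 (Set.Ioi 0)) (nhds 0) := by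
  have h1 := tendsto_log_mul_rpow_nhdsGT_zero (r := 1) one_pos
  refine h1.congr' ?_
  filter_upwards [self_mem_nhdsWithin] with t ht
  rw [Real.rpow_one]; ring

private lemma tendsto_mul_logsq_zero :
    Tendsto (fun t : ℝ => t * (Real.log t) ^ 2) (nhdsWithin 0 (Set.Ioi 0)) (nhds 0) := by
  have h1 := tendsto_log_mul_rpow_nhdsGT_zero (r := 1/2) (by norm_num)
  have h2 : Tendsto (fun t : ℝ => (Real.log t * t ^ ((1/2):ℝ)) ^ 2) (nhdsWithin 0 (Set.Ioi 0))
      (nhds 0) := by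
    have := h1.pow 2
    simpa using this
  refine h2.congr' ?_
  filter_upwards [self_mem_nhdsWithin] with t (ht : t ∈ Set.Ioi 0)
  have : (t ^ ((1/2):ℝ)) ^ (2:ℕ) = t := by
    rw [← Real.rpow_natCast (t ^ ((1/2):ℝ)) 2, ← Real.rpow_mul (le_of_lt ht)]
    norm_num
  nlinarith [this]

private lemma integral_log_val {c d : ℝ} (hc : 0 ≤ c) (hcd : c ≤ d) (hd : d ≤ 1) :
    ∫ t in c..d, Real.log t = d * Real.log d - c * Real.log c - (d - c) := by
  rcases eq_or_lt_of_le hcd with rfl | hlt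
  · simp
  rcases eq_or_lt_of_le hc with rfl | hc0
  · have hd0 : (0:ℝ) < d := hlt
    have hid : Tendsto (fun t : ℝ => t) (nhdsWithin 0 (Set.Ioi 0)) (nhds 0) :=
      (continuous_id.tendsto (0:ℝ)).mono_left nhdsWithin_le_nhds
    have ha : Tendsto (fun t : ℝ => t * Real.log t - t) (nhdsWithin 0 (Set.Ioi 0))
        (nhds 0) := by simpa using tendsto_mul_log_zero.sub hid
    have hcont : ContinuousAt (fun t : ℝ => t * Real.log t - t) d :=
      (continuousAt_id.mul (Real.continuousAt_log hd0.ne')).sub continuousAt_id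
    have hb : Tendsto (fun t : ℝ => t * Real.log t - t) (nhdsWithin d (Set.Iio d))
        (nhds (d * Real.log d - d)) := hcont.tendsto.mono_left nhdsWithin_le_nhds
    have key := intervalIntegral.integral_eq_sub_of_hasDerivAt_of_tendsto
      (f := fun t => t * Real.log t - t) (f' := Real.log) hd0
      (fun x hx => hasDerivAt_mullog hx.1.ne') (intble_log le_rfl hcd hd) ha hb
    rw [key, Real.log_zero]; ring
  · have key := intervalIntegral.integral_eq_sub_of_hasDerivAt
      (f := fun t => t * Real.log t - t) (f' := Real.log)
      (fun x hx => by
        rw [Set.uIcc_of_le hcd] at hx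
        exact hasDerivAt_mullog (ne_of_gt (lt_of_lt_of_le hc0 hx.1)))
      (intble_log hc hcd hd)
    rw [key]; ring

private lemma integral_logsq_val {c d : ℝ} (hc : 0 ≤ c) (hcd : c ≤ d) (hd : d ≤ 1) :
    ∫ t in c..d, (Real.log t) ^ 2 =
      (d * (Real.log d) ^ 2 - 2 * (d * Real.log d) + 2 * d) -
      (c * (Real.log c) ^ 2 - 2 * (c * Real.log c) + 2 * c) := by
  rcases eq_or_lt_of_le hcd with rfl | hlt
  · simp
  rcases eq_or_lt_of_le hc with rfl | hc0
  · have hd0 : (0:ℝ) < d := hlt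
    have hid : Tendsto (fun t : ℝ => t) (nhdsWithin 0 (Set.Ioi 0)) (nhds 0) :=
      (continuous_id.tendsto (0:ℝ)).mono_left nhdsWithin_le_nhds
    have ha : Tendsto (fun t : ℝ => t * (Real.log t) ^ 2 - 2 * (t * Real.log t) + 2 * t)
        (nhdsWithin 0 (Set.Ioi 0)) (nhds 0) := by
      have := (tendsto_mul_logsq_zero.sub (tendsto_mul_log_zero.const_mul 2)).add
        (hid.const_mul 2)
      simpa [mul_comm] using this
    have hcont : ContinuousAt
        (fun t : ℝ => t * (Real.log t) ^ 2 - 2 * (t * Real.log t) + 2 * t) d :=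
      ((continuousAt_id.mul ((Real.continuousAt_log hd0.ne').pow 2)).sub
        ((continuousAt_id.mul (Real.continuousAt_log hd0.ne')).const_mul 2)).add
        (continuousAt_id.const_mul 2)
    have hb := hcont.tendsto.mono_left (nhdsWithin_le_nhds (s := Set.Iio d))
    have key := intervalIntegral.integral_eq_sub_of_hasDerivAt_of_tendsto
      (f := fun t => t * (Real.log t) ^ 2 - 2 * (t * Real.log t) + 2 * t)
      (f' := fun t => (Real.log t) ^ 2) hd0
      (fun x hx => hasDerivAt_mullog2 hx.1.ne') (intble_logsq le_rfl hcd hd) ha hb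
    rw [key, Real.log_zero]; ring
  · have key := intervalIntegral.integral_eq_sub_of_hasDerivAt
      (f := fun t => t * (Real.log t) ^ 2 - 2 * (t * Real.log t) + 2 * t)
      (f' := fun t => (Real.log t) ^ 2)
      (fun x hx => by
        rw [Set.uIcc_of_le hcd] at hx
        exact hasDerivAt_mullog2 (ne_of_gt (lt_of_lt_of_le hc0 hx.1)))
      (intble_logsq hc hcd hd)
    rw [key]

private lemma key1 {e c d lc ld C : ℝ} (he : 0 ≤ e) (hc : 0 ≤ c) (hd : 0 ≤ d) :
    (C ^ 2 * (d - c) + 2 * C * e * (d * ld - c * lc - (d - c)) +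
        e ^ 2 * ((d * ld ^ 2 - 2 * (d * ld) + 2 * d) - (c * lc ^ 2 - 2 * (c * lc) + 2 * c))) *
        (d - c) - (C * (d - c) + e * (d * ld - c * lc - (d - c))) ^ 2 ≤ e ^ 2 * (d - c) ^ 2 := by
  nlinarith [mul_nonneg (mul_nonneg (mul_nonneg he he) (mul_nonneg hc hd)) (sq_nonneg (ld - lc))]

private lemma key2 {e c a d lc la C D : ℝ} (he : 0 ≤ e) (hc : 0 ≤ c) (ha : 0 ≤ a) (had : a ≤ d)
    (hcu : 0 ≤ c * (la - lc)) (hD : D = C + e * la) :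
    (C ^ 2 * (a - c) + 2 * C * e * (a * la - c * lc - (a - c)) +
        e ^ 2 * ((a * la ^ 2 - 2 * (a * la) + 2 * a) - (c * lc ^ 2 - 2 * (c * lc) + 2 * c)) +
        D ^ 2 * (d - a)) * (d - c) -
      (C * (a - c) + e * (a * la - c * lc - (a - c)) + D * (d - a)) ^ 2 ≤
      e ^ 2 * (d - c) ^ 2 := by
  subst hD
  nlinarith [mul_nonneg (mul_nonneg he he)
      (mul_nonneg (mul_nonneg hc ha) (sq_nonneg (la - lc))),
    mul_nonneg (mul_nonneg he he) (mul_nonneg (mul_nonneg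
      (by linarith : (0:ℝ) ≤ d - a) hc) (sq_nonneg (la - lc))),
    mul_nonneg (mul_nonneg he he) (mul_nonneg (by linarith : (0:ℝ) ≤ d - a) hcu),
    mul_nonneg (mul_nonneg he he) (sq_nonneg (d - a))]

private lemma osc_le {X Y h e : ℝ} (hh : 0 < h) (key : X * h - Y ^ 2 ≤ e * h ^ 2) :
    X / h - (Y / h) ^ 2 ≤ e := by
  rw [div_pow, div_sub_div _ _ hh.ne' (by positivity), div_le_iff₀ (by positivity)]
  nlinarith [mul_le_mul_of_nonneg_right key hh.le]

end Helpers

set_option maxHeartbeats 2000000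

/-- For every point of `Ω_ε` (with `ε > 0`) there is an extremal function in
`BMO_ε((0,1])` attaining the value `B⁻_ε(x)`; in particular the Bellman
infimum is at most `B⁻_ε(x)`. -/
theorem stmt7 (ε : ℝ) (hε0 : 0 < ε) (x : ℝ × ℝ) (hx : x ∈ Omega ε) :
    ∃ φ : ℝ → ℝ, BMOe ε 0 1 φ ∧
      (∫ t in (0:ℝ)..1, φ t) = x.1 ∧
      (∫ t in (0:ℝ)..1, (φ t) ^ 2) = x.2 ∧
      IntervalIntegrable (fun t => Real.exp (φ t)) volume 0 1 ∧
      (∫ t in (0:ℝ)..1, Real.exp (φ t)) = Bm ε x := by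
  obtain ⟨hx1, hx2⟩ := hx
  set s := Real.sqrt (ε ^ 2 + x.1 ^ 2 - x.2) with hsdef
  have hs2 : s ^ 2 = ε ^ 2 + x.1 ^ 2 - x.2 := Real.sq_sqrt (by linarith)
  have hs0 : 0 ≤ s := Real.sqrt_nonneg _
  have hsε : s ≤ ε := by nlinarith
  clear_value s
  rcases eq_or_lt_of_le hsε with hse | hse
  · -- s = ε, the constant function works
    have hx21 : x.2 = x.1 ^ 2 := by nlinarith
    refine ⟨fun _ => x.1, ⟨intervalIntegrable_const, intervalIntegrable_const, ?_⟩, ?_, ?_,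
      intervalIntegrable_const, ?_⟩
    · intro c d hc hcd hd
      have hh : 0 < d - c := by linarith
      simp only [avg, intervalIntegral.integral_const, smul_eq_mul]
      refine osc_le hh ?_
      nlinarith [mul_nonneg (sq_nonneg ε) (sq_nonneg (d - c))]
    · simp
    · rw [hx21]; simp
    · rw [Bm, ← hsdef, ← hse]
      simp only [intervalIntegral.integral_const, smul_eq_mul]
      rw [div_self (by linarith : 1 + s ≠ 0), show x.1 - s + s = x.1 by ring]
      norm_num
  · -- s < ε : logarithmic extremal function
    set a := 1 - s / ε with ha
    have hsa : ε * a = ε - s := by rw [ha]; field_simp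
    have ha0 : 0 < a := by rw [ha, sub_pos]; exact (div_lt_one hε0).mpr hse
    have ha1 : a ≤ 1 := by
      have := div_nonneg hs0 hε0.le
      rw [ha]; linarith
    clear_value a
    set φ : ℝ → ℝ := fun t => (x.1 + ε - s - ε * Real.log a) + ε * Real.log (min t a) with hφ
    clear_value φ
    have hφ_left : ∀ t : ℝ, t ≤ a →
        φ t = (x.1 + ε - s - ε * Real.log a) + ε * Real.log t := by
      intro t ht; simp only [hφ]; rw [min_eq_left ht]
    have hφ_right : ∀ t : ℝ, a ≤ t → φ t = x.1 + ε - s := by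
      intro t ht; simp only [hφ]; rw [min_eq_right ht]; ring
    have hmeas : Measurable φ := by
      rw [hφ]
      exact measurable_const.add
        ((Real.measurable_log.comp (measurable_id.min measurable_const)).const_mul ε)
    have habs : ∀ t : ℝ, |φ t| ≤
        (|x.1 + ε - s - ε * Real.log a| + ε * |Real.log a|) + ε * |Real.log t| := by
      intro t
      have h1 : |φ t| ≤ |x.1 + ε - s - ε * Real.log a| + ε * |Real.log (min t a)| := by
        simp only [hφ]
        calc |(x.1 + ε - s - ε * Real.log a) + ε * Real.log (min t a)|
            ≤ |x.1 + ε - s - ε * Real.log a| + |ε * Real.log (min t a)| := abs_add_le _ _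
          _ = _ := by rw [abs_mul, abs_of_pos hε0]
      have h2 : |Real.log (min t a)| ≤ |Real.log t| + |Real.log a| := by
        rcases min_cases t a with ⟨h, _⟩ | ⟨h, _⟩
        · rw [h]; linarith [abs_nonneg (Real.log a)]
        · rw [h]; linarith [abs_nonneg (Real.log t)]
      nlinarith [mul_le_mul_of_nonneg_left h2 hε0.le]
    have hφint : ∀ u v : ℝ, 0 ≤ u → u ≤ v → v ≤ 1 → IntervalIntegrable φ volume u v := by
      intro u v hu huv hv
      have hg : IntervalIntegrable
          (fun t : ℝ => (|x.1 + ε - s - ε * Real.log a| + ε * |Real.log a|) +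
            ε * (2 * t ^ (-(1/2) : ℝ))) volume u v :=
        intervalIntegrable_const.add
          (((intervalIntegral.intervalIntegrable_rpow' (by norm_num)).const_mul 2).const_mul ε)
      refine hg.mono_fun hmeas.aestronglyMeasurable ?_
      filter_upwards [MeasureTheory.ae_restrict_mem measurableSet_uIoc] with t ht
      rw [Set.uIoc_of_le huv] at ht
      have ht0 : 0 < t := lt_of_le_of_lt hu ht.1
      rw [Real.norm_eq_abs, Real.norm_eq_abs]
      refine le_trans ?_ (le_abs_self _)
      have h3 := abs_log_le ht0 (ht.2.trans hv)
      nlinarith [habs t, mul_le_mul_of_nonneg_left h3 hε0.le]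
    have hφ2int : ∀ u v : ℝ, 0 ≤ u → u ≤ v → v ≤ 1 →
        IntervalIntegrable (fun t => (φ t) ^ 2) volume u v := by
      intro u v hu huv hv
      have hg : IntervalIntegrable
          (fun t : ℝ => 2 * (|x.1 + ε - s - ε * Real.log a| + ε * |Real.log a|) ^ 2 +
            (18 * ε ^ 2) * t ^ (-(2/3) : ℝ)) volume u v :=
        intervalIntegrable_const.add
          ((intervalIntegral.intervalIntegrable_rpow' (by norm_num)).const_mul _)
      refine hg.mono_fun (hmeas.pow_const 2).aestronglyMeasurable ?_
      filter_upwards [MeasureTheory.ae_restrict_mem measurableSet_uIoc] with t ht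
      rw [Set.uIoc_of_le huv] at ht
      have ht0 : 0 < t := lt_of_le_of_lt hu ht.1
      rw [Real.norm_eq_abs, Real.norm_eq_abs, abs_of_nonneg (sq_nonneg _)]
      refine le_trans ?_ (le_abs_self _)
      have h3 := sq_log_le ht0 (ht.2.trans hv)
      have h4 := habs t
      calc (φ t) ^ 2 = |φ t| ^ 2 := (sq_abs _).symm
        _ ≤ ((|x.1 + ε - s - ε * Real.log a| + ε * |Real.log a|) + ε * |Real.log t|) ^ 2 :=
            pow_le_pow_left₀ (abs_nonneg _) h4 2
        _ ≤ 2 * (|x.1 + ε - s - ε * Real.log a| + ε * |Real.log a|) ^ 2 +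
            2 * ε ^ 2 * (Real.log t) ^ 2 := by
            nlinarith [sq_nonneg ((|x.1 + ε - s - ε * Real.log a| + ε * |Real.log a|) -
              ε * |Real.log t|), sq_abs (Real.log t)]
        _ ≤ 2 * (|x.1 + ε - s - ε * Real.log a| + ε * |Real.log a|) ^ 2 +
            18 * ε ^ 2 * t ^ (-(2/3) : ℝ) := by
            nlinarith [mul_le_mul_of_nonneg_left h3 (sq_nonneg ε)]
    have hexpint : ∀ u v : ℝ, 0 ≤ u → u ≤ v → v ≤ 1 →
        IntervalIntegrable (fun t => Real.exp (φ t)) volume u v := by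
      intro u v hu huv hv
      refine (intervalIntegrable_const
          (c := Real.exp (x.1 + ε - s - ε * Real.log a))).mono_fun
        (Real.measurable_exp.comp hmeas).aestronglyMeasurable ?_
      filter_upwards [MeasureTheory.ae_restrict_mem measurableSet_uIoc] with t ht
      rw [Set.uIoc_of_le huv] at ht
      have ht0 : 0 < t := lt_of_le_of_lt hu ht.1
      rw [Real.norm_eq_abs, Real.norm_eq_abs, abs_of_pos (Real.exp_pos _)]
      refine le_trans ?_ (le_abs_self _)
      refine Real.exp_le_exp.mpr ?_
      simp only [hφ]
      have hm0 : 0 < min t a := lt_min ht0 ha0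
      have hm1 : min t a ≤ 1 := le_trans (min_le_right _ _) ha1
      have h5 : 0 ≤ ε * (-Real.log (min t a)) :=
        mul_nonneg hε0.le (neg_nonneg.mpr (Real.log_nonpos hm0.le hm1))
      linarith
    -- integral formulas on subintervals of [0, a]
    have Iφval : ∀ u v : ℝ, 0 ≤ u → u ≤ v → v ≤ a →
        (∫ t in u..v, φ t) = (x.1 + ε - s - ε * Real.log a) * (v - u) +
          ε * (v * Real.log v - u * Real.log u - (v - u)) := by
      intro u v hu huv hva
      have hv1 : v ≤ 1 := hva.trans ha1
      have heq : Set.EqOn φ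
          (fun t => (x.1 + ε - s - ε * Real.log a) + ε * Real.log t) (Set.uIcc u v) := by
        intro t ht
        rw [Set.uIcc_of_le huv] at ht
        exact hφ_left t (ht.2.trans hva)
      rw [intervalIntegral.integral_congr heq,
        intervalIntegral.integral_add intervalIntegrable_const
          ((intble_log hu huv hv1).const_mul ε),
        intervalIntegral.integral_const, intervalIntegral.integral_const_mul,
        integral_log_val hu huv hv1, smul_eq_mul]
      ring
    have Iφ2val : ∀ u v : ℝ, 0 ≤ u → u ≤ v → v ≤ a →
        (∫ t in u..v, (φ t) ^ 2) = (x.1 + ε - s - ε * Real.log a) ^ 2 * (v - u) +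
          2 * (x.1 + ε - s - ε * Real.log a) * ε *
            (v * Real.log v - u * Real.log u - (v - u)) +
          ε ^ 2 * ((v * (Real.log v) ^ 2 - 2 * (v * Real.log v) + 2 * v) -
            (u * (Real.log u) ^ 2 - 2 * (u * Real.log u) + 2 * u)) := by
      intro u v hu huv hva
      have hv1 : v ≤ 1 := hva.trans ha1
      have heq : Set.EqOn (fun t => (φ t) ^ 2)
          (fun t => ((x.1 + ε - s - ε * Real.log a) ^ 2 +
            (2 * (x.1 + ε - s - ε * Real.log a) * ε) * Real.log t) +
            ε ^ 2 * (Real.log t) ^ 2) (Set.uIcc u v) := by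
        intro t ht
        rw [Set.uIcc_of_le huv] at ht
        simp only
        rw [hφ_left t (ht.2.trans hva)]; ring
      rw [intervalIntegral.integral_congr heq,
        intervalIntegral.integral_add
          (intervalIntegrable_const.add ((intble_log hu huv hv1).const_mul _))
          ((intble_logsq hu huv hv1).const_mul _),
        intervalIntegral.integral_add intervalIntegrable_const
          ((intble_log hu huv hv1).const_mul _),
        intervalIntegral.integral_const, intervalIntegral.integral_const_mul,
        intervalIntegral.integral_const_mul, integral_log_val hu huv hv1,
        integral_logsq_val hu huv hv1, smul_eq_mul]
      ring
    -- integral formulas on subintervals of [a, 1]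
    have Jφval : ∀ u v : ℝ, a ≤ u → a ≤ v →
        (∫ t in u..v, φ t) = (x.1 + ε - s) * (v - u) := by
      intro u v hu hv
      have heq : Set.EqOn φ (fun _ => x.1 + ε - s) (Set.uIcc u v) := fun t ht =>
        hφ_right t (le_trans (le_inf hu hv) ht.1)
      rw [intervalIntegral.integral_congr heq, intervalIntegral.integral_const, smul_eq_mul]
      ring
    have Jφ2val : ∀ u v : ℝ, a ≤ u → a ≤ v →
        (∫ t in u..v, (φ t) ^ 2) = (x.1 + ε - s) ^ 2 * (v - u) := by
      intro u v hu hv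
      have heq : Set.EqOn (fun t => (φ t) ^ 2) (fun _ => (x.1 + ε - s) ^ 2)
          (Set.uIcc u v) := by
        intro t ht
        simp only
        rw [hφ_right t (le_trans (le_inf hu hv) ht.1)]
      rw [intervalIntegral.integral_congr heq, intervalIntegral.integral_const, smul_eq_mul]
      ring
    have Jexpval : ∀ u v : ℝ, a ≤ u → a ≤ v →
        (∫ t in u..v, Real.exp (φ t)) = Real.exp (x.1 + ε - s) * (v - u) := by
      intro u v hu hv
      have heq : Set.EqOn (fun t => Real.exp (φ t)) (fun _ => Real.exp (x.1 + ε - s))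
          (Set.uIcc u v) := by
        intro t ht
        simp only
        rw [hφ_right t (le_trans (le_inf hu hv) ht.1)]
      rw [intervalIntegral.integral_congr heq, intervalIntegral.integral_const, smul_eq_mul]
      ring
    have Iexpval : (∫ t in (0:ℝ)..a, Real.exp (φ t)) =
        Real.exp (x.1 + ε - s) * (a / (ε + 1)) := by
      rw [intervalIntegral.integral_of_le ha0.le,
        MeasureTheory.setIntegral_congr_fun (g := fun t : ℝ =>
          Real.exp (x.1 + ε - s - ε * Real.log a) * t ^ (ε:ℝ)) measurableSet_Ioc
          (fun t ht => by
            simp only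
            rw [hφ_left t ht.2, Real.exp_add, Real.rpow_def_of_pos ht.1,
              mul_comm (Real.log t) ε]),
        ← intervalIntegral.integral_of_le ha0.le, intervalIntegral.integral_const_mul,
        integral_rpow (Or.inl (by linarith : (-1:ℝ) < ε)),
        Real.zero_rpow (by linarith : ε + 1 ≠ 0), Real.rpow_add ha0, Real.rpow_one, sub_zero]
      have key : Real.exp (x.1 + ε - s - ε * Real.log a) * a ^ (ε:ℝ) =
          Real.exp (x.1 + ε - s) := by
        rw [Real.rpow_def_of_pos ha0, ← Real.exp_add]
        congr 1; ring
      calc Real.exp (x.1 + ε - s - ε * Real.log a) * (a ^ (ε:ℝ) * a / (ε + 1))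
          = (Real.exp (x.1 + ε - s - ε * Real.log a) * a ^ (ε:ℝ)) * (a / (ε + 1)) := by ring
        _ = _ := by rw [key]
    -- total integrals
    have hY : (∫ t in (0:ℝ)..1, φ t) = x.1 := by
      rw [← intervalIntegral.integral_add_adjacent_intervals
          (hφint 0 a le_rfl ha0.le ha1) (hφint a 1 ha0.le ha1 le_rfl),
        Iφval 0 a le_rfl ha0.le le_rfl, Jφval a 1 le_rfl ha1, Real.log_zero]
      linear_combination -hsa
    have hX : (∫ t in (0:ℝ)..1, (φ t) ^ 2) = x.2 := by
      rw [← intervalIntegral.integral_add_adjacent_intervals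
          (hφ2int 0 a le_rfl ha0.le ha1) (hφ2int a 1 ha0.le ha1 le_rfl),
        Iφ2val 0 a le_rfl ha0.le le_rfl, Jφ2val a 1 le_rfl ha1, Real.log_zero]
      linear_combination (2 * ε - 2 * (x.1 + ε - s)) * hsa - hs2
    have hE : (∫ t in (0:ℝ)..1, Real.exp (φ t)) = Bm ε x := by
      rw [← intervalIntegral.integral_add_adjacent_intervals
          (hexpint 0 a le_rfl ha0.le ha1) (hexpint a 1 ha0.le ha1 le_rfl),
        Iexpval, Jexpval a 1 le_rfl ha1, Bm, ← hsdef,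
        show x.1 - s + ε = x.1 + ε - s by ring]
      have hfrac : a / (ε + 1) + (1 - a) = (1 + s) / (1 + ε) := by
        rw [div_add' _ _ _ (by linarith : ε + 1 ≠ 0)]
        rw [div_eq_div_iff (by linarith : ε + 1 ≠ 0) (by linarith : 1 + ε ≠ 0)]
        linear_combination (-1 - ε) * hsa
      calc Real.exp (x.1 + ε - s) * (a / (ε + 1)) + Real.exp (x.1 + ε - s) * (1 - a)
          = Real.exp (x.1 + ε - s) * (a / (ε + 1) + (1 - a)) := by ring
        _ = (1 + s) / (1 + ε) * Real.exp (x.1 + ε - s) := by rw [hfrac]; ring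
    refine ⟨φ, ⟨hφint 0 1 le_rfl zero_le_one le_rfl, hφ2int 0 1 le_rfl zero_le_one le_rfl, ?_⟩,
      hY, hX, hexpint 0 1 le_rfl zero_le_one le_rfl, hE⟩
    intro c d hc hcd hd
    have hh : 0 < d - c := by linarith
    rcases le_or_gt d a with hda | had
    · -- J ⊆ [0, a]
      simp only [avg]
      rw [Iφ2val c d hc hcd.le hda, Iφval c d hc hcd.le hda]
      refine osc_le hh ?_
      exact key1 hε0.le hc (hc.trans hcd.le)
    · rcases le_or_gt a c with hac | hca
      · -- J ⊆ [a, 1]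
        simp only [avg]
        rw [Jφ2val c d hac (hac.trans hcd.le), Jφval c d hac (hac.trans hcd.le)]
        refine osc_le hh ?_
        nlinarith [mul_nonneg (mul_nonneg hε0.le hε0.le) (sq_nonneg (d - c))]
      · -- c < a < d
        have hcu : 0 ≤ c * (Real.log a - Real.log c) := by
          rcases eq_or_lt_of_le hc with rfl | hc0
          · simp
          · have := Real.log_le_log hc0 hca.le
            nlinarith
        simp only [avg]
        rw [← intervalIntegral.integral_add_adjacent_intervals
            (hφ2int c a hc hca.le ha1) (hφ2int a d ha0.le had.le hd),
          ← intervalIntegral.integral_add_adjacent_intervals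
            (hφint c a hc hca.le ha1) (hφint a d ha0.le had.le hd),
          Iφ2val c a hc hca.le le_rfl, Iφval c a hc hca.le le_rfl,
          Jφ2val a d le_rfl had.le, Jφval a d le_rfl had.le]
        refine osc_le hh ?_
        exact key2 hε0.le hc ha0.le had.le hcu (by ring)
end

section
/- Let ε > 0 and let I be a nondegenerate bounded interval. Then for every φ ∈ BMO_ε(I), the average ⟨e^φ⟩_I (understood as the lower Lebesgue integral divided by |I|, possibly +∞) satisfies ⟨e^φ⟩_I ≥ B⁻_ε(⟨φ⟩_I, ⟨φ²⟩_I). -/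
set_option maxHeartbeats 1000000


open MeasureTheory Real

namespace SV

open Set intervalIntegral
open scoped ENNReal NNReal

/-! ### Convexity of `Bm` along segments -/

lemma bm_convex_aux {δ : ℝ} (hδ : 0 < δ) (u v : ℝ × ℝ)
    (hW : ∀ θ : ℝ, θ ∈ Set.Ioo (0:ℝ) 1 →
      0 < δ^2 + (u.1 + θ*(v.1-u.1))^2 - (u.2 + θ*(v.2-u.2))) :
    ConvexOn ℝ (Set.Icc (0:ℝ) 1)
      (fun θ => Bm δ (u.1 + θ*(v.1-u.1), u.2 + θ*(v.2-u.2))) := by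
  set q : ℝ := v.1 - u.1 with hq
  set r : ℝ := v.2 - u.2 with hr
  set X : ℝ → ℝ := fun θ => u.1 + θ*q with hX
  set W : ℝ → ℝ := fun θ => δ^2 + (X θ)^2 - (u.2 + θ*r) with hWdef
  set s : ℝ → ℝ := fun θ => Real.sqrt (W θ) with hs
  set G : ℝ → ℝ := fun θ => (1 + s θ) / (1+δ) * Real.exp (X θ - s θ + δ) with hG
  set W' : ℝ → ℝ := fun θ => 2*q*(X θ) - r with hW'
  set G1 : ℝ → ℝ := fun θ =>
    Real.exp (X θ - s θ + δ) / (1+δ) * (q*(1 + s θ) - W' θ/2) with hG1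
  have h1δ : (0:ℝ) < 1 + δ := by linarith
  -- basic hasDerivAt facts on the open interval
  have hXd : ∀ θ : ℝ, HasDerivAt X q θ := by
    intro θ
    simpa [hX] using ((hasDerivAt_id θ).mul_const q).const_add u.1
  have hWd : ∀ θ : ℝ, HasDerivAt W (W' θ) θ := by
    intro θ
    have h2 : HasDerivAt (fun t => (X t)^2) (2 * (X θ)^(2-1) * q) θ := (hXd θ).pow 2
    have h3 : HasDerivAt (fun t => u.2 + t*r) r θ := by
      simpa using ((hasDerivAt_id θ).mul_const r).const_add u.2
    have := (h2.const_add (δ^2)).sub h3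
    refine this.congr_deriv (Eq.symm ?_)
    simp [hW']
    ring
  have hsd : ∀ θ ∈ Set.Ioo (0:ℝ) 1, HasDerivAt s (W' θ / (2 * s θ)) θ := by
    intro θ hθ
    have hpos := hW θ hθ
    have hWθ : W θ ≠ 0 := by simp only [hWdef, hX]; nlinarith
    have h := (Real.hasDerivAt_sqrt hWθ).comp θ (hWd θ)
    have : HasDerivAt (fun t => Real.sqrt (W t)) (1 / (2 * Real.sqrt (W θ)) * W' θ) θ := h
    convert this using 1
    field_simp
    rfl
  have hGd : ∀ θ ∈ Set.Ioo (0:ℝ) 1, HasDerivAt G (G1 θ) θ := by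
    intro θ hθ
    have h1 : HasDerivAt (fun t => 1 + s t) (W' θ / (2 * s θ)) θ :=
      (hsd θ hθ).const_add 1
    have h2 : HasDerivAt (fun t => X t - s t + δ) (q - W' θ / (2 * s θ)) θ :=
      ((hXd θ).sub (hsd θ hθ)).add_const δ
    have h3 : HasDerivAt (fun t => Real.exp (X t - s t + δ))
        (Real.exp (X θ - s θ + δ) * (q - W' θ / (2 * s θ))) θ := by
      exact h2.exp
    have h4 := ((h1.div_const (1+δ)).mul h3)
    have hspos : 0 < s θ := Real.sqrt_pos.mpr (hW θ hθ)
    refine h4.congr_deriv (Eq.symm ?_)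
    simp only [hG1]
    field_simp
    ring
  set E : ℝ → ℝ := fun θ => Real.exp (X θ - s θ + δ)/(1+δ) *
      ((q - W' θ/(2*s θ))*(q*(1+s θ) - W' θ/2) + (q*(W' θ/(2*s θ)) - q^2)) with hE
  have hG1d : ∀ θ ∈ Set.Ioo (0:ℝ) 1, HasDerivAt G1 (E θ) θ := by
    intro θ hθ
    have h2 : HasDerivAt (fun t => X t - s t + δ) (q - W' θ / (2 * s θ)) θ :=
      ((hXd θ).sub (hsd θ hθ)).add_const δ
    have h3 : HasDerivAt (fun t => Real.exp (X t - s t + δ))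
        (Real.exp (X θ - s θ + δ) * (q - W' θ/(2* s θ))) θ := by
      exact h2.exp
    have h5 : HasDerivAt (fun t => q*(1+ s t) - W' t/2) (q*(W' θ/(2*s θ)) - q^2) θ := by
      have hq1 : HasDerivAt (fun t => q*(1+s t)) (q * (W' θ/(2*s θ))) θ :=
        ((hsd θ hθ).const_add 1).const_mul q
      have hq2 : HasDerivAt (fun t => W' t/2) (q^2) θ := by
        have h' : HasDerivAt W' (2*q*q) θ := ((hXd θ).const_mul (2*q)).sub_const r
        have := h'.div_const 2
        refine this.congr_deriv (Eq.symm ?_)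
        ring
      exact hq1.sub hq2
    have h6 := (h3.div_const (1+δ)).mul h5
    refine h6.congr_deriv (Eq.symm ?_)
    simp only [hE]; ring
  have key : ∀ θ ∈ Set.Ioo (0:ℝ) 1, 0 ≤ E θ := by
    intro θ hθ
    have hspos : 0 < s θ := Real.sqrt_pos.mpr (hW θ hθ)
    have hEe : E θ = Real.exp (X θ - s θ + δ)/(1+δ) * ((2*q*s θ - W' θ)^2/(4*s θ)) := by
      simp only [hE]; field_simp; ring
    rw [hEe]; positivity
  have hsc : Continuous s := by
    apply Real.continuous_sqrt.comp
    simp only [hWdef, hX]; fun_prop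
  have hGc : Continuous G := by
    apply Continuous.mul
    · exact (continuous_const.add hsc).div_const (1+δ)
    · apply Real.continuous_exp.comp
      simp only [hX]
      exact ((continuous_const.add (continuous_id.mul continuous_const)).sub hsc).add
        continuous_const
  apply convexOn_of_deriv2_nonneg (convex_Icc 0 1) hGc.continuousOn
  · rw [interior_Icc]
    intro θ hθ
    exact ((hGd θ hθ).differentiableAt).differentiableWithinAt
  · rw [interior_Icc]
    intro θ hθ
    have hev : deriv G =ᶠ[nhds θ] G1 :=
      Filter.eventuallyEq_of_mem (Ioo_mem_nhds hθ.1 hθ.2) (fun y hy => (hGd y hy).deriv)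
    exact (((hG1d θ hθ).differentiableAt).congr_of_eventuallyEq hev).differentiableWithinAt
  · rw [interior_Icc]
    intro θ hθ
    have hev : deriv G =ᶠ[nhds θ] G1 :=
      Filter.eventuallyEq_of_mem (Ioo_mem_nhds hθ.1 hθ.2) (fun y hy => (hGd y hy).deriv)
    have : deriv (deriv G) θ = E θ := by
      rw [hev.deriv_eq]
      exact (hG1d θ hθ).deriv
    show 0 ≤ deriv (deriv G) θ; rw [this]; exact key θ hθ


/-! ### Elementary facts about `Bm` -/

lemma expfac_anti {s0 s1 : ℝ} (h0 : 0 ≤ s0) (h01 : s0 ≤ s1) :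
    (1+s1)*Real.exp (-s1) ≤ (1+s0)*Real.exp (-s0) := by
  have h := Real.add_one_le_exp (s1 - s0)
  have e0 : Real.exp (-s0) = Real.exp (-s1) * Real.exp (s1 - s0) := by
    rw [← Real.exp_add]; ring_nf
  rw [e0]
  have h1 : (0:ℝ) < Real.exp (-s1) := Real.exp_pos _
  have hA : (1+s1) ≤ (1+s0)*(s1-s0+1) := by nlinarith [mul_nonneg h0 (sub_nonneg.mpr h01)]
  nlinarith [mul_le_mul_of_nonneg_right hA h1.le,
    mul_le_mul_of_nonneg_right (mul_le_mul_of_nonneg_left h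
      (by linarith : (0:ℝ) ≤ 1+s0)) h1.le]

lemma Bm_nonneg {δ : ℝ} (hδ : 0 < δ) (x : ℝ × ℝ) : 0 ≤ Bm δ x := by
  unfold Bm
  have h1 : (0:ℝ) ≤ 1 + Real.sqrt (δ^2 + x.1^2 - x.2) := by
    have := Real.sqrt_nonneg (δ^2 + x.1^2 - x.2); linarith
  have h2 : (0:ℝ) < 1 + δ := by linarith
  have := Real.exp_pos (x.1 - Real.sqrt (δ^2 + x.1^2 - x.2) + δ)
  positivity

lemma Bm_le {δ : ℝ} (hδ : 0 < δ) (x : ℝ × ℝ) {s0 : ℝ} (h0 : 0 ≤ s0)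
    (hs : s0 ≤ Real.sqrt (δ^2 + x.1^2 - x.2)) :
    Bm δ x ≤ (1+s0)*Real.exp (δ - s0)/(1+δ) * Real.exp x.1 := by
  set s := Real.sqrt (δ^2 + x.1^2 - x.2) with hsdef
  have h1δ : (0:ℝ) < 1 + δ := by linarith
  have h := expfac_anti h0 hs
  have hp : (0:ℝ) ≤ Real.exp x.1 * Real.exp δ / (1+δ) := by positivity
  have key := mul_le_mul_of_nonneg_left h hp
  have e1 : Real.exp (x.1 - s + δ) = Real.exp x.1 * Real.exp δ * Real.exp (-s) := by
    rw [← Real.exp_add, ← Real.exp_add]; ring_nf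
  have e3 : Real.exp (δ - s0) = Real.exp δ * Real.exp (-s0) := by
    rw [← Real.exp_add]; ring_nf
  calc Bm δ x = Real.exp x.1 * Real.exp δ / (1+δ) * ((1+s)*Real.exp (-s)) := by
        rw [Bm]; rw [← hsdef, e1]; ring
    _ ≤ Real.exp x.1 * Real.exp δ / (1+δ) * ((1+s0)*Real.exp (-s0)) := key
    _ = (1+s0)*Real.exp (δ - s0)/(1+δ) * Real.exp x.1 := by rw [e3]; ring

/-! ### basic average facts -/

noncomputable def av2 (φ : ℝ → ℝ) (c d : ℝ) : ℝ := avg (fun t => (φ t)^2) c d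
noncomputable def Vr (φ : ℝ → ℝ) (c d : ℝ) : ℝ := av2 φ c d - (avg φ c d)^2
noncomputable def Sf (φ : ℝ → ℝ) (δ c d : ℝ) : ℝ := Real.sqrt (δ^2 - Vr φ c d)

lemma bm_eq (φ : ℝ → ℝ) (δ c d : ℝ) :
    Bm δ (avg φ c d, av2 φ c d)
      = (1 + Sf φ δ c d)/(1+δ) * Real.exp (avg φ c d - Sf φ δ c d + δ) := by
  have : δ^2 + (avg φ c d)^2 - av2 φ c d = δ^2 - Vr φ c d := by
    simp only [Vr]; ring
  simp only [Bm, Sf, this]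

section Ctx

variable {φ : ℝ → ℝ} {a b ε δ : ℝ}

structure Ctx (φ : ℝ → ℝ) (a b ε δ : ℝ) : Prop where
  hab : a < b
  hε : 0 < ε
  hδ : ε < δ
  h1 : IntervalIntegrable φ volume a b
  h2 : IntervalIntegrable (fun t => (φ t)^2) volume a b
  hosc : ∀ c d : ℝ, a ≤ c → c < d → d ≤ b → Vr φ c d ≤ ε^2
  hexp : MeasureTheory.IntegrableOn (fun t => Real.exp (φ t)) (Set.Ioc a b)

namespace Ctx

variable (H : Ctx φ a b ε δ)
include H

lemma hδ0 : 0 < δ := lt_trans H.hε H.hδ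

lemma sub1 {c d : ℝ} (hc : a ≤ c) (hcd : c ≤ d) (hd : d ≤ b) :
    IntervalIntegrable φ volume c d :=
  H.h1.mono_set (by
    rw [Set.uIcc_of_le hcd, Set.uIcc_of_le H.hab.le]
    exact Set.Icc_subset_Icc hc hd)

lemma sub2 {c d : ℝ} (hc : a ≤ c) (hcd : c ≤ d) (hd : d ≤ b) :
    IntervalIntegrable (fun t => (φ t)^2) volume c d :=
  H.h2.mono_set (by
    rw [Set.uIcc_of_le hcd, Set.uIcc_of_le H.hab.le]
    exact Set.Icc_subset_Icc hc hd)

lemma subE {c d : ℝ} (hc : a ≤ c) (hcd : c ≤ d) (hd : d ≤ b) :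
    IntervalIntegrable (fun t => Real.exp (φ t)) volume c d := by
  rw [intervalIntegrable_iff_integrableOn_Ioc_of_le hcd]
  exact H.hexp.mono_set (Set.Ioc_subset_Ioc hc hd)

/-- second-moment expansion -/
lemma integral_sq_dev {c d : ℝ} (hc : a ≤ c) (hcd : c ≤ d) (hd : d ≤ b) (A : ℝ) :
    ∫ t in c..d, (φ t - A)^2
      = (∫ t in c..d, (φ t)^2) - 2*A*(∫ t in c..d, φ t) + A^2*(d-c) := by
  have h1 := H.sub1 hc hcd hd
  have h2 := H.sub2 hc hcd hd
  have e : (fun t => (φ t - A)^2) = fun t => ((φ t)^2 - (2*A)*(φ t)) + A^2 := by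
    funext t; ring
  rw [e]
  rw [intervalIntegral.integral_add (h2.sub (h1.const_mul (2*A)))
        intervalIntegrable_const,
      intervalIntegral.integral_sub h2 (h1.const_mul (2*A)),
      intervalIntegral.integral_const_mul, intervalIntegral.integral_const]
  simp [smul_eq_mul]; ring

lemma vr_eq {c d : ℝ} (hc : a ≤ c) (hcd : c < d) (hd : d ≤ b) :
    (d-c) * Vr φ c d = ∫ t in c..d, (φ t - avg φ c d)^2 := by
  rw [H.integral_sq_dev hc hcd.le hd (avg φ c d)]
  have hdc : d - c ≠ 0 := by intro h; linarith [hcd]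
  unfold Vr av2 avg
  field_simp
  ring

lemma Vr_nonneg {c d : ℝ} (hc : a ≤ c) (hcd : c < d) (hd : d ≤ b) :
    0 ≤ Vr φ c d := by
  have h := intervalIntegral.integral_nonneg (μ := volume)
    (f := fun t => (φ t - avg φ c d)^2) hcd.le (fun t _ => sq_nonneg _)
  rw [← H.vr_eq hc hcd hd] at h
  nlinarith [h]

lemma Sf_bounds {c d : ℝ} (hc : a ≤ c) (hcd : c < d) (hd : d ≤ b) :
    Real.sqrt (δ^2 - ε^2) ≤ Sf φ δ c d ∧ Sf φ δ c d ≤ δ := by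
  have h0 := H.Vr_nonneg hc hcd hd
  have h1 := H.hosc c d hc hcd hd
  constructor
  · exact Real.sqrt_le_sqrt (by linarith)
  · calc Sf φ δ c d ≤ Real.sqrt (δ^2) := Real.sqrt_le_sqrt (by linarith)
      _ = δ := Real.sqrt_sq H.hδ0.le

lemma Sf_sq {c d : ℝ} (hc : a ≤ c) (hcd : c < d) (hd : d ≤ b) :
    (Sf φ δ c d)^2 = δ^2 - Vr φ c d := by
  have h1 := H.hosc c d hc hcd hd
  have hε2 : ε^2 < δ^2 := by nlinarith [H.hε, H.hδ]
  exact Real.sq_sqrt (by linarith)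

/-- Jensen -/
lemma jensen {c d : ℝ} (hc : a ≤ c) (hcd : c < d) (hd : d ≤ b) :
    (d-c)*Real.exp (avg φ c d) ≤ ∫ t in c..d, Real.exp (φ t) := by
  set A := avg φ c d with hA
  have h1 := H.sub1 hc hcd.le hd
  have hdc : d - c ≠ 0 := by intro h; linarith [hcd]
  have hIl : IntervalIntegrable (fun t => Real.exp A * φ t + Real.exp A * (1-A)) volume c d :=
    (h1.const_mul (Real.exp A)).add intervalIntegrable_const
  have key : ∀ t ∈ Set.Icc c d, Real.exp A * φ t + Real.exp A * (1-A) ≤ Real.exp (φ t) := by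
    intro t _
    have h := Real.add_one_le_exp (φ t - A)
    have e : Real.exp (φ t) = Real.exp A * Real.exp (φ t - A) := by
      rw [← Real.exp_add]; ring_nf
    rw [e]
    have := Real.exp_pos A
    nlinarith
  have hmono := intervalIntegral.integral_mono_on hcd.le hIl (H.subE hc hcd.le hd) key
  have hint : ∫ t in c..d, (Real.exp A * φ t + Real.exp A * (1-A))
      = Real.exp A * ((∫ t in c..d, φ t) + (1 - A)*(d-c)) := by
    rw [intervalIntegral.integral_add (h1.const_mul _) intervalIntegrable_const,
        intervalIntegral.integral_const_mul, intervalIntegral.integral_const]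
    simp [smul_eq_mul]; ring
  have hIA : (∫ t in c..d, φ t) = A * (d-c) := by
    rw [hA]; unfold avg; field_simp
  rw [hint, hIA] at hmono
  calc (d-c)*Real.exp A = Real.exp A * (A*(d-c) + (1-A)*(d-c)) := by ring
    _ ≤ ∫ t in c..d, Real.exp (φ t) := hmono

/-- averages combine -/
lemma avg_comb (f : ℝ → ℝ) (hf : IntervalIntegrable f volume a b)
    {c t d : ℝ} (hc : a ≤ c) (hct : c < t) (htd : t < d) (hd : d ≤ b) :
    (d-c) * avg f c d = (t-c) * avg f c t + (d-t) * avg f t d := by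
  have h1 : IntervalIntegrable f volume c t := hf.mono_set (by
    rw [Set.uIcc_of_le hct.le, Set.uIcc_of_le H.hab.le]
    exact Set.Icc_subset_Icc hc (le_trans htd.le hd))
  have h2 : IntervalIntegrable f volume t d := hf.mono_set (by
    rw [Set.uIcc_of_le htd.le, Set.uIcc_of_le H.hab.le]
    exact Set.Icc_subset_Icc (le_trans hc hct.le) hd)
  have hadd := intervalIntegral.integral_add_adjacent_intervals h1 h2
  have e1 : t - c ≠ 0 := by intro h; linarith
  have e2 : d - t ≠ 0 := by intro h; linarith
  have e3 : d - c ≠ 0 := by intro h; linarith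
  have ea : (d-c) * avg f c d = ∫ x in c..d, f x := by unfold avg; field_simp
  have eb : (t-c) * avg f c t = ∫ x in c..t, f x := by unfold avg; field_simp
  have ec : (d-t) * avg f t d = ∫ x in t..d, f x := by unfold avg; field_simp
  rw [ea, eb, ec]
  exact hadd.symm

end Ctx

end Ctx

/-! ### split point -/

open Classical in
noncomputable def splitPt (φ : ℝ → ℝ) (δ c d : ℝ) : ℝ :=
  if h : ∃ t, t ∈ Set.Ioo c d ∧ (t-c)*Sf φ δ c t = (d-t)*Sf φ δ t d then h.choose
  else (c+d)/2

noncomputable def TVar (φ : ℝ → ℝ) (δ : ℝ) : ℕ → ℝ → ℝ → ℝ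
  | 0, c, d => (d-c) * Vr φ c d
  | n+1, c, d => TVar φ δ n c (splitPt φ δ c d) + TVar φ δ n (splitPt φ δ c d) d

open Classical in
noncomputable def BadSet (φ : ℝ → ℝ) (δ η : ℝ) : ℕ → ℝ → ℝ → Set ℝ
  | 0, c, d => if Vr φ c d ≤ η then ∅ else Set.Ioc c d
  | n+1, c, d => BadSet φ δ η n c (splitPt φ δ c d) ∪ BadSet φ δ η n (splitPt φ δ c d) d

noncomputable def CC (δ η : ℝ) : ℝ :=
  (1+Real.sqrt (δ^2-η))*Real.exp (δ - Real.sqrt (δ^2-η))/(1+δ)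

noncomputable def KK (δ : ℝ) : ℝ := Real.exp δ/(1+δ)

section Main

namespace Ctx

variable {φ : ℝ → ℝ} {a b ε δ : ℝ} (H : Ctx φ a b ε δ)
include H

lemma sigma_pos : 0 < Real.sqrt (δ^2 - ε^2) := by
  have h1 : ε^2 < δ^2 := by nlinarith [H.hε, H.hδ]
  exact Real.sqrt_pos.mpr (by linarith)

lemma avg_cont_left {c d t₁ t₂ : ℝ} (hc : a ≤ c) (hct : c < t₁) (ht12 : t₁ ≤ t₂)
    (ht2 : t₂ ≤ d) (hd : d ≤ b) (f : ℝ → ℝ) (hf : IntervalIntegrable f volume a b) :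
    ContinuousOn (fun t => avg f c t) (Set.Icc t₁ t₂) := by
  have hcd : c < d := lt_of_lt_of_le hct (le_trans ht12 ht2)
  have hII : IntervalIntegrable f volume c d := hf.mono_set (by
    rw [Set.uIcc_of_le hcd.le, Set.uIcc_of_le H.hab.le]
    exact Set.Icc_subset_Icc hc hd)
  have hic : IntegrableOn f (Set.Icc c d) volume := by
    rw [← intervalIntegrable_iff_integrableOn_Icc_of_le hcd.le]; exact hII
  have hprim : ContinuousOn (fun x => ∫ t in Set.Ioc c x, f t) (Set.Icc c d) :=
    intervalIntegral.continuousOn_primitive hic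
  have hsub : Set.Icc t₁ t₂ ⊆ Set.Icc c d := Set.Icc_subset_Icc hct.le ht2
  have hprim' : ContinuousOn (fun x => ∫ t in c..x, f t) (Set.Icc t₁ t₂) := by
    apply ((hprim.mono hsub).congr)
    intro x hx
    exact intervalIntegral.integral_of_le (le_trans hct.le hx.1)
  apply hprim'.div (continuousOn_id.sub continuousOn_const)
  intro x hx
  have : c < x := lt_of_lt_of_le hct hx.1
  simp only [Pi.sub_apply, id_eq]
  intro hcon
  rw [sub_eq_zero] at hcon
  exact absurd hcon.symm (ne_of_lt this)

lemma avg_cont_right {c d t₁ t₂ : ℝ} (hc : a ≤ c) (hct : c ≤ t₁) (ht12 : t₁ ≤ t₂)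
    (ht2 : t₂ < d) (hd : d ≤ b) (f : ℝ → ℝ) (hf : IntervalIntegrable f volume a b) :
    ContinuousOn (fun t => avg f t d) (Set.Icc t₁ t₂) := by
  have hcd : c < d := lt_of_le_of_lt (le_trans hct ht12) ht2
  have hII : ∀ u v : ℝ, c ≤ u → u ≤ v → v ≤ d → IntervalIntegrable f volume u v := by
    intro u v hu huv hv
    exact hf.mono_set (by
      rw [Set.uIcc_of_le huv, Set.uIcc_of_le H.hab.le]
      exact Set.Icc_subset_Icc (le_trans hc hu) (le_trans hv hd))
  have hic : IntegrableOn f (Set.Icc c d) volume := by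
    rw [← intervalIntegrable_iff_integrableOn_Icc_of_le hcd.le]
    exact hII c d le_rfl hcd.le le_rfl
  have hprim : ContinuousOn (fun x => ∫ t in Set.Ioc c x, f t) (Set.Icc c d) :=
    intervalIntegral.continuousOn_primitive hic
  have hsub : Set.Icc t₁ t₂ ⊆ Set.Icc c d := Set.Icc_subset_Icc hct ht2.le
  have hprim' : ContinuousOn (fun x => (∫ t in c..d, f t) - ∫ t in c..x, f t)
      (Set.Icc t₁ t₂) := by
    apply ContinuousOn.sub continuousOn_const
    apply ((hprim.mono hsub).congr)
    intro x hx
    exact intervalIntegral.integral_of_le (le_trans hct hx.1)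
  have heq : ∀ x ∈ Set.Icc t₁ t₂,
      (∫ t in x..d, f t) = (∫ t in c..d, f t) - ∫ t in c..x, f t := by
    intro x hx
    have h1 := hII c x (le_refl c) (le_trans hct hx.1) (le_trans hx.2 ht2.le)
    have h2 := hII x d (le_trans hct hx.1) (le_trans hx.2 ht2.le) le_rfl
    have := intervalIntegral.integral_add_adjacent_intervals h1 h2
    linarith [this]
  have : ContinuousOn (fun x => ∫ t in x..d, f t) (Set.Icc t₁ t₂) :=
    hprim'.congr heq
  apply this.div (continuousOn_const.sub continuousOn_id)
  intro x hx
  have : x < d := lt_of_le_of_lt hx.2 ht2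
  simp only [Pi.sub_apply, id_eq]
  intro hcon
  rw [sub_eq_zero] at hcon
  exact absurd hcon (ne_of_gt this)

lemma exists_split {c d : ℝ} (hc : a ≤ c) (hcd : c < d) (hd : d ≤ b) :
    ∃ t, t ∈ Set.Ioo c d ∧ (t-c)*Sf φ δ c t = (d-t)*Sf φ δ t d := by
  set σ := Real.sqrt (δ^2 - ε^2) with hσdef
  have hσ : 0 < σ := H.sigma_pos
  have hδ0 : 0 < δ := H.hδ0
  set m := (d-c)*σ/(2*(σ+δ)) with hmdef
  have hm0 : 0 < m := by
    apply div_pos (mul_pos (by linarith) hσ); positivity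
  have hm2 : m < (d-c)/2 := by
    rw [hmdef, div_lt_div_iff₀ (by positivity) (by norm_num)]
    have : σ < σ + δ := by linarith
    nlinarith [hcd]
  set t₁ := c + m with ht1def
  set t₂ := d - m with ht2def
  have h12 : t₁ < t₂ := by rw [ht1def, ht2def]; linarith
  have hct1 : c < t₁ := by rw [ht1def]; linarith
  have ht2d : t₂ < d := by rw [ht2def]; linarith
  set g : ℝ → ℝ := fun t => (t-c)*Sf φ δ c t - (d-t)*Sf φ δ t d with hgdef
  -- continuity of g on [t₁, t₂]
  have hSl : ContinuousOn (fun t => Sf φ δ c t) (Set.Icc t₁ t₂) := by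
    apply Real.continuous_sqrt.comp_continuousOn
    apply ContinuousOn.sub continuousOn_const
    exact ContinuousOn.sub
      (H.avg_cont_left hc hct1 h12.le ht2d.le hd _ H.h2)
      ((H.avg_cont_left hc hct1 h12.le ht2d.le hd _ H.h1).pow 2)
  have hSr : ContinuousOn (fun t => Sf φ δ t d) (Set.Icc t₁ t₂) := by
    apply Real.continuous_sqrt.comp_continuousOn
    apply ContinuousOn.sub continuousOn_const
    exact ContinuousOn.sub
      (H.avg_cont_right hc hct1.le h12.le ht2d hd _ H.h2)
      ((H.avg_cont_right hc hct1.le h12.le ht2d hd _ H.h1).pow 2)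
  have hgc : ContinuousOn g (Set.Icc t₁ t₂) := by
    apply ContinuousOn.sub
    · exact (continuousOn_id.sub continuousOn_const).mul hSl
    · exact (continuousOn_const.sub continuousOn_id).mul hSr
  -- sign at t₁ : g t₁ ≤ 0
  have hb1 := H.Sf_bounds (c := c) (d := t₁) hc hct1 (by linarith)
  have hb1' := H.Sf_bounds (c := t₁) (d := d) (by linarith) (by linarith) hd
  have hg1 : g t₁ ≤ 0 := by
    have e1 : t₁ - c = m := by rw [ht1def]; ring
    have e2 : (d - t₁) = d - c - m := by rw [ht1def]; ring
    have key : m * δ ≤ (d - c - m) * σ := by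
      have hmv : m * (2*(σ+δ)) = (d-c)*σ := by rw [hmdef]; field_simp
      nlinarith [hmv, mul_pos hm0 (show (0:ℝ) < σ + δ by linarith)]
    have l1 : (t₁-c)*Sf φ δ c t₁ ≤ m * δ := by
      rw [e1]
      exact mul_le_mul_of_nonneg_left hb1.2 hm0.le
    have l2 : (d-c-m) * σ ≤ (d-t₁)*Sf φ δ t₁ d := by
      rw [e2]
      exact mul_le_mul_of_nonneg_left hb1'.1 (by linarith [hm2])
    simp only [hgdef]
    linarith
  -- sign at t₂ : 0 ≤ g t₂
  have hb2 := H.Sf_bounds (c := c) (d := t₂) hc (by linarith) (by linarith)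
  have hb2' := H.Sf_bounds (c := t₂) (d := d) (by linarith) ht2d hd
  have hg2 : 0 ≤ g t₂ := by
    have e1 : d - t₂ = m := by rw [ht2def]; ring
    have e2 : t₂ - c = d - c - m := by rw [ht2def]; ring
    have key : m * δ ≤ (d - c - m) * σ := by
      have hmv : m * (2*(σ+δ)) = (d-c)*σ := by rw [hmdef]; field_simp
      nlinarith [hmv, mul_pos hm0 (show (0:ℝ) < σ + δ by linarith)]
    have l1 : (d-t₂)*Sf φ δ t₂ d ≤ m * δ := by
      rw [e1]
      exact mul_le_mul_of_nonneg_left hb2'.2 hm0.le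
    have l2 : (d-c-m) * σ ≤ (t₂-c)*Sf φ δ c t₂ := by
      rw [e2]
      exact mul_le_mul_of_nonneg_left hb2.1 (by linarith [hm2])
    simp only [hgdef]
    linarith
  have hivt := intermediate_value_Icc h12.le hgc
  have h0mem : (0:ℝ) ∈ Set.Icc (g t₁) (g t₂) := ⟨hg1, hg2⟩
  obtain ⟨t, ht, hgt⟩ := hivt h0mem
  refine ⟨t, ⟨lt_of_lt_of_le hct1 ht.1, lt_of_le_of_lt ht.2 ht2d⟩, ?_⟩
  simp only [hgdef] at hgt
  linarith [hgt]

lemma splitPt_spec {c d : ℝ} (hc : a ≤ c) (hcd : c < d) (hd : d ≤ b) :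
    splitPt φ δ c d ∈ Set.Ioo c d ∧
    ((splitPt φ δ c d)-c)*Sf φ δ c (splitPt φ δ c d)
      = (d-(splitPt φ δ c d))*Sf φ δ (splitPt φ δ c d) d := by
  have hex := H.exists_split hc hcd hd
  unfold splitPt
  rw [dif_pos hex]
  exact hex.choose_spec

end Ctx

lemma chord_pos {sm sp q WI σ2 : ℝ} (hsm : 0 < sm) (hsp : 0 < sp) (hσ : 0 < σ2)
    (hWI : σ2 ≤ WI) (hq2 : sm*sp*q^2 = (sm*sp - WI)*(sm+sp)^2)
    {θ : ℝ} (hθ : 0 < θ) (hθ1 : θ < 1) :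
    0 < (1-θ)*sm^2 + θ*sp^2 - θ*(1-θ)*q^2 := by
  have hsum : 0 < sm + sp := by linarith
  have key : sm*sp*((1-θ)*sm^2+θ*sp^2 - θ*(1-θ)*q^2)
      = sm*sp*((1-θ)*sm-θ*sp)^2 + θ*(1-θ)*(sm+sp)^2*WI := by
    linear_combination (-(θ*(1-θ)))*hq2
  have h1 : 0 ≤ sm*sp*((1-θ)*sm-θ*sp)^2 := by positivity
  have h2 : 0 < θ*(1-θ)*(sm+sp)^2*WI := by
    apply mul_pos (mul_pos (mul_pos hθ (by linarith)) (by positivity))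
    linarith
  nlinarith [key, mul_pos hsm hsp]

namespace Ctx

variable {φ : ℝ → ℝ} {a b ε δ : ℝ} (H : Ctx φ a b ε δ)
include H

lemma bm_split {c d : ℝ} (hc : a ≤ c) (hcd : c < d) (hd : d ≤ b) :
    (d-c) * Bm δ (avg φ c d, av2 φ c d)
      ≤ ((splitPt φ δ c d)-c) *
          Bm δ (avg φ c (splitPt φ δ c d), av2 φ c (splitPt φ δ c d))
        + (d-(splitPt φ δ c d)) *
          Bm δ (avg φ (splitPt φ δ c d) d, av2 φ (splitPt φ δ c d) d) := by
  obtain ⟨hmem, heq⟩ := H.splitPt_spec hc hcd hd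
  set t := splitPt φ δ c d with htdef
  obtain ⟨hct, htd⟩ := hmem
  set sm := Sf φ δ c t with hsmdef
  set sp := Sf φ δ t d with hspdef
  have hbm := H.Sf_bounds hc hct (le_trans htd.le hd)
  have hbp := H.Sf_bounds (le_trans hc hct.le) htd hd
  have hσ := H.sigma_pos
  have hsm0 : 0 < sm := lt_of_lt_of_le hσ hbm.1
  have hsp0 : 0 < sp := lt_of_lt_of_le hσ hbp.1
  have hsum : 0 < sm + sp := by linarith
  have hdc : 0 < d - c := by linarith
  set l := (t-c)/(d-c) with hldef
  have hl0 : 0 < l := div_pos (by linarith) hdc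
  have hl1 : l < 1 := by rw [hldef, div_lt_one hdc]; linarith
  set u : ℝ × ℝ := (avg φ c t, av2 φ c t) with hudef
  set v : ℝ × ℝ := (avg φ t d, av2 φ t d) with hvdef
  -- combination identities
  have hA1 : (d-c) * avg φ c d = (t-c)*u.1 + (d-t)*v.1 :=
    H.avg_comb φ H.h1 hc hct htd hd
  have hA2 : (d-c) * av2 φ c d = (t-c)*u.2 + (d-t)*v.2 :=
    H.avg_comb (fun s => (φ s)^2) H.h2 hc hct htd hd
  -- length identities from the split equation
  have hpt : (t-c)*(sm+sp) = (d-c)*sp := by linear_combination heq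
  have hwt : (d-t)*(sm+sp) = (d-c)*sm := by linear_combination -heq
  -- moments at endpoints
  have hu2 : u.2 = δ^2 + u.1^2 - sm^2 := by
    have h := H.Sf_sq hc hct (le_trans htd.le hd)
    rw [← hsmdef] at h
    simp only [Vr] at h
    simp only [hudef]
    linarith [h]
  have hv2 : v.2 = δ^2 + v.1^2 - sp^2 := by
    have h := H.Sf_sq (le_trans hc hct.le) htd hd
    rw [← hspdef] at h
    simp only [Vr] at h
    simp only [hvdef]
    linarith [h]
  -- explicit convex combination with weights sp, sm
  have e1m : (d-c)*((sm+sp) * avg φ c d) = (d-c)*(sp*u.1 + sm*v.1) := by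
    linear_combination (sm+sp)*hA1 + u.1*hpt + v.1*hwt
  have e2m : (d-c)*((sm+sp) * av2 φ c d) = (d-c)*(sp*u.2 + sm*v.2) := by
    linear_combination (sm+sp)*hA2 + u.2*hpt + v.2*hwt
  have e1 : avg φ c d = (sp*u.1 + sm*v.1)/(sm+sp) := by
    rw [eq_div_iff hsum.ne', mul_comm]
    exact mul_left_cancel₀ hdc.ne' e1m
  have e2 : av2 φ c d = (sp*u.2 + sm*v.2)/(sm+sp) := by
    rw [eq_div_iff hsum.ne', mul_comm]
    exact mul_left_cancel₀ hdc.ne' e2m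
  -- the key chord identity
  have hWIlb : δ^2 - ε^2 ≤ δ^2 + (avg φ c d)^2 - av2 φ c d := by
    have := H.hosc c d hc hcd hd
    simp only [Vr] at this
    linarith
  have hq2 : sm*sp*(v.1-u.1)^2
      = (sm*sp - (δ^2 + (avg φ c d)^2 - av2 φ c d))*(sm+sp)^2 := by
    rw [e1, e2, hu2, hv2]
    field_simp
    ring
  -- chord positivity
  have hWall : ∀ θ : ℝ, θ ∈ Set.Ioo (0:ℝ) 1 →
      0 < δ^2 + (u.1 + θ*(v.1-u.1))^2 - (u.2 + θ*(v.2-u.2)) := by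
    intro θ hθ
    have eW : δ^2 + (u.1 + θ*(v.1-u.1))^2 - (u.2 + θ*(v.2-u.2))
        = (1-θ)*sm^2 + θ*sp^2 - θ*(1-θ)*(v.1-u.1)^2 := by
      rw [hu2, hv2]; ring
    rw [eW]
    exact chord_pos hsm0 hsp0 (show (0:ℝ) < δ^2-ε^2 by nlinarith [H.hε, H.hδ])
      hWIlb hq2 hθ.1 hθ.2
  have hconv := bm_convex_aux H.hδ0 u v hWall
  have happ := hconv.2 (Set.left_mem_Icc.mpr zero_le_one) (Set.right_mem_Icc.mpr zero_le_one)
    hl0.le (by linarith : (0:ℝ) ≤ 1 - l) (by ring)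
  simp only [smul_eq_mul, mul_zero, mul_one, zero_add] at happ
  -- identify the points
  have hA1l : u.1 + (1-l)*(v.1-u.1) = avg φ c d := by
    rw [hldef]
    field_simp
    linear_combination -hA1
  have hA2l : u.2 + (1-l)*(v.2-u.2) = av2 φ c d := by
    rw [hldef]
    field_simp
    linear_combination -hA2
  rw [hA1l, hA2l] at happ
  have hend0 : (u.1 + 0*(v.1-u.1), u.2 + 0*(v.2-u.2)) = u := by simp
  have hend1 : (u.1 + 1*(v.1-u.1), u.2 + 1*(v.2-u.2)) = v := by
    simp only [one_mul]; rw [Prod.mk.injEq]; constructor <;> ring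
  rw [hend0, hend1] at happ
  have hmul := mul_le_mul_of_nonneg_left happ hdc.le
  have hc1 : (d-c)*l = t-c := by rw [hldef]; field_simp
  have hc2 : (d-c)*(1-l) = d-t := by rw [hldef]; field_simp; ring
  calc (d-c) * Bm δ (avg φ c d, av2 φ c d)
      ≤ (d-c)*(l * Bm δ u + (1-l) * Bm δ v) := hmul
    _ = ((d-c)*l) * Bm δ u + ((d-c)*(1-l)) * Bm δ v := by ring
    _ = (t-c) * Bm δ u + (d-t) * Bm δ v := by rw [hc1, hc2]

end Ctx

lemma badset_meas (φ : ℝ → ℝ) (δ η : ℝ) : ∀ n c d, MeasurableSet (BadSet φ δ η n c d) := by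
  intro n
  induction n with
  | zero =>
    intro c d
    simp only [BadSet]
    split_ifs
    · exact MeasurableSet.empty
    · exact measurableSet_Ioc
  | succ n ih =>
    intro c d
    exact (ih _ _).union (ih _ _)

namespace Ctx

variable {φ : ℝ → ℝ} {a b ε δ : ℝ} (H : Ctx φ a b ε δ)
include H

lemma badset_subset (η : ℝ) : ∀ n, ∀ {c d : ℝ}, a ≤ c → c < d → d ≤ b →
    BadSet φ δ η n c d ⊆ Set.Ioc c d := by
  intro n
  induction n with
  | zero =>
    intro c d hc hcd hd
    simp only [BadSet]
    split_ifs
    · exact Set.empty_subset _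
    · exact subset_rfl
  | succ n ih =>
    intro c d hc hcd hd
    obtain ⟨hmem, _⟩ := H.splitPt_spec hc hcd hd
    simp only [BadSet]
    apply Set.union_subset
    · exact (ih hc hmem.1 (hmem.2.le.trans hd)).trans (Set.Ioc_subset_Ioc le_rfl hmem.2.le)
    · exact (ih (hc.trans hmem.1.le) hmem.2 hd).trans (Set.Ioc_subset_Ioc hmem.1.le le_rfl)

lemma tvar_nonneg : ∀ n, ∀ {c d : ℝ}, a ≤ c → c < d → d ≤ b →
    0 ≤ TVar φ δ n c d := by
  intro n
  induction n with
  | zero =>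
    intro c d hc hcd hd
    exact mul_nonneg (by linarith) (H.Vr_nonneg hc hcd hd)
  | succ n ih =>
    intro c d hc hcd hd
    obtain ⟨hmem, _⟩ := H.splitPt_spec hc hcd hd
    simp only [TVar]
    have h1 := ih hc hmem.1 (hmem.2.le.trans hd)
    have h2 := ih (hc.trans hmem.1.le) hmem.2 hd
    linarith

lemma CC_nonneg (η : ℝ) : 0 ≤ CC δ η := by
  have h1δ : (0:ℝ) < 1 + δ := by have := H.hδ0; linarith
  unfold CC
  positivity

lemma KK_pos : 0 < KK δ := by
  have h1δ : (0:ℝ) < 1 + δ := by have := H.hδ0; linarith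
  unfold KK
  positivity

lemma main_ind {η : ℝ} (hη : 0 < η) :
    ∀ n, ∀ {c d : ℝ}, a ≤ c → c < d → d ≤ b →
    (d-c) * Bm δ (avg φ c d, av2 φ c d)
      ≤ CC δ η * (∫ s in c..d, Real.exp (φ s))
        + KK δ * (∫ s in BadSet φ δ η n c d, Real.exp (φ s)) := by
  intro n
  induction n with
  | zero =>
    intro c d hc hcd hd
    have hdc : (0:ℝ) < d - c := by linarith
    have hJ := H.jensen hc hcd hd
    have hintnn : 0 ≤ ∫ s in c..d, Real.exp (φ s) :=
      intervalIntegral.integral_nonneg hcd.le (fun s _ => (Real.exp_pos _).le)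
    by_cases hv : Vr φ c d ≤ η
    · -- good leaf
      have hb : Bm δ (avg φ c d, av2 φ c d)
          ≤ (1+Real.sqrt (δ^2-η))*Real.exp (δ - Real.sqrt (δ^2-η))/(1+δ)
            * Real.exp (avg φ c d) := by
        apply Bm_le H.hδ0 _ (Real.sqrt_nonneg _)
        apply Real.sqrt_le_sqrt
        have h0 := H.Vr_nonneg hc hcd hd
        simp only [Vr] at hv h0 ⊢
        linarith
      have hCC : Bm δ (avg φ c d, av2 φ c d) ≤ CC δ η * Real.exp (avg φ c d) := hb
      have h2 : (d-c) * Bm δ (avg φ c d, av2 φ c d)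
          ≤ CC δ η * ((d-c) * Real.exp (avg φ c d)) := by
        have := mul_le_mul_of_nonneg_left hCC hdc.le
        calc (d-c) * Bm δ (avg φ c d, av2 φ c d)
            ≤ (d-c) * (CC δ η * Real.exp (avg φ c d)) := this
          _ = CC δ η * ((d-c) * Real.exp (avg φ c d)) := by ring
      have h3 : CC δ η * ((d-c) * Real.exp (avg φ c d))
          ≤ CC δ η * (∫ s in c..d, Real.exp (φ s)) :=
        mul_le_mul_of_nonneg_left hJ (H.CC_nonneg η)
      have hbad : BadSet φ δ η 0 c d = ∅ := by simp only [BadSet, if_pos hv]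
      rw [hbad]
      simp only [MeasureTheory.setIntegral_empty, Measure.restrict_empty]
      simp only [MeasureTheory.integral_zero_measure, mul_zero, add_zero]
      linarith
    · -- bad leaf
      have hb : Bm δ (avg φ c d, av2 φ c d) ≤ KK δ * Real.exp (avg φ c d) := by
        have h := Bm_le H.hδ0 (avg φ c d, av2 φ c d) (le_refl (0:ℝ))
          (Real.sqrt_nonneg _)
        simp only [add_zero, sub_zero] at h
        calc Bm δ (avg φ c d, av2 φ c d)
            ≤ (1+0)*Real.exp δ/(1+δ) * Real.exp (avg φ c d) := by
              simpa using h
          _ = KK δ * Real.exp (avg φ c d) := by unfold KK; ring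
      have hbad : BadSet φ δ η 0 c d = Set.Ioc c d := by simp only [BadSet, if_neg hv]
      rw [hbad]
      have hIoc : ∫ s in Set.Ioc c d, Real.exp (φ s) = ∫ s in c..d, Real.exp (φ s) :=
        (intervalIntegral.integral_of_le hcd.le).symm
      rw [hIoc]
      have h2 : (d-c) * Bm δ (avg φ c d, av2 φ c d)
          ≤ KK δ * (∫ s in c..d, Real.exp (φ s)) := by
        calc (d-c) * Bm δ (avg φ c d, av2 φ c d)
            ≤ (d-c) * (KK δ * Real.exp (avg φ c d)) :=
              mul_le_mul_of_nonneg_left hb hdc.le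
          _ = KK δ * ((d-c) * Real.exp (avg φ c d)) := by ring
          _ ≤ KK δ * (∫ s in c..d, Real.exp (φ s)) :=
              mul_le_mul_of_nonneg_left hJ H.KK_pos.le
      have := mul_nonneg (H.CC_nonneg η) hintnn
      linarith
  | succ n ih =>
    intro c d hc hcd hd
    obtain ⟨hmem, _⟩ := H.splitPt_spec hc hcd hd
    set t := splitPt φ δ c d with htdef
    obtain ⟨hct, htd⟩ := hmem
    have hsplit := H.bm_split hc hcd hd
    rw [← htdef] at hsplit
    have ih1 := ih hc hct (htd.le.trans hd)
    have ih2 := ih (hc.trans hct.le) htd hd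
    have hadd : (∫ s in c..t, Real.exp (φ s)) + (∫ s in t..d, Real.exp (φ s))
        = ∫ s in c..d, Real.exp (φ s) :=
      intervalIntegral.integral_add_adjacent_intervals
        (H.subE hc hct.le (htd.le.trans hd)) (H.subE (hc.trans hct.le) htd.le hd)
    have hbadd : ∫ s in BadSet φ δ η (n+1) c d, Real.exp (φ s)
        = (∫ s in BadSet φ δ η n c t, Real.exp (φ s))
          + ∫ s in BadSet φ δ η n t d, Real.exp (φ s) := by
      have hsub1 := H.badset_subset η n hc hct (htd.le.trans hd)
      have hsub2 := H.badset_subset η n (hc.trans hct.le) htd hd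
      have hdisj : Disjoint (BadSet φ δ η n c t) (BadSet φ δ η n t d) := by
        rw [Set.disjoint_left]
        intro x h1 h2
        exact absurd ((hsub2 h2).1) (not_lt.mpr (hsub1 h1).2)
      have hi1 : IntegrableOn (fun s => Real.exp (φ s)) (BadSet φ δ η n c t) volume :=
        H.hexp.mono_set (hsub1.trans (Set.Ioc_subset_Ioc hc (htd.le.trans hd)))
      have hi2 : IntegrableOn (fun s => Real.exp (φ s)) (BadSet φ δ η n t d) volume :=
        H.hexp.mono_set (hsub2.trans (Set.Ioc_subset_Ioc (hc.trans hct.le) hd))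
      simp only [BadSet]
      rw [← htdef]
      exact MeasureTheory.setIntegral_union hdisj (badset_meas φ δ η n t d) hi1 hi2
    rw [hbadd]
    have hK : KK δ * ((∫ s in BadSet φ δ η n c t, Real.exp (φ s))
        + ∫ s in BadSet φ δ η n t d, Real.exp (φ s))
        = KK δ * (∫ s in BadSet φ δ η n c t, Real.exp (φ s))
          + KK δ * (∫ s in BadSet φ δ η n t d, Real.exp (φ s)) := by ring
    have hCd : CC δ η * (∫ s in c..d, Real.exp (φ s))
        = CC δ η * (∫ s in c..t, Real.exp (φ s))
          + CC δ η * (∫ s in t..d, Real.exp (φ s)) := by rw [← hadd]; ring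
    linarith

lemma badset_vol {η : ℝ} (hη : 0 < η) :
    ∀ n, ∀ {c d : ℝ}, a ≤ c → c < d → d ≤ b →
    volume (BadSet φ δ η n c d) ≤ ENNReal.ofReal (TVar φ δ n c d / η) := by
  intro n
  induction n with
  | zero =>
    intro c d hc hcd hd
    simp only [BadSet, TVar]
    split_ifs with hv
    · simp
    · rw [Real.volume_Ioc]
      apply ENNReal.ofReal_le_ofReal
      rw [le_div_iff₀ hη]
      push_neg at hv
      nlinarith [hv, hcd]
  | succ n ih =>
    intro c d hc hcd hd
    obtain ⟨hmem, _⟩ := H.splitPt_spec hc hcd hd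
    simp only [BadSet, TVar]
    have h1 := ih hc hmem.1 (hmem.2.le.trans hd)
    have h2 := ih (hc.trans hmem.1.le) hmem.2 hd
    calc volume (BadSet φ δ η n c (splitPt φ δ c d) ∪ BadSet φ δ η n (splitPt φ δ c d) d)
        ≤ volume (BadSet φ δ η n c (splitPt φ δ c d))
          + volume (BadSet φ δ η n (splitPt φ δ c d) d) := measure_union_le _ _
      _ ≤ ENNReal.ofReal (TVar φ δ n c (splitPt φ δ c d) / η)
          + ENNReal.ofReal (TVar φ δ n (splitPt φ δ c d) d / η) := add_le_add h1 h2
      _ = ENNReal.ofReal ((TVar φ δ n c (splitPt φ δ c d)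
          + TVar φ δ n (splitPt φ δ c d) d) / η) := by
          rw [← ENNReal.ofReal_add, ← add_div]
          · exact div_nonneg (H.tvar_nonneg n hc hmem.1 (hmem.2.le.trans hd)) hη.le
          · exact div_nonneg (H.tvar_nonneg n (hc.trans hmem.1.le) hmem.2 hd) hη.le

lemma subIψsq (ψ : ℝ → ℝ) (hψ : Continuous ψ) {c d : ℝ}
    (hc : a ≤ c) (hcd : c ≤ d) (hd : d ≤ b) :
    IntervalIntegrable (fun s => (φ s - ψ s)^2) volume c d := by
  have h1 := H.sub1 hc hcd hd
  have h2 := H.sub2 hc hcd hd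
  have hmul : IntervalIntegrable (fun s => φ s * ψ s) volume c d :=
    h1.mul_continuousOn hψ.continuousOn
  have hψsq : IntervalIntegrable (fun s => (ψ s)^2) volume c d :=
    (hψ.pow 2).intervalIntegrable c d
  have e : (fun s => (φ s - ψ s)^2)
      = fun s => ((φ s)^2 - 2*(φ s * ψ s)) + (ψ s)^2 := by
    funext s; ring
  rw [e]
  exact (h2.sub (hmul.const_mul 2)).add hψsq

lemma tvar_le (ψ : ℝ → ℝ) (hψ : Continuous ψ) {ω : ℝ} (hω : 0 ≤ ω) :
    ∀ n, ∀ {c d : ℝ}, a ≤ c → c < d → d ≤ b →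
    (∀ x y : ℝ, x ∈ Set.Icc a b → y ∈ Set.Icc a b →
        |x - y| ≤ (δ/(Real.sqrt (δ^2-ε^2)+δ))^n * (d-c) → |ψ x - ψ y| ≤ ω) →
    TVar φ δ n c d ≤ 2*(∫ s in c..d, (φ s - ψ s)^2) + 2*(d-c)*ω^2 := by
  intro n
  induction n with
  | zero =>
    intro c d hc hcd hd hmod
    have hdc : (0:ℝ) < d - c := by linarith
    simp only [pow_zero, one_mul] at hmod
    set K := avg ψ c d with hKdef
    have h1 := H.sub1 hc hcd.le hd
    have h2 := H.sub2 hc hcd.le hd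
    have hψI : IntervalIntegrable ψ volume c d := hψ.intervalIntegrable c d
    have hφψ := H.subIψsq ψ hψ hc hcd.le hd
    have hψK : IntervalIntegrable (fun s => (ψ s - K)^2) volume c d :=
      (((hψ.sub continuous_const).pow 2)).intervalIntegrable c d
    have hφK : IntervalIntegrable (fun s => (φ s - K)^2) volume c d := by
      have e : (fun s => (φ s - K)^2)
          = fun s => ((φ s)^2 - (2*K)*(φ s)) + K^2 := by funext s; ring
      rw [e]
      exact (h2.sub (h1.const_mul (2*K))).add intervalIntegrable_const
    -- step 1
    have hIA : (∫ s in c..d, φ s) = avg φ c d * (d-c) := by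
      unfold avg; field_simp
    have hI2 : (∫ s in c..d, (φ s)^2) = av2 φ c d * (d-c) := by
      unfold av2 avg; field_simp
    have step1 : (d-c) * Vr φ c d ≤ ∫ s in c..d, (φ s - K)^2 := by
      rw [H.integral_sq_dev hc hcd.le hd K, hIA, hI2]
      simp only [Vr]
      nlinarith [sq_nonneg (avg φ c d - K), hdc]
    -- step 2
    have step2 : (∫ s in c..d, (φ s - K)^2)
        ≤ ∫ s in c..d, (2*(φ s - ψ s)^2 + 2*(ψ s - K)^2) := by
      apply intervalIntegral.integral_mono_on hcd.le hφK
        ((hφψ.const_mul 2).add (hψK.const_mul 2))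
      intro x _
      nlinarith [sq_nonneg ((φ x - ψ x) - (ψ x - K))]
    have step2' : (∫ s in c..d, (2*(φ s - ψ s)^2 + 2*(ψ s - K)^2))
        = 2*(∫ s in c..d, (φ s - ψ s)^2) + 2*(∫ s in c..d, (ψ s - K)^2) := by
      rw [intervalIntegral.integral_add (hφψ.const_mul 2) (hψK.const_mul 2),
        intervalIntegral.integral_const_mul, intervalIntegral.integral_const_mul]
    -- step 3
    have step3 : (∫ s in c..d, (ψ s - K)^2) ≤ (d-c)*ω^2 := by
      have hptw : ∀ x ∈ Set.Icc c d, (ψ x - K)^2 ≤ ω^2 := by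
        intro x hx
        have hrep : ∫ y in c..d, (ψ x - ψ y) = (d-c)*(ψ x) - ∫ y in c..d, ψ y := by
          rw [intervalIntegral.integral_sub intervalIntegrable_const hψI,
            intervalIntegral.integral_const]
          simp [smul_eq_mul]
        have habs : |∫ y in c..d, (ψ x - ψ y)| ≤ ω * |d - c| := by
          have hb : ∀ y ∈ Set.uIoc c d, ‖ψ x - ψ y‖ ≤ ω := by
            intro y hy
            rw [Set.uIoc_of_le hcd.le] at hy
            have hyIcc : y ∈ Set.Icc c d := ⟨hy.1.le, hy.2⟩
            rw [Real.norm_eq_abs]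
            apply hmod x y (Set.Icc_subset_Icc hc hd hx) (Set.Icc_subset_Icc hc hd hyIcc)
            rw [abs_le]
            constructor
            · linarith [hx.1, hx.2, hyIcc.1, hyIcc.2]
            · linarith [hx.1, hx.2, hyIcc.1, hyIcc.2]
          simpa [Real.norm_eq_abs] using
            intervalIntegral.norm_integral_le_of_norm_le_const hb
        have hK : ψ x - K = (∫ y in c..d, (ψ x - ψ y))/(d-c) := by
          rw [hrep, hKdef]
          unfold avg
          field_simp
        have habs2 : |ψ x - K| ≤ ω := by
          rw [hK, abs_div, abs_of_pos hdc]
          rw [div_le_iff₀ hdc]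
          calc |∫ y in c..d, (ψ x - ψ y)| ≤ ω * |d - c| := habs
            _ = ω * (d-c) := by rw [abs_of_pos hdc]
        rw [abs_le] at habs2
        nlinarith [habs2.1, habs2.2]
      calc (∫ s in c..d, (ψ s - K)^2) ≤ ∫ s in c..d, ω^2 :=
            intervalIntegral.integral_mono_on hcd.le hψK intervalIntegrable_const hptw
        _ = (d-c)*ω^2 := by rw [intervalIntegral.integral_const]; simp [smul_eq_mul]
    simp only [TVar]
    linarith
  | succ n ih =>
    intro c d hc hcd hd hmod
    obtain ⟨hmem, heq⟩ := H.splitPt_spec hc hcd hd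
    set t := splitPt φ δ c d with htdef
    obtain ⟨hct, htd⟩ := hmem
    set σ := Real.sqrt (δ^2-ε^2) with hσdef
    have hσ0 : 0 < σ := H.sigma_pos
    have hδ0 := H.hδ0
    set γ := δ/(σ+δ) with hγdef
    have hγ0 : 0 < γ := div_pos hδ0 (by linarith)
    -- balance
    have hbm := H.Sf_bounds hc hct (htd.le.trans hd)
    have hbp := H.Sf_bounds (hc.trans hct.le) htd hd
    rw [← hσdef] at hbm hbp
    set sm := Sf φ δ c t
    set sp := Sf φ δ t d
    have hsm0 : 0 < sm := lt_of_lt_of_le hσ0 hbm.1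
    have hsp0 : 0 < sp := lt_of_lt_of_le hσ0 hbp.1
    have hpt : (t-c)*(sm+sp) = (d-c)*sp := by linear_combination heq
    have hwt : (d-t)*(sm+sp) = (d-c)*sm := by linear_combination -heq
    have hbal1 : t - c ≤ γ*(d-c) := by
      rw [hγdef, div_mul_eq_mul_div, le_div_iff₀ (by linarith : (0:ℝ) < σ+δ)]
      nlinarith [hpt, hbp.2, hbm.1, hcd, hct, htd]
    have hbal2 : d - t ≤ γ*(d-c) := by
      rw [hγdef, div_mul_eq_mul_div, le_div_iff₀ (by linarith : (0:ℝ) < σ+δ)]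
      nlinarith [hwt, hbm.2, hbp.1, hcd, hct, htd]
    have hmod1 : ∀ x y : ℝ, x ∈ Set.Icc a b → y ∈ Set.Icc a b →
        |x - y| ≤ γ^n * (t-c) → |ψ x - ψ y| ≤ ω := by
      intro x y hx hy hxy
      apply hmod x y hx hy
      calc |x - y| ≤ γ^n * (t-c) := hxy
        _ ≤ γ^n * (γ*(d-c)) := by
            apply mul_le_mul_of_nonneg_left hbal1 (pow_nonneg hγ0.le n)
        _ = γ^(n+1) * (d-c) := by ring
    have hmod2 : ∀ x y : ℝ, x ∈ Set.Icc a b → y ∈ Set.Icc a b →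
        |x - y| ≤ γ^n * (d-t) → |ψ x - ψ y| ≤ ω := by
      intro x y hx hy hxy
      apply hmod x y hx hy
      calc |x - y| ≤ γ^n * (d-t) := hxy
        _ ≤ γ^n * (γ*(d-c)) := by
            apply mul_le_mul_of_nonneg_left hbal2 (pow_nonneg hγ0.le n)
        _ = γ^(n+1) * (d-c) := by ring
    have ih1 := ih hc hct (htd.le.trans hd) hmod1
    have ih2 := ih (hc.trans hct.le) htd hd hmod2
    have hadd : (∫ s in c..t, (φ s - ψ s)^2) + (∫ s in t..d, (φ s - ψ s)^2)
        = ∫ s in c..d, (φ s - ψ s)^2 :=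
      intervalIntegral.integral_add_adjacent_intervals
        (H.subIψsq ψ hψ hc hct.le (htd.le.trans hd))
        (H.subIψsq ψ hψ (hc.trans hct.le) htd.le hd)
    simp only [TVar]
    rw [← htdef]
    linarith

end Ctx

namespace Ctx

variable {φ : ℝ → ℝ} {a b ε δ : ℝ} (H : Ctx φ a b ε δ)
include H

lemma acont {τ : ℝ} (hτ : 0 < τ) :
    ∃ θ : ℝ, 0 < θ ∧ ∀ s : Set ℝ, MeasurableSet s → s ⊆ Set.Ioc a b →
      volume s ≤ ENNReal.ofReal θ → (∫ x in s, Real.exp (φ x)) ≤ τ := by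
  set μ := volume.restrict (Set.Ioc a b) with hμ
  have hInt : Integrable (fun x => Real.exp (φ x)) μ := H.hexp
  have hMem : MemLp (fun x => Real.exp (φ x)) 1 μ := memLp_one_iff_integrable.mpr hInt
  obtain ⟨θ, hθ0, hθ⟩ := hMem.eLpNorm_indicator_le le_rfl (by norm_num) hτ
  refine ⟨θ, hθ0, ?_⟩
  intro s hs hsub hvol
  have hμs : μ s ≤ ENNReal.ofReal θ := by
    rw [hμ, Measure.restrict_apply hs]
    exact le_trans (measure_mono Set.inter_subset_left) hvol
  have hsn := hθ s hs hμs
  have hrr : μ.restrict s = volume.restrict s := by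
    rw [hμ, Measure.restrict_restrict_of_subset hsub]
  have h0 : (∫ x in s, Real.exp (φ x)) = ∫ x in s, Real.exp (φ x) ∂μ := by
    rw [hrr]
  rw [h0]
  have h1 : (∫ x in s, Real.exp (φ x) ∂μ) ≤ ∫ x in s, ‖Real.exp (φ x)‖ ∂μ := by
    have hni := MeasureTheory.norm_integral_le_integral_norm
      (μ := μ.restrict s) (f := fun x => Real.exp (φ x))
    rw [Real.norm_eq_abs] at hni
    exact le_trans (le_abs_self _) hni
  have h2 : (∫ x in s, ‖Real.exp (φ x)‖ ∂μ)
      = (∫⁻ x in s, ‖Real.exp (φ x)‖₊ ∂μ).toReal := by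
    rw [integral_norm_eq_lintegral_enorm]
    simp only [enorm_eq_nnnorm]
    exact hInt.aestronglyMeasurable.restrict
  have h3 : (∫⁻ x in s, ‖Real.exp (φ x)‖₊ ∂μ)
      = eLpNorm (s.indicator (fun x => Real.exp (φ x))) 1 μ := by
    rw [eLpNorm_one_eq_lintegral_enorm]
    rw [← lintegral_indicator hs]
    congr 1
    funext x
    by_cases hx : x ∈ s <;> simp [Set.indicator, hx, enorm_eq_nnnorm]
  calc (∫ x in s, Real.exp (φ x) ∂μ)
      ≤ (∫⁻ x in s, ‖Real.exp (φ x)‖₊ ∂μ).toReal := by rw [← h2]; exact h1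
    _ ≤ (ENNReal.ofReal τ).toReal := by
        apply ENNReal.toReal_mono ENNReal.ofReal_ne_top
        rw [h3]; exact hsn
    _ = τ := ENNReal.toReal_ofReal hτ.le

lemma approx {r : ℝ} (hr : 0 < r) :
    ∃ ψ : ℝ → ℝ, Continuous ψ ∧ UniformContinuous ψ ∧
      (∫ s in a..b, (φ s - ψ s)^2) ≤ r := by
  classical
  set f := (Set.Ioc a b).indicator φ with hfdef
  have hφInt : IntegrableOn φ (Set.Ioc a b) volume := by
    rw [← intervalIntegrable_iff_integrableOn_Ioc_of_le H.hab.le]; exact H.h1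
  have hφ2Int : IntegrableOn (fun t => (φ t)^2) (Set.Ioc a b) volume := by
    rw [← intervalIntegrable_iff_integrableOn_Ioc_of_le H.hab.le]; exact H.h2
  have hfm : AEStronglyMeasurable f volume :=
    (aestronglyMeasurable_indicator_iff measurableSet_Ioc).mpr hφInt.aestronglyMeasurable
  have hfsq : Integrable (fun x => (f x)^2) volume := by
    have e : (fun x => (f x)^2) = (Set.Ioc a b).indicator (fun t => (φ t)^2) := by
      funext x
      by_cases hx : x ∈ Set.Ioc a b <;> simp [hfdef, Set.indicator, hx]
    rw [e, integrable_indicator_iff measurableSet_Ioc]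
    exact hφ2Int
  have hMem : MemLp f 2 volume := (memLp_two_iff_integrable_sq hfm).mpr hfsq
  have hε0 : ENNReal.ofReal (Real.sqrt r) ≠ 0 := by
    simp only [ne_eq, ENNReal.ofReal_eq_zero, not_le]
    exact Real.sqrt_pos.mpr hr
  obtain ⟨g, hgsupp, hgle, hgcont, hgmem⟩ :=
    hMem.exists_hasCompactSupport_eLpNorm_sub_le (by norm_num : (2:ℝ≥0∞) ≠ ⊤) hε0
  refine ⟨g, hgcont,
    hgcont.uniformContinuous_of_tendsto_cocompact hgsupp.is_zero_at_infty, ?_⟩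
  have hsub : MemLp (fun x => f x - g x) 2 volume := hMem.sub hgmem
  have hint2 : Integrable (fun x => (f x - g x)^2) volume := by
    have := hsub.integrable_sq
    simpa [pow_two] using this
  have h1 : (∫ s in a..b, (φ s - g s)^2) = ∫ s in Set.Ioc a b, (f s - g s)^2 := by
    rw [intervalIntegral.integral_of_le H.hab.le]
    apply setIntegral_congr_fun measurableSet_Ioc
    intro x hx
    simp [hfdef, Set.indicator_of_mem hx]
  have h2 : (∫ s in Set.Ioc a b, (f s - g s)^2) ≤ ∫ s, (f s - g s)^2 :=
    setIntegral_le_integral hint2 (Filter.Eventually.of_forall (fun x => sq_nonneg _))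
  have h3 : (∫ s, (f s - g s)^2) ≤ r := by
    have hnn : ∀ x, (0:ℝ) ≤ (f x - g x)^2 := fun x => sq_nonneg _
    rw [integral_eq_lintegral_of_nonneg_ae (Filter.Eventually.of_forall hnn)
      (hsub.aestronglyMeasurable.aemeasurable.pow_const 2).aestronglyMeasurable]
    set A := ∫⁻ x, ((‖f x - g x‖₊ : ℝ≥0∞))^(2:ℕ) with hAdef
    have hlin : (∫⁻ x, ENNReal.ofReal ((f x - g x)^2)) = A := by
      apply lintegral_congr
      intro x
      calc ENNReal.ofReal ((f x - g x)^2)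
          = ENNReal.ofReal (|f x - g x|^2) := by rw [sq_abs]
        _ = (ENNReal.ofReal |f x - g x|)^(2:ℕ) :=
            ENNReal.ofReal_pow (abs_nonneg _) 2
        _ = ((‖f x - g x‖₊ : ℝ≥0∞))^(2:ℕ) := by rw [← Real.enorm_eq_ofReal_abs, enorm_eq_nnnorm]
    have hAr : (∫⁻ x, ((‖f x - g x‖₊ : ℝ≥0∞))^(2:ℝ)) = A := by
      apply lintegral_congr
      intro x
      rw [← ENNReal.rpow_natCast]
      norm_num
    have hsl := eLpNorm_eq_lintegral_rpow_enorm_toReal (f := fun x => f x - g x)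
      (μ := volume) (by norm_num : (2:ℝ≥0∞) ≠ 0) (by norm_num : (2:ℝ≥0∞) ≠ ⊤)
    have htoReal2 : ((2:ℝ≥0∞).toReal) = (2:ℝ) := by norm_num
    rw [htoReal2] at hsl
    simp only [enorm_eq_nnnorm] at hsl
    have hle : A^((1:ℝ)/2) ≤ ENNReal.ofReal (Real.sqrt r) := by
      rw [← hAr]
      rw [← hsl]
      exact hgle
    have hA : A ≤ ENNReal.ofReal r := by
      have h2 := ENNReal.rpow_le_rpow hle (by norm_num : (0:ℝ) ≤ 2)
      rw [← ENNReal.rpow_mul, show (1:ℝ)/2*2 = 1 by norm_num, ENNReal.rpow_one] at h2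
      calc A ≤ ENNReal.ofReal (Real.sqrt r) ^ (2:ℝ) := h2
        _ = ENNReal.ofReal ((Real.sqrt r)^(2:ℝ)) :=
            ENNReal.ofReal_rpow_of_nonneg (Real.sqrt_nonneg _) (by norm_num)
        _ = ENNReal.ofReal r := by
            congr 1
            rw [show ((2:ℝ)) = ((2:ℕ):ℝ) by norm_num, Real.rpow_natCast,
              Real.sq_sqrt hr.le]
    rw [hlin]
    calc A.toReal ≤ (ENNReal.ofReal r).toReal :=
          ENNReal.toReal_mono ENNReal.ofReal_ne_top hA
      _ = r := ENNReal.toReal_ofReal hr.le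
  linarith

lemma claim1 {η τ : ℝ} (hη : 0 < η) (hτ : 0 < τ) :
    (b-a) * Bm δ (avg φ a b, av2 φ a b)
      ≤ CC δ η * (∫ s in a..b, Real.exp (φ s)) + KK δ * τ := by
  obtain ⟨θ, hθ0, hθ⟩ := H.acont hτ
  have hσ0 : 0 < Real.sqrt (δ^2-ε^2) := H.sigma_pos
  set σ := Real.sqrt (δ^2-ε^2) with hσdef
  set γ := δ/(σ+δ) with hγdef
  have hδ0 := H.hδ0
  have hγ0 : 0 < γ := div_pos hδ0 (by linarith)
  have hγ1 : γ < 1 := by rw [hγdef, div_lt_one (by linarith)]; linarith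
  have hba : (0:ℝ) < b - a := by linarith [H.hab]
  have hre : (0:ℝ) < η*θ/4 := by positivity
  obtain ⟨ψ, hψc, hψu, hψr⟩ := H.approx hre
  set ω := Real.sqrt (η*θ/(8*(b-a))) with hωdef
  have hω0 : 0 < ω := Real.sqrt_pos.mpr (by positivity)
  obtain ⟨m, hm0, hm⟩ := Metric.uniformContinuous_iff.mp hψu ω hω0
  obtain ⟨n, hn⟩ := exists_pow_lt_of_lt_one (show (0:ℝ) < m/(b-a) by positivity) hγ1
  have hmod : ∀ x y : ℝ, x ∈ Set.Icc a b → y ∈ Set.Icc a b →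
      |x-y| ≤ γ^n*(b-a) → |ψ x - ψ y| ≤ ω := by
    intro x y _ _ hxy
    have hdist : dist x y < m := by
      rw [Real.dist_eq]
      calc |x-y| ≤ γ^n*(b-a) := hxy
        _ < (m/(b-a))*(b-a) := mul_lt_mul_of_pos_right hn hba
        _ = m := by field_simp
    have := hm hdist
    rw [Real.dist_eq] at this
    exact this.le
  have htv := H.tvar_le ψ hψc hω0.le n (le_refl a) H.hab (le_refl b) hmod
  have hω2 : ω^2 = η*θ/(8*(b-a)) := Real.sq_sqrt (by positivity)
  have he : 2*(b-a)*ω^2 = η*θ/4 := by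
    rw [hω2]; field_simp; ring
  have htv2 : TVar φ δ n a b ≤ η*θ := by nlinarith [htv, hψr, hθ0, hη]
  have hvol2 : volume (BadSet φ δ η n a b) ≤ ENNReal.ofReal θ := by
    refine le_trans (H.badset_vol hη n (le_refl a) H.hab (le_refl b))
      (ENNReal.ofReal_le_ofReal ?_)
    rw [div_le_iff₀ hη]
    nlinarith [htv2]
  have hbadint := hθ (BadSet φ δ η n a b) (badset_meas φ δ η n a b)
    (H.badset_subset η n (le_refl a) H.hab (le_refl b)) hvol2
  have hmain := H.main_ind hη n (le_refl a) H.hab (le_refl b)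
  have hKK := mul_le_mul_of_nonneg_left hbadint H.KK_pos.le
  linarith

lemma real_main : (b-a) * Bm δ (avg φ a b, av2 φ a b) ≤ ∫ s in a..b, Real.exp (φ s) := by
  set X := ∫ s in a..b, Real.exp (φ s) with hX
  set L := (b-a) * Bm δ (avg φ a b, av2 φ a b) with hL
  have step1 : ∀ η : ℝ, 0 < η → L ≤ CC δ η * X := by
    intro η hη
    apply le_of_forall_pos_le_add
    intro ρ hρ
    have hcl := H.claim1 hη (show 0 < ρ/KK δ from div_pos hρ H.KK_pos)
    have hKρ : KK δ * (ρ/KK δ) = ρ := by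
      rw [mul_div_assoc']
      exact mul_div_cancel_left₀ ρ H.KK_pos.ne'
    rw [hKρ] at hcl
    exact hcl
  have hδ0 := H.hδ0
  have c1 : Continuous fun η : ℝ => Real.sqrt (δ^2 - η) :=
    Real.continuous_sqrt.comp (continuous_const.sub continuous_id)
  have hcc : Continuous (fun η : ℝ => CC δ η) := by
    unfold CC
    exact ((continuous_const.add c1).mul
      (Real.continuous_exp.comp (continuous_const.sub c1))).div_const (1+δ)
  have hcc0 : CC δ 0 = 1 := by
    unfold CC
    rw [sub_zero, Real.sqrt_sq hδ0.le]
    have : (1:ℝ)+δ ≠ 0 := by linarith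
    field_simp
    simp
  have htd : Filter.Tendsto (fun η : ℝ => CC δ η * X) (nhdsWithin 0 (Set.Ioi 0))
      (nhds (CC δ 0 * X)) :=
    (((hcc.tendsto 0).mono_left nhdsWithin_le_nhds).mul tendsto_const_nhds)
  have hev : ∀ᶠ η in nhdsWithin 0 (Set.Ioi 0), L ≤ CC δ η * X :=
    Filter.eventually_of_mem self_mem_nhdsWithin (fun η hη => step1 η hη)
  have hfin := ge_of_tendsto htd hev
  rw [hcc0, one_mul] at hfin
  exact hfin

end Ctx

end Main

end SV

/-- Lower Bellman estimate in the continuous case: for `φ ∈ BMO_ε(I)` with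
`ε > 0`, the average of `e^φ` (as a lower Lebesgue integral divided by `|I|`,
possibly `+∞`) is at least `B⁻_ε(⟨φ⟩_I, ⟨φ²⟩_I)`. -/
theorem stmt9 (ε : ℝ) (hε : 0 < ε) (a b : ℝ) (hab : a < b)
    (φ : ℝ → ℝ) (hφ : BMOe ε a b φ) :
    ENNReal.ofReal (Bm ε (avg φ a b, avg (fun t => (φ t) ^ 2) a b)) ≤
      (∫⁻ t in Set.Ioc a b, ENNReal.ofReal (Real.exp (φ t))) / ENNReal.ofReal (b - a) := by
  obtain ⟨h1, h2, h3⟩ := hφ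
  by_cases hfin : (∫⁻ t in Set.Ioc a b, ENNReal.ofReal (Real.exp (φ t))) = ⊤
  · rw [hfin, ENNReal.top_div_of_ne_top ENNReal.ofReal_ne_top]
    exact le_top
  · have hφm : AEStronglyMeasurable φ (volume.restrict (Set.Ioc a b)) :=
      ((intervalIntegrable_iff_integrableOn_Ioc_of_le hab.le).mp h1).aestronglyMeasurable
    have hmeas : AEStronglyMeasurable (fun t => Real.exp (φ t))
        (volume.restrict (Set.Ioc a b)) :=
      Real.continuous_exp.comp_aestronglyMeasurable hφm
    have hexp : MeasureTheory.IntegrableOn (fun t => Real.exp (φ t))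
        (Set.Ioc a b) volume := by
      refine ⟨hmeas, ?_⟩
      rw [MeasureTheory.hasFiniteIntegral_iff_ofReal
        (Filter.Eventually.of_forall (fun t => (Real.exp_pos _).le))]
      exact lt_top_iff_ne_top.mpr hfin
    have hosc : ∀ c d : ℝ, a ≤ c → c < d → d ≤ b → SV.Vr φ c d ≤ ε^2 := by
      intro c d hc hcd hd
      have := h3 c d hc hcd hd
      simpa [SV.Vr, SV.av2] using this
    set X := ∫ s in a..b, Real.exp (φ s) with hXdef
    set P : ℝ × ℝ := (avg φ a b, avg (fun t => (φ t) ^ 2) a b) with hPdef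
    have hreal : ∀ δ : ℝ, ε < δ → (b-a) * Bm δ P ≤ X := by
      intro δ hδ
      have h := SV.Ctx.real_main (⟨hab, hε, hδ, h1, h2, hosc, hexp⟩ : SV.Ctx φ a b ε δ)
      simp only [SV.av2] at h
      exact h
    have c1 : Continuous fun δ : ℝ => Real.sqrt (δ^2 + P.1^2 - P.2) := by
      apply Real.continuous_sqrt.comp
      exact ((continuous_pow 2).add continuous_const).sub continuous_const
    have hcB : ContinuousAt (fun δ : ℝ => Bm δ P) ε := by
      unfold Bm
      apply ContinuousAt.mul
      · apply ContinuousAt.div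
        · exact (continuous_const.add c1).continuousAt
        · exact (continuous_const.add continuous_id).continuousAt
        · show (1:ℝ) + ε ≠ 0
          linarith
      · exact (Real.continuous_exp.comp
          ((continuous_const.sub c1).add continuous_id)).continuousAt
    have htd : Filter.Tendsto (fun δ : ℝ => (b-a) * Bm δ P)
        (nhdsWithin ε (Set.Ioi ε)) (nhds ((b-a) * Bm ε P)) :=
      tendsto_const_nhds.mul (hcB.tendsto.mono_left nhdsWithin_le_nhds)
    have hev : ∀ᶠ δ in nhdsWithin ε (Set.Ioi ε), (b-a) * Bm δ P ≤ X :=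
      Filter.eventually_of_mem self_mem_nhdsWithin (fun δ hδ => hreal δ hδ)
    have hR : (b-a) * Bm ε P ≤ X := le_of_tendsto htd hev
    have hXnn : (0:ℝ) ≤ X :=
      intervalIntegral.integral_nonneg hab.le (fun _ _ => (Real.exp_pos _).le)
    have hlint : (∫⁻ t in Set.Ioc a b, ENNReal.ofReal (Real.exp (φ t)))
        = ENNReal.ofReal X := by
      rw [← MeasureTheory.ofReal_integral_eq_lintegral_ofReal hexp
        (Filter.Eventually.of_forall (fun t => (Real.exp_pos _).le))]
      rw [hXdef, intervalIntegral.integral_of_le hab.le]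
    rw [hlint]
    rw [ENNReal.le_div_iff_mul_le
      (Or.inl (by simp only [ne_eq, ENNReal.ofReal_eq_zero, not_le]; linarith))
      (Or.inl ENNReal.ofReal_ne_top)]
    rw [← ENNReal.ofReal_mul (SV.Bm_nonneg hε P)]
    apply ENNReal.ofReal_le_ofReal
    calc Bm ε P * (b-a) = (b-a) * Bm ε P := mul_comm _ _
      _ ≤ X := hR
end

section
/- Let x⁻, x⁺ ∈ ℝ² and α₋, α₊ ≥ 0 with α₋ + α₊ = 1, and suppose the straight-line segment with endpoints x⁻ and x⁺ lies entirely in Ω_δ. Then: (i) if 0 < δ < 1, B⁺_δ(α₋x⁻ + α₊x⁺) ≥ α₋·B⁺_δ(x⁻) + α₊·B⁺_δ(x⁺); (ii) if δ > 0, B⁻_δ(α₋x⁻ + α₊x⁺) ≤ α₋·B⁻_δ(x⁻) + α₊·B⁻_δ(x⁺). That is, B⁺_δ is locally concave and B⁻_δ is locally convex in Ω_δ. -/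
open MeasureTheory Real

lemma exp_fact (t : ℝ) : (1 - t) * Real.exp t ≤ 1 := by
  have h := Real.add_one_le_exp (-t)
  have h2 := mul_le_mul_of_nonneg_right h (Real.exp_pos t).le
  rwa [← Real.exp_add, neg_add_cancel, Real.exp_zero, neg_add_eq_sub] at h2

lemma equad_nonneg (w : ℝ) : 0 ≤ Real.exp w - 1 - w := by
  have := Real.add_one_le_exp w; linarith

lemma aux_ge0 (w : ℝ) (hw : 0 ≤ w) : w ^ 2 / 2 ≤ Real.exp w - 1 - w := by
  have h : ∀ t : ℝ, HasDerivAt (fun t => Real.exp t - 1 - t - t^2/2) (Real.exp t - 1 - t) t := by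
    intro t
    have h3 : HasDerivAt (fun t : ℝ => Real.exp t - 1 - t) (Real.exp t - 1) t := by
      exact ((Real.hasDerivAt_exp t).sub_const 1).sub (hasDerivAt_id t)
    have h1 : HasDerivAt (fun t : ℝ => t^2/2) (t : ℝ) t := by
      have := (hasDerivAt_pow 2 t).div_const 2
      norm_num at this
      exact this
    exact h3.sub h1
  have mono : MonotoneOn (fun t => Real.exp t - 1 - t - t^2/2) (Set.Ici 0) := by
    apply monotoneOn_of_deriv_nonneg (convex_Ici 0)
    · exact Continuous.continuousOn (by continuity)
    · intro t ht; exact (h t).differentiableAt.differentiableWithinAt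
    · intro t ht
      rw [(h t).deriv]
      have := Real.add_one_le_exp t
      simp only [Set.mem_Ioi, interior_Ici] at ht
      linarith
  have := mono Set.self_mem_Ici hw hw
  simp at this; linarith

lemma aux_le0 (w : ℝ) (hw : w ≤ 0) : Real.exp w - 1 - w ≤ w ^ 2 / 2 := by
  have h : ∀ t : ℝ, HasDerivAt (fun t => Real.exp t - 1 - t - t^2/2) (Real.exp t - 1 - t) t := by
    intro t
    have h3 : HasDerivAt (fun t : ℝ => Real.exp t - 1 - t) (Real.exp t - 1) t := by
      exact ((Real.hasDerivAt_exp t).sub_const 1).sub (hasDerivAt_id t)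
    have h1 : HasDerivAt (fun t : ℝ => t^2/2) (t : ℝ) t := by
      have := (hasDerivAt_pow 2 t).div_const 2
      norm_num at this
      exact this
    exact h3.sub h1
  have mono : MonotoneOn (fun t => Real.exp t - 1 - t - t^2/2) (Set.Iic 0) := by
    apply monotoneOn_of_deriv_nonneg (convex_Iic 0)
    · exact Continuous.continuousOn (by continuity)
    · intro t ht; exact (h t).differentiableAt.differentiableWithinAt
    · intro t ht
      rw [(h t).deriv]
      have := Real.add_one_le_exp t
      simp only [Set.mem_Iio, interior_Iic] at ht
      nlinarith [Real.exp_pos t, exp_fact t]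
  have := mono (Set.mem_Iic.2 hw) Set.self_mem_Iic hw
  simp at this; linarith

lemma deriv_main (t : ℝ) :
    HasDerivAt (fun t => t^2 - (2-t)*(Real.exp t - 1 - t)) ((t-1)*Real.exp t + 1) t := by
  have h1 : HasDerivAt (fun t : ℝ => t^2) (2*t) t := by simpa using (hasDerivAt_pow 2 t)
  have h2 : HasDerivAt (fun t : ℝ => (2-t)) (-1 : ℝ) t := by
    simpa using (hasDerivAt_id t).const_sub 2
  have h3 : HasDerivAt (fun t : ℝ => Real.exp t - 1 - t) (Real.exp t - 1) t := by
    exact ((Real.hasDerivAt_exp t).sub_const 1).sub (hasDerivAt_id t)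
  have := h1.sub (h2.mul h3)
  exact this.congr_deriv (by ring)

lemma aux_le (w : ℝ) (hw : 0 ≤ w) : (2 - w) * (Real.exp w - 1 - w) ≤ w ^ 2 := by
  have mono : MonotoneOn (fun t => t^2 - (2-t)*(Real.exp t - 1 - t)) (Set.Ici 0) := by
    apply monotoneOn_of_deriv_nonneg (convex_Ici 0)
    · exact Continuous.continuousOn (by continuity)
    · intro t ht; exact (deriv_main t).differentiableAt.differentiableWithinAt
    · intro t ht
      rw [(deriv_main t).deriv]
      nlinarith [exp_fact t]
  have := mono Set.self_mem_Ici hw hw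
  simp at this; linarith

lemma aux_ge (w : ℝ) (hw : w ≤ 0) : w ^ 2 ≤ (2 - w) * (Real.exp w - 1 - w) := by
  have mono : MonotoneOn (fun t => t^2 - (2-t)*(Real.exp t - 1 - t)) (Set.Iic 0) := by
    apply monotoneOn_of_deriv_nonneg (convex_Iic 0)
    · exact Continuous.continuousOn (by continuity)
    · intro t ht; exact (deriv_main t).differentiableAt.differentiableWithinAt
    · intro t ht
      rw [(deriv_main t).deriv]
      nlinarith [exp_fact t]
  have := mono (Set.mem_Iic.2 hw) Set.self_mem_Iic hw
  simp at this; linarith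



lemma scalarP (s w : ℝ) (hs : 0 ≤ s) (hw : w ≤ 2 * s) :
    (1 - s) * Real.exp w ≤ (1 - s) * (1 + w) + w ^ 2 / 2 := by
  rcases le_or_gt w 0 with h | h
  · nlinarith [aux_le0 w h, equad_nonneg w]
  · nlinarith [aux_le w h.le, equad_nonneg w,
      mul_nonneg (by linarith : (0:ℝ) ≤ s - w/2) (equad_nonneg w)]

lemma scalarM (s w : ℝ) (hs : 0 ≤ s) (hw : -(2 * s) ≤ w) :
    (1 + s) * (1 + w) + w ^ 2 / 2 ≤ (1 + s) * Real.exp w := by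
  rcases le_or_gt 0 w with h | h
  · nlinarith [aux_ge0 w h, equad_nonneg w]
  · nlinarith [aux_ge w h.le, equad_nonneg w,
      mul_nonneg (by linarith : (0:ℝ) ≤ s + w/2) (equad_nonneg w)]



lemma quad_bound (s s₀ h : ℝ) (hs : 0 ≤ s) (hs0 : 0 ≤ s₀)
    (hU : ∀ t : ℝ, 0 ≤ t → t ≤ 1 →
      0 ≤ s₀ ^ 2 + (s ^ 2 - s₀ ^ 2 - h ^ 2) * t + h ^ 2 * t ^ 2) :
    h ^ 2 ≤ (s + s₀) ^ 2 := by
  by_contra hcon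
  push_neg at hcon
  have hh2 : 0 < h ^ 2 := by nlinarith
  have h4 : (0:ℝ) < 4 * h ^ 2 := by positivity
  have hT0 : 0 ≤ (h ^ 2 + s₀ ^ 2 - s ^ 2) / (2 * h ^ 2) := by
    apply div_nonneg _ (by positivity)
    nlinarith
  have hT1 : (h ^ 2 + s₀ ^ 2 - s ^ 2) / (2 * h ^ 2) ≤ 1 := by
    rw [div_le_one (by positivity)]
    nlinarith
  have key := hU _ hT0 hT1
  have e2 : s₀ ^ 2 + (s ^ 2 - s₀ ^ 2 - h ^ 2) * ((h ^ 2 + s₀ ^ 2 - s ^ 2) / (2 * h ^ 2)) +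
      h ^ 2 * ((h ^ 2 + s₀ ^ 2 - s ^ 2) / (2 * h ^ 2)) ^ 2 =
      (4 * h ^ 2 * s₀ ^ 2 - (h ^ 2 + s₀ ^ 2 - s ^ 2) ^ 2) / (4 * h ^ 2) := by
    have hne : h ≠ 0 := by rintro rfl; norm_num at hh2
    field_simp
    ring
  rw [e2] at key
  have hNum := (le_div_iff₀ h4).mp key
  rw [zero_mul] at hNum
  nlinarith [mul_pos (by nlinarith : (0:ℝ) < h ^ 2 - (s + s₀) ^ 2)
      (by nlinarith : (0:ℝ) < h ^ 2 - (s - s₀) ^ 2)]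

lemma seg_bound (δ : ℝ) {y x : ℝ × ℝ} (hseg : segment ℝ y x ⊆ Omega δ) :
    (x.1 - y.1) ^ 2 ≤
      (Real.sqrt (δ ^ 2 + x.1 ^ 2 - x.2) + Real.sqrt (δ ^ 2 + y.1 ^ 2 - y.2)) ^ 2 := by
  have hx : x ∈ Omega δ := hseg (right_mem_segment ℝ y x)
  have hy : y ∈ Omega δ := hseg (left_mem_segment ℝ y x)
  have hs : 0 ≤ Real.sqrt (δ ^ 2 + x.1 ^ 2 - x.2) := Real.sqrt_nonneg _
  have hs0 : 0 ≤ Real.sqrt (δ ^ 2 + y.1 ^ 2 - y.2) := Real.sqrt_nonneg _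
  have hsq : Real.sqrt (δ ^ 2 + x.1 ^ 2 - x.2) ^ 2 = δ ^ 2 + x.1 ^ 2 - x.2 :=
    Real.sq_sqrt (by simp only [Omega, Set.mem_setOf_eq] at hx; linarith [hx.2])
  have hsq0 : Real.sqrt (δ ^ 2 + y.1 ^ 2 - y.2) ^ 2 = δ ^ 2 + y.1 ^ 2 - y.2 :=
    Real.sq_sqrt (by simp only [Omega, Set.mem_setOf_eq] at hy; linarith [hy.2])
  apply quad_bound _ _ _ hs hs0
  intro t ht0 ht1
  have hz : (1 - t) • y + t • x ∈ Omega δ :=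
    hseg ⟨1 - t, t, by linarith, ht0, by ring, rfl⟩
  have hzu : (1 - t) * y.2 + t * x.2 ≤ ((1 - t) * y.1 + t * x.1) ^ 2 + δ ^ 2 := hz.2
  nlinarith [hzu, hsq, hsq0]

lemma keyBp (δ : ℝ) (hδ1 : δ < 1) {y x : ℝ × ℝ} (hseg : segment ℝ y x ⊆ Omega δ) :
    Bp δ x ≤ Real.exp (y.1 + Real.sqrt (δ ^ 2 + y.1 ^ 2 - y.2) - δ) / (1 - δ) *
      ((1 - Real.sqrt (δ ^ 2 + y.1 ^ 2 - y.2)) +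
        (1 - Real.sqrt (δ ^ 2 + y.1 ^ 2 - y.2) - y.1) * (x.1 - y.1) + (x.2 - y.2) / 2) := by
  have hx : x ∈ Omega δ := hseg (right_mem_segment ℝ y x)
  have hy : y ∈ Omega δ := hseg (left_mem_segment ℝ y x)
  obtain ⟨hx1, hx2⟩ := hx
  obtain ⟨hy1, hy2⟩ := hy
  set s := Real.sqrt (δ ^ 2 + x.1 ^ 2 - x.2) with hsdef
  set s₀ := Real.sqrt (δ ^ 2 + y.1 ^ 2 - y.2) with hs0def
  have hs : 0 ≤ s := Real.sqrt_nonneg _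
  have hs0 : 0 ≤ s₀ := Real.sqrt_nonneg _
  have hsq : s ^ 2 = δ ^ 2 + x.1 ^ 2 - x.2 := Real.sq_sqrt (by linarith)
  have hsq0 : s₀ ^ 2 = δ ^ 2 + y.1 ^ 2 - y.2 := Real.sq_sqrt (by linarith)
  have hbound := seg_bound δ hseg
  have hw : x.1 - y.1 + s - s₀ ≤ 2 * s := by nlinarith [hbound]
  have hmain := scalarP s (x.1 - y.1 + s - s₀) hs hw
  have hE : 0 < Real.exp (y.1 + s₀ - δ) / (1 - δ) :=
    div_pos (Real.exp_pos _) (by linarith)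
  have hexp : Real.exp (x.1 + s - δ) =
      Real.exp (y.1 + s₀ - δ) * Real.exp (x.1 - y.1 + s - s₀) := by
    rw [← Real.exp_add]; ring_nf
  have hbr : (1 - s₀) + (1 - s₀ - y.1) * (x.1 - y.1) + (x.2 - y.2) / 2 =
      (1 - s) * (1 + (x.1 - y.1 + s - s₀)) + (x.1 - y.1 + s - s₀) ^ 2 / 2 := by
    have e1 : x.2 = δ ^ 2 + x.1 ^ 2 - s ^ 2 := by linarith [hsq]
    have e2 : y.2 = δ ^ 2 + y.1 ^ 2 - s₀ ^ 2 := by linarith [hsq0]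
    rw [e1, e2]; ring
  rw [Bp]
  rw [← hsdef, hexp, hbr]
  calc (1 - s) / (1 - δ) * (Real.exp (y.1 + s₀ - δ) * Real.exp (x.1 - y.1 + s - s₀))
      = Real.exp (y.1 + s₀ - δ) / (1 - δ) * ((1 - s) * Real.exp (x.1 - y.1 + s - s₀)) := by
        ring
    _ ≤ Real.exp (y.1 + s₀ - δ) / (1 - δ) *
        ((1 - s) * (1 + (x.1 - y.1 + s - s₀)) + (x.1 - y.1 + s - s₀) ^ 2 / 2) := by
        exact mul_le_mul_of_nonneg_left hmain hE.le

lemma keyBm (δ : ℝ) (hδ0 : 0 < δ) {y x : ℝ × ℝ} (hseg : segment ℝ y x ⊆ Omega δ) :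
    Real.exp (y.1 - Real.sqrt (δ ^ 2 + y.1 ^ 2 - y.2) + δ) / (1 + δ) *
      ((1 + Real.sqrt (δ ^ 2 + y.1 ^ 2 - y.2)) +
        (1 + Real.sqrt (δ ^ 2 + y.1 ^ 2 - y.2) - y.1) * (x.1 - y.1) + (x.2 - y.2) / 2)
      ≤ Bm δ x := by
  have hx : x ∈ Omega δ := hseg (right_mem_segment ℝ y x)
  have hy : y ∈ Omega δ := hseg (left_mem_segment ℝ y x)
  obtain ⟨hx1, hx2⟩ := hx
  obtain ⟨hy1, hy2⟩ := hy
  set s := Real.sqrt (δ ^ 2 + x.1 ^ 2 - x.2) with hsdef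
  set s₀ := Real.sqrt (δ ^ 2 + y.1 ^ 2 - y.2) with hs0def
  have hs : 0 ≤ s := Real.sqrt_nonneg _
  have hs0 : 0 ≤ s₀ := Real.sqrt_nonneg _
  have hsq : s ^ 2 = δ ^ 2 + x.1 ^ 2 - x.2 := Real.sq_sqrt (by linarith)
  have hsq0 : s₀ ^ 2 = δ ^ 2 + y.1 ^ 2 - y.2 := Real.sq_sqrt (by linarith)
  have hbound := seg_bound δ hseg
  have hw : -(2 * s) ≤ x.1 - y.1 - s + s₀ := by nlinarith [hbound]
  have hmain := scalarM s (x.1 - y.1 - s + s₀) hs hw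
  have hE : 0 < Real.exp (y.1 - s₀ + δ) / (1 + δ) := by positivity
  have hexp : Real.exp (x.1 - s + δ) =
      Real.exp (y.1 - s₀ + δ) * Real.exp (x.1 - y.1 - s + s₀) := by
    rw [← Real.exp_add]; ring_nf
  have hbr : (1 + s₀) + (1 + s₀ - y.1) * (x.1 - y.1) + (x.2 - y.2) / 2 =
      (1 + s) * (1 + (x.1 - y.1 - s + s₀)) + (x.1 - y.1 - s + s₀) ^ 2 / 2 := by
    have e1 : x.2 = δ ^ 2 + x.1 ^ 2 - s ^ 2 := by linarith [hsq]
    have e2 : y.2 = δ ^ 2 + y.1 ^ 2 - s₀ ^ 2 := by linarith [hsq0]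
    rw [e1, e2]; ring
  rw [Bm]
  rw [← hsdef, hexp, hbr]
  calc Real.exp (y.1 - s₀ + δ) / (1 + δ) *
        ((1 + s) * (1 + (x.1 - y.1 - s + s₀)) + (x.1 - y.1 - s + s₀) ^ 2 / 2)
      ≤ Real.exp (y.1 - s₀ + δ) / (1 + δ) * ((1 + s) * Real.exp (x.1 - y.1 - s + s₀)) :=
        mul_le_mul_of_nonneg_left hmain hE.le
    _ = (1 + s) / (1 + δ) * (Real.exp (y.1 - s₀ + δ) * Real.exp (x.1 - y.1 - s + s₀)) := by
        ring

/-- Local concavity of `B⁺_δ` (for `0 < δ < 1`) and local convexity of `B⁻_δ`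
(for `δ > 0`) in `Ω_δ`: along any segment contained in `Ω_δ`. -/
theorem stmt10 (δ : ℝ) (xm xp : ℝ × ℝ) (αm αp : ℝ)
    (hαm : 0 ≤ αm) (hαp : 0 ≤ αp) (hsum : αm + αp = 1)
    (hseg : segment ℝ xm xp ⊆ Omega δ) :
    (0 < δ → δ < 1 →
      αm * Bp δ xm + αp * Bp δ xp ≤ Bp δ (αm • xm + αp • xp)) ∧
    (0 < δ →
      Bm δ (αm • xm + αp • xp) ≤ αm * Bm δ xm + αp * Bm δ xp) := by
  set p : ℝ × ℝ := αm • xm + αp • xp with hpdef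
  have hp : p ∈ segment ℝ xm xp := ⟨αm, αp, hαm, hαp, hsum, rfl⟩
  have hsegm : segment ℝ p xm ⊆ Omega δ :=
    ((convex_segment xm xp).segment_subset hp (left_mem_segment ℝ xm xp)).trans hseg
  have hsegp : segment ℝ p xp ⊆ Omega δ :=
    ((convex_segment xm xp).segment_subset hp (right_mem_segment ℝ xm xp)).trans hseg
  have hp1 : p.1 = αm * xm.1 + αp * xp.1 := rfl
  have hp2 : p.2 = αm * xm.2 + αp * xp.2 := rfl
  have key1 : αm * (xm.1 - p.1) + αp * (xp.1 - p.1) = 0 := by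
    linear_combination (-p.1) * hsum - hp1
  have key2 : αm * (xm.2 - p.2) + αp * (xp.2 - p.2) = 0 := by
    linear_combination (-p.2) * hsum - hp2
  constructor
  · intro hδ0 hδ1
    have h1 := keyBp δ hδ1 hsegm
    have h2 := keyBp δ hδ1 hsegp
    set s₀ := Real.sqrt (δ ^ 2 + p.1 ^ 2 - p.2) with hs0
    set E := Real.exp (p.1 + s₀ - δ) / (1 - δ) with hE
    calc αm * Bp δ xm + αp * Bp δ xp
        ≤ αm * (E * ((1 - s₀) + (1 - s₀ - p.1) * (xm.1 - p.1) + (xm.2 - p.2) / 2)) +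
          αp * (E * ((1 - s₀) + (1 - s₀ - p.1) * (xp.1 - p.1) + (xp.2 - p.2) / 2)) :=
          add_le_add (mul_le_mul_of_nonneg_left h1 hαm) (mul_le_mul_of_nonneg_left h2 hαp)
      _ = Bp δ p := by
          rw [Bp, ← hs0]
          linear_combination (E * (1 - s₀)) * hsum + (E * (1 - s₀ - p.1)) * key1 +
            (E / 2) * key2 + (1 - s₀) * hE
  · intro hδ0
    have h1 := keyBm δ hδ0 hsegm
    have h2 := keyBm δ hδ0 hsegp
    set s₀ := Real.sqrt (δ ^ 2 + p.1 ^ 2 - p.2) with hs0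
    set E := Real.exp (p.1 - s₀ + δ) / (1 + δ) with hE
    calc Bm δ p
        = αm * (E * ((1 + s₀) + (1 + s₀ - p.1) * (xm.1 - p.1) + (xm.2 - p.2) / 2)) +
          αp * (E * ((1 + s₀) + (1 + s₀ - p.1) * (xp.1 - p.1) + (xp.2 - p.2) / 2)) := by
          rw [Bm, ← hs0]
          linear_combination -((E * (1 + s₀)) * hsum + (E * (1 + s₀ - p.1)) * key1 +
            (E / 2) * key2) - (1 + s₀) * hE
      _ ≤ αm * Bm δ xm + αp * Bm δ xp :=
          add_le_add (mul_le_mul_of_nonneg_left h1 hαm) (mul_le_mul_of_nonneg_left h2 hαp)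
end
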